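/- arXiv:1309.2605 — 8 statements merged into one kernel-verified Lean document; each statement's English description precedes it below -/
import Mathlib

section
/- Let n be a positive integer and let D(x₁,…,xₙ) be a polynomial with integer coefficients such that the set of tuples (x₁,…,xₙ) ∈ ℤⁿ with D(x₁,…,xₙ) = 0 is nonempty and finite, and let d denote the maximal height of an integer solution of D(x₁,…,xₙ) = 0. Then the set of tuples (x₁,…,xₙ,s₁,s₂,s₃,s₄,t₁,t₂,t₃,t₄) ∈ ℤⁿ⁺⁸ satisfying D(x₁,…,xₙ)² + (x₁²+…+xₙ² − s₁²−s₂²−s₃²−s₄² − t₁²−t₂²−t₃²−t₄²)² = 0 is finite and its cardinality is strictly greater than d. -/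
open MvPolynomial

lemma four_sq_int (m : ℕ) : ∃ a b c e : ℤ, a ^ 2 + b ^ 2 + c ^ 2 + e ^ 2 = (m : ℤ) := by
  obtain ⟨a, b, c, e, h⟩ := Nat.sum_four_squares m
  exact ⟨a, b, c, e, by exact_mod_cast h⟩

lemma sq_add_sq_eq_zero {a b : ℤ} (h : a ^ 2 + b ^ 2 = 0) : a = 0 ∧ b = 0 := by
  have ha : a ^ 2 = 0 := le_antisymm (by nlinarith [sq_nonneg b]) (sq_nonneg a)
  have hb : b ^ 2 = 0 := le_antisymm (by nlinarith [sq_nonneg a]) (sq_nonneg b)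
  exact ⟨pow_eq_zero_iff two_ne_zero |>.mp ha, pow_eq_zero_iff two_ne_zero |>.mp hb⟩

/-- If the integer solution set of `D = 0` is nonempty and finite with
maximal height `d`, then the integer solution set of
`D² + (x₁²+…+xₙ² − s₁²−…−s₄² − t₁²−…−t₄²)² = 0` is finite and has more than `d` elements. -/
theorem stmt0 (n : ℕ) (hn : 0 < n) (D : MvPolynomial (Fin n) ℤ)
    (hne : {x : Fin n → ℤ | eval x D = 0}.Nonempty)
    (hfin : {x : Fin n → ℤ | eval x D = 0}.Finite)
    (d : ℕ)
    (hd : IsGreatest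
      ((fun x : Fin n → ℤ => Finset.univ.sup fun i => (x i).natAbs) ''
        {x : Fin n → ℤ | eval x D = 0}) d) :
    {p : (Fin n → ℤ) × (Fin 8 → ℤ) |
        (eval p.1 D) ^ 2 + ((∑ i, p.1 i ^ 2) - ∑ j, p.2 j ^ 2) ^ 2 = 0}.Finite ∧
    d < {p : (Fin n → ℤ) × (Fin 8 → ℤ) |
        (eval p.1 D) ^ 2 + ((∑ i, p.1 i ^ 2) - ∑ j, p.2 j ^ 2) ^ 2 = 0}.ncard := by
  set S := {p : (Fin n → ℤ) × (Fin 8 → ℤ) |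
      (eval p.1 D) ^ 2 + ((∑ i, p.1 i ^ 2) - ∑ j, p.2 j ^ 2) ^ 2 = 0} with hS
  have hmem : ∀ p : (Fin n → ℤ) × (Fin 8 → ℤ),
      p ∈ S ↔ eval p.1 D = 0 ∧ (∑ i, p.1 i ^ 2) = ∑ j, p.2 j ^ 2 := by
    intro p
    constructor
    · intro h
      obtain ⟨h1, h2⟩ := sq_add_sq_eq_zero h
      exact ⟨h1, sub_eq_zero.mp h2⟩
    · intro ⟨h1, h2⟩
      simp [hS, h1, h2]
  -- Finiteness
  have hSfin : S.Finite := by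
    have : S ⊆ ⋃ x ∈ {x : Fin n → ℤ | eval x D = 0},
        (fun y : Fin 8 → ℤ => (x, y)) '' {y | ∑ j, y j ^ 2 = ∑ i, x i ^ 2} := by
      intro p hp
      obtain ⟨h1, h2⟩ := (hmem p).mp hp
      simp only [Set.mem_iUnion]
      exact ⟨p.1, h1, p.2, h2.symm, rfl⟩
    refine Set.Finite.subset (Set.Finite.biUnion hfin fun x _ => ?_) this
    apply Set.Finite.image
    set B : ℤ := ∑ i, x i ^ 2 with hB
    have : {y : Fin 8 → ℤ | ∑ j, y j ^ 2 = B} ⊆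
        Set.pi Set.univ fun _ => Set.Icc (-B) B := by
      intro y hy j _
      have h1 : y j ^ 2 ≤ B := by
        rw [← hy]
        exact Finset.single_le_sum (fun k _ => sq_nonneg (y k)) (Finset.mem_univ j)
      have h2 : y j ≤ y j ^ 2 := Int.le_self_sq _
      have h3 : -(y j) ≤ (-(y j)) ^ 2 := Int.le_self_sq _
      constructor
      · nlinarith
      · linarith
    exact Set.Finite.subset (Set.Finite.pi fun _ => Set.finite_Icc _ _) this
  refine ⟨hSfin, ?_⟩
  -- pick a solution of maximal height
  obtain ⟨x₀, hx₀, hx₀d⟩ := hd.1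
  have huniv : (Finset.univ : Finset (Fin n)).Nonempty := by
    have : Nonempty (Fin n) := ⟨⟨0, hn⟩⟩
    exact Finset.univ_nonempty
  obtain ⟨i₀, _, hi₀⟩ := Finset.exists_mem_eq_sup Finset.univ huniv
    (fun i => (x₀ i).natAbs)
  set M : ℕ := (∑ i, x₀ i ^ 2).toNat with hM
  have hMz : (M : ℤ) = ∑ i, x₀ i ^ 2 := by
    rw [hM, Int.toNat_of_nonneg (Finset.sum_nonneg fun i _ => sq_nonneg _)]
  have hdM : d ≤ M := by
    have h1 : ((x₀ i₀).natAbs : ℤ) ^ 2 = x₀ i₀ ^ 2 := by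
      rw [← Int.abs_eq_natAbs, sq_abs]
    have h2 : x₀ i₀ ^ 2 ≤ (M : ℤ) := by
      rw [hMz]
      exact Finset.single_le_sum (fun k _ => sq_nonneg (x₀ k)) (Finset.mem_univ i₀)
    have hx₀d' : (Finset.univ.sup fun i => (x₀ i).natAbs) = d := hx₀d
    have hdabs : (d : ℤ) = ((x₀ i₀).natAbs : ℤ) := by
      rw [← hx₀d', hi₀]
    have : (d : ℤ) ≤ (M : ℤ) := by
      calc (d : ℤ) ≤ (d : ℤ) ^ 2 := Int.le_self_sq _
        _ = ((x₀ i₀).natAbs : ℤ) ^ 2 := by rw [hdabs]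
        _ = x₀ i₀ ^ 2 := h1
        _ ≤ M := h2
    exact_mod_cast this
  -- construct M+1 distinct solutions
  have H : ∀ k : ℕ, ∃ y : Fin 8 → ℤ, k ≤ M →
      (∑ j, y j ^ 2 = (M : ℤ)) ∧ y 0 ^ 2 + y 1 ^ 2 + y 2 ^ 2 + y 3 ^ 2 = (k : ℤ) := by
    intro k
    by_cases hk : k ≤ M
    · obtain ⟨a, b, c, e, h1⟩ := four_sq_int k
      obtain ⟨a', b', c', e', h2⟩ := four_sq_int (M - k)
      refine ⟨![a, b, c, e, a', b', c', e'], fun _ => ⟨?_, by simpa using h1⟩⟩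
      have hcast : ((M - k : ℕ) : ℤ) = (M : ℤ) - k := Nat.cast_sub hk
      simp [Fin.sum_univ_succ]
      rw [hcast] at h2
      linarith
    · exact ⟨0, fun h => absurd h hk⟩
  choose y hy using H
  set g : ℕ → (Fin n → ℤ) × (Fin 8 → ℤ) := fun k => (x₀, y k) with hg
  have hsub : g '' (Set.Iic M) ⊆ S := by
    rintro p ⟨k, hk, rfl⟩
    rw [hmem]
    exact ⟨hx₀, by rw [← hMz, (hy k hk).1]⟩
  have hinj : Set.InjOn g (Set.Iic M) := by
    intro k hk k' hk' hkk'
    have hy1 := (hy k hk).2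
    have hy2 := (hy k' hk').2
    have : y k = y k' := congrArg Prod.snd hkk'
    rw [this] at hy1
    have : (k : ℤ) = (k' : ℤ) := by rw [← hy1, hy2]
    exact_mod_cast this
  have h1 : (g '' (Set.Iic M)).ncard = M + 1 := by
    rw [Set.ncard_image_of_injOn hinj]
    have : (Set.Iic M) = ↑(Finset.Iic M) := by ext; simp
    rw [this, Set.ncard_coe_finset]
    simp
  have h2 : (g '' (Set.Iic M)).ncard ≤ S.ncard := Set.ncard_le_ncard hsub hSfin
  have h3 : M + 1 ≤ S.ncard := h1 ▸ h2
  exact lt_of_lt_of_le (Nat.lt_succ_of_le hdM) h3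
end

section
/- Suppose N is a function assigning to each pair (n, D), where n is a positive integer and D ∈ ℤ[x₁,…,xₙ], a natural number such that whenever the set of integer solutions of D(x₁,…,xₙ) = 0 is finite, N(n, D) is strictly greater than the number of integer solutions. For D ∈ ℤ[x₁,…,xₙ] let D* denote the polynomial in n+8 variables given by D*(x₁,…,xₙ,s₁,…,s₄,t₁,…,t₄) = D(x₁,…,xₙ)² + (x₁²+…+xₙ² − s₁²−s₂²−s₃²−s₄² − t₁²−t₂²−t₃²−t₄²)². Then for every n and every D ∈ ℤ[x₁,…,xₙ] whose set of integer solutions is finite, N(n+8, D*) is strictly greater than the height of every integer solution of D(x₁,…,xₙ) = 0. -/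
open MvPolynomial

private lemma fourSq_ex (k : ℕ) : ∃ t : Fin 4 → ℤ, t 0 ^ 2 + t 1 ^ 2 + t 2 ^ 2 + t 3 ^ 2 = k := by
  obtain ⟨a, b, c, d, h⟩ := Nat.sum_four_squares k
  exact ⟨![(a : ℤ), b, c, d], by simp; push_cast [← h]; ring⟩

private noncomputable def FS (k : ℕ) : Fin 4 → ℤ := (fourSq_ex k).choose

private lemma FS_spec (k : ℕ) : FS k 0 ^ 2 + FS k 1 ^ 2 + FS k 2 ^ 2 + FS k 3 ^ 2 = k :=
  (fourSq_ex k).choose_spec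

private lemma int_abs_le_sq (a : ℤ) : |a| ≤ a ^ 2 := by
  rcases eq_or_lt_of_le (abs_nonneg a) with h | h
  · rw [← h]; nlinarith [sq_abs a]
  · have h1 : 1 ≤ |a| := h
    nlinarith [sq_abs a]

/-- If `N` bounds (strictly) the number of integer solutions of every
Diophantine equation with finitely many integer solutions, then `N (n+8) D*` strictly
bounds the height of every integer solution of `D = 0`, where
`D* = D² + (x₁²+…+xₙ² − s₁²−…−s₄² − t₁²−…−t₄²)²`. -/
theorem stmt1
    (N : (n : ℕ) → MvPolynomial (Fin n) ℤ → ℕ)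
    (hN : ∀ n : ℕ, 0 < n → ∀ D : MvPolynomial (Fin n) ℤ,
      {x : Fin n → ℤ | eval x D = 0}.Finite →
      {x : Fin n → ℤ | eval x D = 0}.ncard < N n D) :
    ∀ n : ℕ, 0 < n → ∀ D : MvPolynomial (Fin n) ℤ,
      {x : Fin n → ℤ | eval x D = 0}.Finite →
      ∀ x : Fin n → ℤ, eval x D = 0 → ∀ i : Fin n,
        (x i).natAbs <
          N (n + 8)
            ((rename (Fin.castAdd 8) D) ^ 2 +
              ((∑ i : Fin n, (X (Fin.castAdd 8 i) : MvPolynomial (Fin (n + 8)) ℤ) ^ 2) -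
                ∑ j : Fin 8, (X (Fin.natAdd n j) : MvPolynomial (Fin (n + 8)) ℤ) ^ 2) ^ 2) := by
  intro n hn D hfin x hx i
  set E : MvPolynomial (Fin (n + 8)) ℤ :=
    ((rename (Fin.castAdd 8) D) ^ 2 +
      ((∑ i : Fin n, (X (Fin.castAdd 8 i) : MvPolynomial (Fin (n + 8)) ℤ) ^ 2) -
        ∑ j : Fin 8, (X (Fin.natAdd n j) : MvPolynomial (Fin (n + 8)) ℤ) ^ 2) ^ 2) with hE
  set T : Set (Fin (n + 8) → ℤ) := {y | eval y E = 0} with hT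
  -- characterization of membership in T
  have mem_T : ∀ y : Fin (n + 8) → ℤ, y ∈ T ↔
      eval (y ∘ Fin.castAdd 8) D = 0 ∧
      (∑ i : Fin n, y (Fin.castAdd 8 i) ^ 2) = ∑ j : Fin 8, y (Fin.natAdd n j) ^ 2 := by
    intro y
    have hev : eval y E =
        (eval (y ∘ Fin.castAdd 8) D) ^ 2 +
        ((∑ i : Fin n, y (Fin.castAdd 8 i) ^ 2) - ∑ j : Fin 8, y (Fin.natAdd n j) ^ 2) ^ 2 := by
      simp [hE, eval_rename]
    rw [hT, Set.mem_setOf_eq, hev,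
      add_eq_zero_iff_of_nonneg (sq_nonneg _) (sq_nonneg _), sq_eq_zero_iff, sq_eq_zero_iff,
      sub_eq_zero]
  -- T is finite
  have hTfin : T.Finite := by
    obtain ⟨M, hM⟩ : ∃ M : ℤ, ∀ z : Fin n → ℤ, eval z D = 0 → (∑ i : Fin n, z i ^ 2) ≤ M := by
      have himg : ((fun z : Fin n → ℤ => ∑ i : Fin n, z i ^ 2) ''
          {z : Fin n → ℤ | eval z D = 0}).Finite := hfin.image _
      obtain ⟨M, hM⟩ := himg.bddAbove
      exact ⟨M, fun z hz => hM ⟨z, hz, rfl⟩⟩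
    set Φ : (Fin (n + 8) → ℤ) → (Fin n → ℤ) × (Fin 8 → ℤ) :=
      fun y => (fun i => y (Fin.castAdd 8 i), fun j => y (Fin.natAdd n j)) with hΦ
    have hΦinj : Function.Injective Φ := by
      intro y y' h
      funext a
      refine Fin.addCases (fun i => ?_) (fun j => ?_) a
      · exact congrFun (congrArg Prod.fst h) i
      · exact congrFun (congrArg Prod.snd h) j
    have hsub : T ⊆ Φ ⁻¹'
        ({z : Fin n → ℤ | eval z D = 0} ×ˢ (Set.pi Set.univ fun _ : Fin 8 => Set.Icc (-M) M)) := by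
      intro y hy
      rw [mem_T] at hy
      obtain ⟨h1, h2⟩ := hy
      constructor
      · exact h1
      · intro j _
        have hb : y (Fin.natAdd n j) ^ 2 ≤ M := by
          calc y (Fin.natAdd n j) ^ 2 ≤ ∑ j' : Fin 8, y (Fin.natAdd n j') ^ 2 :=
                Finset.single_le_sum (f := fun j' : Fin 8 => y (Fin.natAdd n j') ^ 2)
                  (fun j' _ => sq_nonneg _) (Finset.mem_univ j)
            _ = ∑ i : Fin n, y (Fin.castAdd 8 i) ^ 2 := h2.symm
            _ ≤ M := hM _ h1
        have := le_trans (int_abs_le_sq (y (Fin.natAdd n j))) hb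
        exact abs_le.mp this
    refine Set.Finite.subset (Set.Finite.preimage hΦinj.injOn ?_) hsub
    exact (hfin.prod (Set.Finite.pi fun _ => Set.finite_Icc _ _))
  -- the height bound
  set m : ℕ := (∑ i : Fin n, x i ^ 2).toNat with hm
  have hmz : (m : ℤ) = ∑ i : Fin n, x i ^ 2 :=
    Int.toNat_of_nonneg (Finset.sum_nonneg fun _ _ => sq_nonneg _)
  -- the injection Fin (m+1) → T
  set g : ℕ → Fin 8 → ℤ := fun k =>
    ![FS k 0, FS k 1, FS k 2, FS k 3, FS (m - k) 0, FS (m - k) 1, FS (m - k) 2, FS (m - k) 3]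
    with hg
  set f : Fin (m + 1) → (Fin (n + 8) → ℤ) := fun k => Fin.append x (g k) with hf
  have hfT : ∀ k, f k ∈ T := by
    intro k
    rw [mem_T]
    constructor
    · have : (f k ∘ Fin.castAdd 8) = x := by
        funext i; simp [hf, Fin.append_left]
      rw [this]; exact hx
    · have hleft : (∑ i : Fin n, f k (Fin.castAdd 8 i) ^ 2) = (m : ℤ) := by
        rw [hmz]
        exact Finset.sum_congr rfl fun i _ => by simp [hf, Fin.append_left]
      have hright : (∑ j : Fin 8, f k (Fin.natAdd n j) ^ 2) = (m : ℤ) := by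
        have h1 : ∀ j : Fin 8, f k (Fin.natAdd n j) = g k j := fun j => by
          simp [hf, Fin.append_right]
        rw [Finset.sum_congr rfl fun j _ => by rw [h1]]
        rw [Fin.sum_univ_eight]
        have e1 : g (k : ℕ) 0 ^ 2 + g k 1 ^ 2 + g k 2 ^ 2 + g k 3 ^ 2 = ((k : ℕ) : ℤ) :=
          FS_spec (k : ℕ)
        have e2 : g (k : ℕ) 4 ^ 2 + g k 5 ^ 2 + g k 6 ^ 2 + g k 7 ^ 2 = ((m - (k : ℕ) : ℕ) : ℤ) :=
          FS_spec (m - (k : ℕ))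
        have hk : (k : ℕ) + (m - (k : ℕ)) = m := Nat.add_sub_cancel' (Nat.lt_succ_iff.mp k.isLt)
        have hkz : ((k : ℕ) : ℤ) + ((m - (k : ℕ) : ℕ) : ℤ) = (m : ℤ) := by exact_mod_cast hk
        linarith
      rw [hleft, hright]
  have hfinj : Function.Injective f := by
    intro k k' h
    have h4 : ∀ j : Fin 8, g (k : ℕ) j = g (k' : ℕ) j := by
      intro j
      have := congrFun h (Fin.natAdd n j)
      simpa [hf, Fin.append_right] using this
    have : ((k : ℕ) : ℤ) = ((k' : ℕ) : ℤ) := by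
      rw [← FS_spec (k : ℕ), ← FS_spec (k' : ℕ)]
      have e0 : FS (k : ℕ) 0 = FS (k' : ℕ) 0 := h4 0
      have e1 : FS (k : ℕ) 1 = FS (k' : ℕ) 1 := h4 1
      have e2 : FS (k : ℕ) 2 = FS (k' : ℕ) 2 := h4 2
      have e3 : FS (k : ℕ) 3 = FS (k' : ℕ) 3 := h4 3
      rw [e0, e1, e2, e3]
    exact Fin.ext (Nat.cast_injective this)
  have hcard : m + 1 ≤ T.ncard := by
    have : (Set.range f).ncard = m + 1 := by
      rw [← Set.image_univ, Set.ncard_image_of_injective _ hfinj]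
      simp [Set.ncard_univ]
    calc m + 1 = (Set.range f).ncard := this.symm
      _ ≤ T.ncard := Set.ncard_le_ncard (Set.range_subset_iff.mpr hfT) hTfin
  have hNb := hN (n + 8) (by omega) E hTfin
  have hxi : (x i).natAbs ≤ m := by
    have h1 : |x i| ≤ (m : ℤ) := by
      rw [hmz]
      exact le_trans (int_abs_le_sq _)
        (Finset.single_le_sum (fun j _ => sq_nonneg (x j)) (Finset.mem_univ i))
    exact_mod_cast (Int.abs_eq_natAbs (x i) ▸ h1)
  calc (x i).natAbs ≤ m := hxi
    _ < T.ncard := by omega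
    _ < N (n + 8) E := hNb
end

section
/- For each integer n ≥ 2, f(n+1) ≥ f(n)² and f(n)² > f(n). -/
/-- A system `S ⊆ E_n`, encoded by the set `eqOne` of indices `i` carrying the
equation `x_i = 1`, and the sets `addEq`, `mulEq` of triples `(i, j, k)` carrying
the equations `x_i + x_j = x_k` and `x_i · x_j = x_k` respectively. -/
structure SystemEn (n : ℕ) where
  eqOne : Finset (Fin n)
  addEq : Finset (Fin n × Fin n × Fin n)
  mulEq : Finset (Fin n × Fin n × Fin n)

/-- A tuple `x` solves the system `S` if it satisfies all equations of `S`. -/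
def SystemEn.Solves {n : ℕ} {R : Type*} [Semiring R] (S : SystemEn n) (x : Fin n → R) : Prop :=
  (∀ i ∈ S.eqOne, x i = 1) ∧
  (∀ t ∈ S.addEq, x t.1 + x t.2.1 = x t.2.2) ∧
  (∀ t ∈ S.mulEq, x t.1 * x t.2.1 = x t.2.2)

/-- `fBound n` is the smallest non-negative integer `b` such that for each system
`S ⊆ E_n` with a finite number of solutions in integers `x₁, …, xₙ`, all these
solutions belong to `[-b, b]ⁿ`. -/
noncomputable def fBound (n : ℕ) : ℕ :=
  sInf {b : ℕ | ∀ S : SystemEn n, {x : Fin n → ℤ | S.Solves x}.Finite →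
    ∀ x : Fin n → ℤ, S.Solves x → ∀ i, |x i| ≤ (b : ℤ)}

/-- `gBound n` is the greatest finite total number of solutions of a subsystem of
`E_n` in integers `x₁, …, xₙ`. -/
noncomputable def gBound (n : ℕ) : ℕ :=
  sSup {c : ℕ | ∃ S : SystemEn n, {x : Fin n → ℤ | S.Solves x}.Finite ∧
    {x : Fin n → ℤ | S.Solves x}.ncard = c}

namespace Stmt3Aux

instance (n : ℕ) : Fintype (SystemEn n) :=
  Fintype.ofBijective
    (fun p : Finset (Fin n) × Finset (Fin n × Fin n × Fin n) × Finset (Fin n × Fin n × Fin n) =>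
      SystemEn.mk p.1 p.2.1 p.2.2)
    ⟨fun a b h => by
        obtain ⟨a1, a2, a3⟩ := a; obtain ⟨b1, b2, b3⟩ := b
        simp only [SystemEn.mk.injEq] at h
        simp [Prod.ext_iff, h.1, h.2.1, h.2.2],
     fun S => ⟨⟨S.eqOne, S.addEq, S.mulEq⟩, rfl⟩⟩

/-- The set whose infimum is `fBound n`. -/
def setT (n : ℕ) : Set ℕ :=
  {b : ℕ | ∀ S : SystemEn n, {x : Fin n → ℤ | S.Solves x}.Finite →
    ∀ x : Fin n → ℤ, S.Solves x → ∀ i, |x i| ≤ (b : ℤ)}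

theorem fBound_eq (n : ℕ) : fBound n = sInf (setT n) := rfl

open Classical in
/-- A bound for the solutions of a single system (0 if the solution set is infinite). -/
noncomputable def bnd {n : ℕ} (S : SystemEn n) : ℕ :=
  if h : ({x : Fin n → ℤ | S.Solves x}).Finite then
    h.toFinset.sup fun x => Finset.univ.sup fun i => (x i).natAbs
  else 0

theorem setT_nonempty (n : ℕ) : (setT n).Nonempty := by
  classical
  refine ⟨Finset.univ.sup (bnd (n := n)), ?_⟩
  intro S hfin x hx i
  have h1 : (x i).natAbs ≤ bnd S := by
    rw [bnd, dif_pos hfin]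
    exact le_trans (Finset.le_sup (f := fun j => (x j).natAbs) (Finset.mem_univ i))
      (Finset.le_sup (f := fun x : Fin n → ℤ => Finset.univ.sup fun i => (x i).natAbs)
        (hfin.mem_toFinset.mpr hx))
  have h2 : bnd S ≤ Finset.univ.sup (bnd (n := n)) := Finset.le_sup (Finset.mem_univ S)
  calc |x i| = ((x i).natAbs : ℤ) := Int.abs_eq_natAbs _
    _ ≤ _ := by exact_mod_cast le_trans h1 h2

theorem fBound_mem (n : ℕ) : fBound n ∈ setT n := by
  rw [fBound_eq]; exact Nat.sInf_mem (setT_nonempty n)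

theorem two_le_fBound (n : ℕ) (hn : 2 ≤ n) : 2 ≤ fBound n := by
  classical
  set i0 : Fin n := ⟨0, by omega⟩
  set i1 : Fin n := ⟨1, by omega⟩
  have hne : i0 ≠ i1 := by simp [i0, i1, Fin.ext_iff]
  set S : SystemEn n := ⟨Finset.univ.erase i1, {(i0, i0, i1)}, ∅⟩
  set w : Fin n → ℤ := fun i => if i = i1 then 2 else 1
  have hw : S.Solves w := by
    refine ⟨?_, ?_, ?_⟩
    · intro i hi
      have : i ≠ i1 := (Finset.mem_erase.mp hi).1
      simp [w, this]
    · intro t ht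
      simp only [S, Finset.mem_singleton] at ht
      subst ht
      simp [w, hne]
    · intro t ht; simp [S] at ht
  have hfin : {x : Fin n → ℤ | S.Solves x}.Finite := by
    apply Set.Finite.subset (Set.finite_singleton w)
    intro x hx
    obtain ⟨h1, h2, _⟩ := hx
    have hx0 : x i0 = 1 := h1 i0 (Finset.mem_erase.mpr ⟨hne, Finset.mem_univ _⟩)
    have hx1 : x i1 = 2 := by
      have := h2 (i0, i0, i1) (by simp [S])
      simp only at this
      omega
    have : x = w := by
      funext i
      by_cases hi : i = i1
      · simp [hi, hx1, w]
      · simp [w, hi, h1 i (Finset.mem_erase.mpr ⟨hi, Finset.mem_univ _⟩)]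
    simp [this]
  have := fBound_mem n S hfin w hw i1
  simp only [w, if_pos rfl] at this
  exact_mod_cast (by simpa using this : (2 : ℤ) ≤ (fBound n : ℤ))

theorem sq_le_fBound_succ (n : ℕ) (hn : 2 ≤ n) : fBound n ^ 2 ≤ fBound (n + 1) := by
  classical
  set k := fBound n with hk
  have h2 : 2 ≤ k := two_le_fBound n hn
  -- `k - 1` is not in the set, which yields a near-extremal solution
  have hnot : k - 1 ∉ setT n := by
    apply Nat.notMem_of_lt_sInf
    rw [← fBound_eq]
    omega
  simp only [setT, Set.mem_setOf_eq, not_forall] at hnot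
  obtain ⟨S, hfin, x, hx, i, hxi⟩ := hnot
  have hxi' : (k : ℤ) ≤ |x i| := by
    push_neg at hxi
    have : ((k - 1 : ℕ) : ℤ) = (k : ℤ) - 1 := by
      have : (1 : ℕ) ≤ k := by omega
      push_cast [Nat.cast_sub this]; ring
    omega
  -- build the extended system on `n + 1` variables
  set em : Fin n × Fin n × Fin n → Fin (n + 1) × Fin (n + 1) × Fin (n + 1) :=
    fun t => (t.1.castSucc, t.2.1.castSucc, t.2.2.castSucc) with hem
  set S' : SystemEn (n + 1) :=
    ⟨S.eqOne.image Fin.castSucc, S.addEq.image em,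
      insert (i.castSucc, i.castSucc, Fin.last n) (S.mulEq.image em)⟩ with hS'
  have key : ∀ y : Fin (n + 1) → ℤ, S'.Solves y ↔
      (S.Solves fun j => y j.castSucc) ∧ y i.castSucc * y i.castSucc = y (Fin.last n) := by
    intro y
    simp only [SystemEn.Solves, hS', hem, Finset.forall_mem_image, Finset.forall_mem_insert]
    tauto
  have hfin' : {y : Fin (n + 1) → ℤ | S'.Solves y}.Finite := by
    apply Set.Finite.of_finite_image
      (f := fun y : Fin (n + 1) → ℤ => fun j : Fin n => y j.castSucc)
    · apply hfin.subset
      rintro _ ⟨y, hy, rfl⟩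
      exact ((key y).1 hy).1
    · intro y1 h1 y2 h2 hEq
      have h1' := (key y1).1 h1
      have h2' := (key y2).1 h2
      have hEq' : ∀ j : Fin n, y1 j.castSucc = y2 j.castSucc := fun j => congrFun hEq j
      funext j
      induction j using Fin.lastCases with
      | last => rw [← h1'.2, ← h2'.2, hEq' i]
      | cast j => exact hEq' j
  set y₀ : Fin (n + 1) → ℤ := Fin.snoc x (x i * x i) with hy₀
  have hres : (fun j : Fin n => y₀ j.castSucc) = x := by
    funext j; simp [hy₀, Fin.snoc_castSucc]
  have hy₀solves : S'.Solves y₀ := by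
    rw [key]
    refine ⟨by rw [hres]; exact hx, ?_⟩
    simp [hy₀, Fin.snoc_castSucc, Fin.snoc_last]
  have hb := fBound_mem (n + 1) S' hfin' y₀ hy₀solves (Fin.last n)
  have hlast : y₀ (Fin.last n) = x i * x i := by simp [hy₀, Fin.snoc_last]
  rw [hlast] at hb
  have habs : (k : ℤ) * (k : ℤ) ≤ |x i * x i| := by
    rw [abs_mul]
    exact mul_le_mul hxi' hxi' (by positivity) (abs_nonneg _)
  have : ((k ^ 2 : ℕ) : ℤ) ≤ (fBound (n + 1) : ℤ) := by
    push_cast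
    nlinarith [habs, hb]
  exact_mod_cast this

end Stmt3Aux

/-- for each integer `n ≥ 2`, `f(n+1) ≥ f(n)² > f(n)`. -/
theorem stmt3 (n : ℕ) (hn : 2 ≤ n) :
    fBound n ^ 2 ≤ fBound (n + 1) ∧ fBound n < fBound n ^ 2 := by
  have h2 := Stmt3Aux.two_le_fBound n hn
  refine ⟨Stmt3Aux.sq_le_fBound_succ n hn, ?_⟩
  nlinarith
end

section
/- For every r ∈ ℕ and every polynomial W ∈ ℤ[x₁, x₂, y₁,…,y_r], there exists a positive integer v with the following property: if for all a, b ∈ ℕ, (a ≥ 1 and b = f(a)) holds if and only if there exist y₁,…,y_r ∈ ℕ with W(a, b, y₁,…,y_r) = 0, then for every integer u ≥ v the equation W(u, f(u), y₁,…,y_r) = 0 has infinitely many solutions in non-negative integers y₁,…,y_r. -/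
-- Fintype instance for SystemEn
def sysEquiv (n : ℕ) : SystemEn n ≃
    (Finset (Fin n) × Finset (Fin n × Fin n × Fin n) × Finset (Fin n × Fin n × Fin n)) where
  toFun S := ⟨S.eqOne, S.addEq, S.mulEq⟩
  invFun p := ⟨p.1, p.2.1, p.2.2⟩
  left_inv S := rfl
  right_inv p := rfl

instance (n : ℕ) : Fintype (SystemEn n) := Fintype.ofEquiv _ (sysEquiv n).symm

def fSet (n : ℕ) : Set ℕ :=
  {b : ℕ | ∀ S : SystemEn n, {x : Fin n → ℤ | S.Solves x}.Finite →
    ∀ x : Fin n → ℤ, S.Solves x → ∀ i, |x i| ≤ (b : ℤ)}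

lemma fSet_nonempty (n : ℕ) : (fSet n).Nonempty := by
  classical
  refine ⟨Finset.univ.sup (fun S : SystemEn n =>
    if h : {x : Fin n → ℤ | S.Solves x}.Finite then
      h.toFinset.sup (fun x => Finset.univ.sup (fun i => (x i).natAbs)) else 0), ?_⟩
  intro S hfin x hx i
  have h1 : (x i).natAbs ≤ Finset.univ.sup (fun i => (x i).natAbs) :=
    Finset.le_sup (f := fun i => (x i).natAbs) (Finset.mem_univ i)
  have h2 : Finset.univ.sup (fun i => (x i).natAbs) ≤
      hfin.toFinset.sup (fun x => Finset.univ.sup (fun i => (x i).natAbs)) :=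
    Finset.le_sup (f := fun x : Fin n → ℤ => Finset.univ.sup (fun i => (x i).natAbs))
      (by simp only [Set.Finite.mem_toFinset, Set.mem_setOf_eq]; exact hx)
  have h3 : hfin.toFinset.sup (fun x => Finset.univ.sup (fun i => (x i).natAbs)) ≤
      Finset.univ.sup (fun S : SystemEn n =>
        if h : {x : Fin n → ℤ | S.Solves x}.Finite then
          h.toFinset.sup (fun x => Finset.univ.sup (fun i => (x i).natAbs)) else 0) := by
    have := Finset.le_sup (f := fun S : SystemEn n =>
      if h : {x : Fin n → ℤ | S.Solves x}.Finite then
        h.toFinset.sup (fun x => Finset.univ.sup (fun i => (x i).natAbs)) else 0)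
      (Finset.mem_univ S)
    simpa [dif_pos hfin] using this
  have : (x i).natAbs ≤ _ := le_trans h1 (le_trans h2 h3)
  calc |x i| = ((x i).natAbs : ℤ) := (Int.abs_eq_natAbs _)
  _ ≤ _ := by exact_mod_cast this

lemma fBound_mem (n : ℕ) : fBound n ∈ fSet n := Nat.sInf_mem (fSet_nonempty n)

lemma fBound_spec {n : ℕ} (S : SystemEn n) (hfin : {x : Fin n → ℤ | S.Solves x}.Finite)
    {x : Fin n → ℤ} (hx : S.Solves x) (i : Fin n) : |x i| ≤ (fBound n : ℤ) :=
  fBound_mem n S hfin x hx i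

/-- the bound `fBound n` is achieved, provided it is positive -/
lemma fBound_achieved {n : ℕ} (hn : 1 ≤ fBound n) :
    ∃ S : SystemEn n, {x : Fin n → ℤ | S.Solves x}.Finite ∧
      ∃ x : Fin n → ℤ, S.Solves x ∧ ∃ i, |x i| = (fBound n : ℤ) := by
  have hnot : fBound n - 1 ∉ fSet n := by
    intro h
    have h2 : fBound n ≤ fBound n - 1 := Nat.sInf_le h
    omega
  simp only [fSet, Set.mem_setOf_eq, not_forall] at hnot
  obtain ⟨S, hfin, x, hx, i, hi⟩ := hnot
  refine ⟨S, hfin, x, hx, i, ?_⟩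
  have h2 := fBound_spec S hfin hx i
  rw [Int.abs_eq_natAbs] at h2 hi ⊢
  have h1 : ((fBound n - 1 : ℕ) : ℤ) < ((x i).natAbs : ℤ) := by exact_mod_cast not_le.mp hi
  have h1' : fBound n - 1 < (x i).natAbs := by exact_mod_cast h1
  have h2' : (x i).natAbs ≤ fBound n := by exact_mod_cast h2
  have : (x i).natAbs = fBound n := by omega
  rw [this]

open MvPolynomial in
inductive Term (σ : Type) where
  | var : σ → Term σ
  | one : Term σ
  | add : Term σ → Term σ → Term σ
  | mul : Term σ → Term σ → Term σ
  deriving DecidableEq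

namespace Term

variable {σ : Type}

def eval (ρ : σ → ℤ) : Term σ → ℤ
  | var s => ρ s
  | one => 1
  | add t₁ t₂ => eval ρ t₁ + eval ρ t₂
  | mul t₁ t₂ => eval ρ t₁ * eval ρ t₂

variable [DecidableEq σ]

/-- subterm closure -/
def cl : Term σ → Finset (Term σ)
  | var s => {var s}
  | one => {one}
  | add t₁ t₂ => insert (add t₁ t₂) (cl t₁ ∪ cl t₂)
  | mul t₁ t₂ => insert (mul t₁ t₂) (cl t₁ ∪ cl t₂)

lemma self_mem_cl (t : Term σ) : t ∈ t.cl := by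
  cases t <;> simp [cl]

lemma cl_trans : ∀ t u : Term σ, u ∈ t.cl → u.cl ⊆ t.cl := by
  intro t
  induction t with
  | var s => intro u hu; simp [cl] at hu; subst hu; simp [cl]
  | one => intro u hu; simp [cl] at hu; subst hu; simp [cl]
  | add t₁ t₂ ih₁ ih₂ =>
    intro u hu
    simp only [cl, Finset.mem_insert, Finset.mem_union] at hu
    rcases hu with rfl | h | h
    · exact subset_rfl
    · exact (ih₁ u h).trans (by intro z hz; simp [cl, Finset.mem_union]; tauto)
    · exact (ih₂ u h).trans (by intro z hz; simp [cl, Finset.mem_union]; tauto)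
  | mul t₁ t₂ ih₁ ih₂ =>
    intro u hu
    simp only [cl, Finset.mem_insert, Finset.mem_union] at hu
    rcases hu with rfl | h | h
    · exact subset_rfl
    · exact (ih₁ u h).trans (by intro z hz; simp [cl, Finset.mem_union]; tauto)
    · exact (ih₂ u h).trans (by intro z hz; simp [cl, Finset.mem_union]; tauto)

/-- binary numeral: for u ≥ 1, `num u` evaluates to `u` -/
def num : ℕ → Term σ
  | 0 => one
  | 1 => one
  | (n+2) =>
    if (n+2) % 2 = 0 then mul (add one one) (num ((n+2)/2))
    else add one (mul (add one one) (num ((n+2)/2)))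
  decreasing_by all_goals omega

lemma num_eval (ρ : σ → ℤ) : ∀ u : ℕ, 1 ≤ u → eval ρ (num u) = u := by
  intro u
  induction u using Nat.strong_induction_on with
  | _ u ih =>
    match u with
    | 0 => omega
    | 1 => intro _; simp [num, eval]
    | (n+2) =>
      intro _
      have h2 : 1 ≤ (n+2)/2 := by omega
      have hlt : (n+2)/2 < n+2 := by omega
      have ihv := ih ((n+2)/2) hlt h2
      by_cases h : (n+2) % 2 = 0
      · rw [num, if_pos h]
        have he : eval ρ (mul (add one one) (num ((n+2)/2))) =
            (1 + 1) * eval ρ (num ((n+2)/2)) := rfl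
        rw [he, ihv]
        omega
      · rw [num, if_neg h]
        have he : eval ρ (add one (mul (add one one) (num ((n+2)/2)))) =
            1 + (1 + 1) * eval ρ (num ((n+2)/2)) := rfl
        rw [he, ihv]
        omega

lemma num_cl_card : ∀ u : ℕ, ((num u : Term σ)).cl.card ≤ 5 * Nat.log 2 u + 5 := by
  intro u
  induction u using Nat.strong_induction_on with
  | _ u ih =>
    match u with
    | 0 => simp [num, cl]
    | 1 => simp [num, cl]
    | (n+2) =>
      have hlt : (n+2)/2 < n+2 := by omega
      have ihv := ih ((n+2)/2) hlt
      have hpos : 0 < Nat.log 2 (n+2) := Nat.log_pos (by omega) (by omega)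
      have hlog : Nat.log 2 ((n+2)/2) = Nat.log 2 (n+2) - 1 := Nat.log_div_base 2 (n+2)
      have htwo : ((add one one : Term σ)).cl.card ≤ 2 := by
        have : (add one one : Term σ).cl = insert (add one one) ({one} ∪ {one}) := rfl
        rw [this]
        refine le_trans (Finset.card_insert_le _ _) ?_
        simp
      have hmulcard : ((mul (add one one) (num ((n+2)/2)) : Term σ)).cl.card ≤
          3 + ((num ((n+2)/2) : Term σ)).cl.card := by
        have : (mul (add one one) (num ((n+2)/2)) : Term σ).cl =
            insert (mul (add one one) (num ((n+2)/2)))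
              ((add one one : Term σ).cl ∪ (num ((n+2)/2) : Term σ).cl) := rfl
        rw [this]
        refine le_trans (Finset.card_insert_le _ _) ?_
        have := Finset.card_union_le ((add one one : Term σ)).cl ((num ((n+2)/2) : Term σ)).cl
        omega
      by_cases h : (n+2) % 2 = 0
      · have : (num (n+2) : Term σ) = mul (add one one) (num ((n+2)/2)) := by
          rw [num, if_pos h]
        rw [this]
        omega
      · have hodd : (num (n+2) : Term σ) = add one (mul (add one one) (num ((n+2)/2))) := by
          rw [num, if_neg h]
        have hcl : (num (n+2) : Term σ).cl =
            insert (add one (mul (add one one) (num ((n+2)/2))))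
              ((one : Term σ).cl ∪ (mul (add one one) (num ((n+2)/2)) : Term σ).cl) := by
          rw [hodd]; rfl
        have h1 : (num (n+2) : Term σ).cl.card ≤
            1 + (1 + (mul (add one one) (num ((n+2)/2)) : Term σ).cl.card) := by
          rw [hcl]
          refine le_trans (Finset.card_insert_le _ _) ?_
          have := Finset.card_union_le ((one : Term σ)).cl
            ((mul (add one one) (num ((n+2)/2)) : Term σ)).cl
          simp [cl] at this ⊢
          omega
        omega

/-- unary numeral evaluating to `n+1` -/
def tnum : ℕ → Term σ
  | 0 => one
  | (n+1) => add one (tnum n)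

lemma tnum_eval (ρ : σ → ℤ) : ∀ n : ℕ, eval ρ (tnum n) = (n : ℤ) + 1
  | 0 => rfl
  | (n+1) => by
    show 1 + eval ρ (tnum n) = _
    rw [tnum_eval ρ n]; push_cast; ring

end Term

open Term in
lemma exists_terms {σ : Type} [DecidableEq σ] (W : MvPolynomial σ ℤ) :
    ∃ T₁ T₂ : Term σ, ∀ ρ : σ → ℤ,
      MvPolynomial.eval ρ W = Term.eval ρ T₁ - Term.eval ρ T₂ := by
  induction W using MvPolynomial.induction_on with
  | C c =>
    rcases c with n | n
    · exact ⟨tnum n, tnum 0, fun ρ => by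
        rw [tnum_eval, tnum_eval]; simp⟩
    · exact ⟨tnum 0, tnum (n+1), fun ρ => by
        rw [tnum_eval, tnum_eval]; simp [Int.negSucc_eq]⟩
  | add p q ihp ihq =>
    obtain ⟨T₁, T₂, hT⟩ := ihp
    obtain ⟨S₁, S₂, hS⟩ := ihq
    exact ⟨Term.add T₁ S₁, Term.add T₂ S₂, fun ρ => by
      show _ = (Term.eval ρ T₁ + Term.eval ρ S₁) - (Term.eval ρ T₂ + Term.eval ρ S₂)
      rw [map_add, hT, hS]; ring⟩
  | mul_X p s ihp =>
    obtain ⟨T₁, T₂, hT⟩ := ihp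
    exact ⟨Term.mul T₁ (Term.var s), Term.mul T₂ (Term.var s), fun ρ => by
      show _ = Term.eval ρ T₁ * ρ s - Term.eval ρ T₂ * ρ s
      rw [map_mul, hT, MvPolynomial.eval_X]; ring⟩

section Compile

open Term

variable {σ : Type} [DecidableEq σ] [Fintype σ]

def vsOf (ps : List (Term σ × Term σ)) : Finset (Term σ) :=
  (Finset.univ.image Term.var) ∪ ps.foldr (fun p a => p.1.cl ∪ p.2.cl ∪ a) ∅

lemma var_mem_vsOf (ps : List (Term σ × Term σ)) (s : σ) : Term.var s ∈ vsOf ps := by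
  simp [vsOf]

lemma cl_subset_vsOf {ps : List (Term σ × Term σ)} {p : Term σ × Term σ} (hp : p ∈ ps) :
    p.1.cl ⊆ vsOf ps ∧ p.2.cl ⊆ vsOf ps := by
  unfold vsOf
  induction ps with
  | nil => simp at hp
  | cons q ps ih =>
    simp only [List.foldr_cons]
    rcases List.mem_cons.mp hp with rfl | hp'
    · constructor <;> intro z hz <;> simp [Finset.mem_union, hz]
    · obtain ⟨h1, h2⟩ := ih hp'
      constructor <;> intro z hz
      · have := h1 hz; simp [Finset.mem_union] at this ⊢; tauto
      · have := h2 hz; simp [Finset.mem_union] at this ⊢; tauto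

lemma foldr_closed {ps : List (Term σ × Term σ)} {t : Term σ}
    (h : t ∈ ps.foldr (fun p a => p.1.cl ∪ p.2.cl ∪ a) ∅) :
    t.cl ⊆ ps.foldr (fun p a => p.1.cl ∪ p.2.cl ∪ a) ∅ := by
  induction ps with
  | nil => simp at h
  | cons q ps ih =>
    simp only [List.foldr_cons, Finset.mem_union] at h
    rcases h with (h | h) | h
    · intro z hz
      have := cl_trans _ _ h hz
      simp only [List.foldr_cons, Finset.mem_union]
      tauto
    · intro z hz
      have := cl_trans _ _ h hz
      simp only [List.foldr_cons, Finset.mem_union]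
      tauto
    · intro z hz
      have := ih h hz
      simp only [List.foldr_cons, Finset.mem_union]
      tauto

lemma vsOf_closed {ps : List (Term σ × Term σ)} {t : Term σ} (ht : t ∈ vsOf ps) :
    t.cl ⊆ vsOf ps := by
  unfold vsOf at ht ⊢
  rcases Finset.mem_union.mp ht with h | h
  · simp only [Finset.mem_image] at h
    obtain ⟨s, _, rfl⟩ := h
    intro z hz
    simp [cl] at hz
    subst hz
    simp
  · intro z hz
    exact Finset.mem_union.mpr (Or.inr (foldr_closed h hz))

def VOf (ps : List (Term σ × Term σ)) : Type := {t : Term σ // t ∈ vsOf ps} ⊕ Unit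

instance (ps : List (Term σ × Term σ)) : Fintype (VOf ps) := by
  unfold VOf; infer_instance

instance (ps : List (Term σ × Term σ)) : DecidableEq (VOf ps) := by
  unfold VOf; infer_instance

def oneB {ps : List (Term σ × Term σ)} : VOf ps → Bool
  | Sum.inl t => decide (t.1 = Term.one)
  | Sum.inr _ => false

def addB {ps : List (Term σ × Term σ)} : VOf ps → VOf ps → VOf ps → Bool
  | Sum.inl t₁, Sum.inl t₂, Sum.inl t₃ => decide (t₃.1 = Term.add t₁.1 t₂.1)
  | Sum.inl t₁, Sum.inr _, Sum.inl t₃ => decide ((t₁.1, t₃.1) ∈ ps)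
  | Sum.inr _, Sum.inr _, Sum.inr _ => true
  | _, _, _ => false

def mulB {ps : List (Term σ × Term σ)} : VOf ps → VOf ps → VOf ps → Bool
  | Sum.inl t₁, Sum.inl t₂, Sum.inl t₃ => decide (t₃.1 = Term.mul t₁.1 t₂.1)
  | _, _, _ => false

noncomputable def nOf (ps : List (Term σ × Term σ)) : ℕ := Fintype.card (VOf ps)

noncomputable def eV (ps : List (Term σ × Term σ)) : VOf ps ≃ Fin (nOf ps) :=
  Fintype.equivFin _

noncomputable def sysOf (ps : List (Term σ × Term σ)) : SystemEn (nOf ps) :=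
  ⟨Finset.univ.filter (fun i => oneB ((eV ps).symm i) = true),
   Finset.univ.filter (fun t => addB ((eV ps).symm t.1) ((eV ps).symm t.2.1)
      ((eV ps).symm t.2.2) = true),
   Finset.univ.filter (fun t => mulB ((eV ps).symm t.1) ((eV ps).symm t.2.1)
      ((eV ps).symm t.2.2) = true)⟩

def condOf (ps : List (Term σ × Term σ)) (ρ : σ → ℤ) : Prop :=
  ∀ p ∈ ps, Term.eval ρ p.1 = Term.eval ρ p.2

noncomputable def ΨOf (ps : List (Term σ × Term σ)) (ρ : σ → ℤ) : Fin (nOf ps) → ℤ :=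
  fun i => Sum.elim (fun t : {t : Term σ // t ∈ vsOf ps} => Term.eval ρ t.1)
    (fun _ => 0) ((eV ps).symm i)

lemma solves_sysOf_iff (ps : List (Term σ × Term σ)) (x : Fin (nOf ps) → ℤ) :
    (sysOf ps).Solves x ↔ ∃ ρ : σ → ℤ, condOf ps ρ ∧ x = ΨOf ps ρ := by
  constructor
  · rintro ⟨h1, h2, h3⟩
    simp only [sysOf, Finset.mem_filter, Finset.mem_univ, true_and] at h1 h2 h3
    set y : VOf ps → ℤ := fun w => x ((eV ps) w) with hy
    have hone : ∀ w, oneB w = true → y w = 1 := by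
      intro w hw
      have := h1 ((eV ps) w) (by simpa using hw)
      simpa [hy] using this
    have hadd : ∀ w₁ w₂ w₃, addB w₁ w₂ w₃ = true → y w₁ + y w₂ = y w₃ := by
      intro w₁ w₂ w₃ hw
      have := h2 ((eV ps) w₁, (eV ps) w₂, (eV ps) w₃) (by simpa using hw)
      simpa [hy] using this
    have hmul : ∀ w₁ w₂ w₃, mulB w₁ w₂ w₃ = true → y w₁ * y w₂ = y w₃ := by
      intro w₁ w₂ w₃ hw
      have := h3 ((eV ps) w₁, (eV ps) w₂, (eV ps) w₃) (by simpa using hw)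
      simpa [hy] using this
    have hz : y (Sum.inr ()) = 0 := by
      have := hadd (Sum.inr ()) (Sum.inr ()) (Sum.inr ()) rfl
      linarith
    set ρ : σ → ℤ := fun s => y (Sum.inl ⟨Term.var s, var_mem_vsOf ps s⟩) with hρ
    have claim : ∀ t : Term σ, ∀ ht : t ∈ vsOf ps,
        y (Sum.inl ⟨t, ht⟩) = Term.eval ρ t := by
      intro t
      induction t with
      | var s => intro ht; rfl
      | one =>
        intro ht
        exact hone (Sum.inl ⟨Term.one, ht⟩) (by simp [oneB])
      | add t₁ t₂ ih₁ ih₂ =>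
        intro ht
        have hmem := vsOf_closed ht
        have ht₁ : t₁ ∈ vsOf ps := hmem (by simp [cl, self_mem_cl])
        have ht₂ : t₂ ∈ vsOf ps := hmem (by simp [cl, self_mem_cl])
        have := hadd (Sum.inl ⟨t₁, ht₁⟩) (Sum.inl ⟨t₂, ht₂⟩) (Sum.inl ⟨_, ht⟩)
          (by simp [addB])
        rw [ih₁ ht₁, ih₂ ht₂] at this
        exact this.symm
      | mul t₁ t₂ ih₁ ih₂ =>
        intro ht
        have hmem := vsOf_closed ht
        have ht₁ : t₁ ∈ vsOf ps := hmem (by simp [cl, self_mem_cl])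
        have ht₂ : t₂ ∈ vsOf ps := hmem (by simp [cl, self_mem_cl])
        have := hmul (Sum.inl ⟨t₁, ht₁⟩) (Sum.inl ⟨t₂, ht₂⟩) (Sum.inl ⟨_, ht⟩)
          (by simp [mulB])
        rw [ih₁ ht₁, ih₂ ht₂] at this
        exact this.symm
    refine ⟨ρ, ?_, ?_⟩
    · intro p hp
      obtain ⟨hc1, hc2⟩ := cl_subset_vsOf hp
      have hp1 : p.1 ∈ vsOf ps := hc1 (self_mem_cl _)
      have hp2 : p.2 ∈ vsOf ps := hc2 (self_mem_cl _)
      have := hadd (Sum.inl ⟨p.1, hp1⟩) (Sum.inr ()) (Sum.inl ⟨p.2, hp2⟩)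
        (by simp [addB]; exact hp)
      rw [hz, claim p.1 hp1, claim p.2 hp2] at this
      linarith
    · funext i
      have hx : x i = y ((eV ps).symm i) := by simp [hy]
      rw [hx]
      rcases hw : ((eV ps).symm i) with t | u
      · simp only [ΨOf, hw, Sum.elim_inl]
        exact claim t.1 t.2
      · simp only [ΨOf, hw, Sum.elim_inr]
        exact hz
  · rintro ⟨ρ, hcond, rfl⟩
    refine ⟨?_, ?_, ?_⟩
    · intro i hi
      simp only [sysOf, Finset.mem_filter] at hi
      rcases hw : ((eV ps).symm i) with t | u
      · rw [hw] at hi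
        have : t.1 = Term.one := by simpa [oneB] using hi.2
        simp [ΨOf, hw, this, Term.eval]
      · rw [hw] at hi
        simp [oneB] at hi
    · intro tr htr
      simp only [sysOf, Finset.mem_filter] at htr
      have hb := htr.2
      rcases hw1 : ((eV ps).symm tr.1) with t₁ | u₁ <;>
        rcases hw2 : ((eV ps).symm tr.2.1) with t₂ | u₂ <;>
        rcases hw3 : ((eV ps).symm tr.2.2) with t₃ | u₃ <;>
        rw [hw1, hw2, hw3] at hb <;>
        simp only [ΨOf, hw1, hw2, hw3, Sum.elim_inl, Sum.elim_inr] <;>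
        simp only [addB, decide_eq_true_eq, Bool.false_eq_true] at hb
      · rw [hb]; rfl
      · rw [add_zero]; exact hcond _ hb
      · norm_num
    · intro tr htr
      simp only [sysOf, Finset.mem_filter] at htr
      have hb := htr.2
      rcases hw1 : ((eV ps).symm tr.1) with t₁ | u₁ <;>
        rcases hw2 : ((eV ps).symm tr.2.1) with t₂ | u₂ <;>
        rcases hw3 : ((eV ps).symm tr.2.2) with t₃ | u₃ <;>
        rw [hw1, hw2, hw3] at hb <;>
        simp only [ΨOf, hw1, hw2, hw3, Sum.elim_inl, Sum.elim_inr] <;>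
        simp only [mulB, decide_eq_true_eq, Bool.false_eq_true] at hb
      rw [hb]; rfl

end Compile

section Compile2

open Term

variable {σ : Type} [DecidableEq σ] [Fintype σ]

lemma ΨOf_val (ps : List (Term σ × Term σ)) (ρ : σ → ℤ) {t : Term σ} (ht : t ∈ vsOf ps) :
    ΨOf ps ρ ((eV ps) (Sum.inl ⟨t, ht⟩)) = Term.eval ρ t := by
  simp [ΨOf]
  have h := (eV ps).symm_apply_apply (Sum.inl ⟨t, ht⟩ : VOf ps)
  exact (congrArg (Sum.elim (fun t : {t // t ∈ vsOf ps} => Term.eval ρ t.1) (fun _ => (0 : ℤ))) h).trans rfl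

lemma sols_eq (ps : List (Term σ × Term σ)) :
    {x : Fin (nOf ps) → ℤ | (sysOf ps).Solves x} = ΨOf ps '' {ρ | condOf ps ρ} := by
  ext x
  simp only [Set.mem_setOf_eq, solves_sysOf_iff, Set.mem_image]
  constructor
  · rintro ⟨ρ, h, rfl⟩; exact ⟨ρ, h, rfl⟩
  · rintro ⟨ρ, h, rfl⟩; exact ⟨ρ, h, rfl⟩

lemma sols_finite (ps : List (Term σ × Term σ)) (h : {ρ : σ → ℤ | condOf ps ρ}.Finite) :
    {x : Fin (nOf ps) → ℤ | (sysOf ps).Solves x}.Finite := by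
  rw [sols_eq]; exact h.image _

lemma nOf_eq (ps : List (Term σ × Term σ)) : nOf ps = (vsOf ps).card + 1 := by
  unfold nOf VOf
  rw [Fintype.card_sum]
  simp [Fintype.card_coe]

lemma vsOf_card_le (ps : List (Term σ × Term σ)) :
    (vsOf ps).card ≤ Fintype.card σ +
      (ps.map (fun p : Term σ × Term σ => p.1.cl.card + p.2.cl.card)).sum := by
  unfold vsOf
  refine le_trans (Finset.card_union_le _ _) ?_
  have h1 : (Finset.univ.image (Term.var (σ := σ))).card ≤ Fintype.card σ := by
    refine le_trans (Finset.card_image_le) ?_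
    simp
  have h2 : (ps.foldr (fun (p : Term σ × Term σ) a => p.1.cl ∪ p.2.cl ∪ a) ∅).card ≤
      (ps.map (fun p : Term σ × Term σ => p.1.cl.card + p.2.cl.card)).sum := by
    induction ps with
    | nil => simp
    | cons q ps ih =>
      simp only [List.foldr_cons, List.map_cons, List.sum_cons]
      refine le_trans (Finset.card_union_le _ _) ?_
      have := Finset.card_union_le q.1.cl q.2.cl
      omega
  omega

end Compile2

lemma pow_gt_aux (a : ℕ) : ∀ L : ℕ, a + 12 ≤ L → 5 * L + a < 2 ^ L := by
  intro L h
  induction L, h using Nat.le_induction with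
  | base =>
    have hp : a < 2 ^ a := Nat.lt_two_pow_self
    have he : 2 ^ (a + 12) = 2 ^ a * 4096 := by rw [pow_add]; norm_num
    omega
  | succ n hn ih =>
    have he : 2 ^ (n + 1) = 2 * 2 ^ n := by rw [pow_succ]; ring
    have h8 : (8 : ℕ) ≤ 2 ^ n := by
      calc (8 : ℕ) = 2 ^ 3 := by norm_num
      _ ≤ 2 ^ n := Nat.pow_le_pow_right (by norm_num) (by omega)
    omega

lemma pow_gt (a : ℕ) : ∀ u : ℕ, 2 ^ (a + 12) ≤ u → 5 * Nat.log 2 u + a < u := by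
  intro u hu
  have hpos : 0 < u := lt_of_lt_of_le (pow_pos (by norm_num) _) hu
  have hL : a + 12 ≤ Nat.log 2 u := Nat.le_log_of_pow_le (by omega) hu
  have h1 := pow_gt_aux a (Nat.log 2 u) hL
  have h2 : 2 ^ Nat.log 2 u ≤ u := Nat.pow_log_le_self 2 (by omega)
  omega

lemma two_le_fBound_two : 2 ≤ fBound 2 := by
  classical
  set S : SystemEn 2 := ⟨{0}, {(0,0,1)}, ∅⟩ with hS
  have hsol : {x : Fin 2 → ℤ | S.Solves x} = {![1,2]} := by
    ext x
    simp only [Set.mem_setOf_eq, Set.mem_singleton_iff, SystemEn.Solves, hS]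
    constructor
    · rintro ⟨h1, h2, h3⟩
      have e1 : x 0 = 1 := h1 0 (by simp)
      have e2 : x 0 + x 0 = x 1 := h2 (0,0,1) (by simp)
      funext j
      fin_cases j <;> simp [e1, ← e2] <;> omega
    · rintro rfl
      refine ⟨?_, ?_, ?_⟩ <;> intro t ht <;> fin_cases ht <;> simp
  have hfin : {x : Fin 2 → ℤ | S.Solves x}.Finite := by rw [hsol]; exact Set.finite_singleton _
  have hx : S.Solves (![1,2] : Fin 2 → ℤ) := by
    refine ⟨?_, ?_, ?_⟩ <;> intro t ht <;> fin_cases ht <;> simp [hS]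
  have := fBound_spec S hfin hx 1
  simp at this
  exact_mod_cast this

lemma fBound_sq_le (k : ℕ) (hk : 1 ≤ fBound k) : fBound k ^ 2 ≤ fBound (k + 1) := by
  classical
  obtain ⟨S, hfin, x, hx, i, hi⟩ := fBound_achieved hk
  let emb3 : (Fin k × Fin k × Fin k) ↪ (Fin (k+1) × Fin (k+1) × Fin (k+1)) :=
    Fin.castSuccEmb.prodMap (Fin.castSuccEmb.prodMap Fin.castSuccEmb)
  set S' : SystemEn (k+1) :=
    ⟨S.eqOne.map Fin.castSuccEmb, S.addEq.map emb3,
      insert (i.castSucc, i.castSucc, Fin.last k) (S.mulEq.map emb3)⟩ with hS'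
  have hiff : ∀ y : Fin (k+1) → ℤ,
      S'.Solves y ↔ S.Solves (y ∘ Fin.castSucc) ∧
        y (Fin.last k) = y i.castSucc * y i.castSucc := by
    intro y
    simp only [SystemEn.Solves, hS', Finset.forall_mem_map, Finset.forall_mem_insert,
      Function.Embedding.prodMap, Function.Embedding.coeFn_mk, Fin.castSuccEmb_apply,
      Function.comp_apply, Prod.map]
    constructor
    · rintro ⟨h1, h2, h3, h4⟩
      exact ⟨⟨h1, h2, h4⟩, h3.symm⟩
    · rintro ⟨⟨h1, h2, h4⟩, h3⟩
      exact ⟨h1, h2, h3.symm, h4⟩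
  have hsub : (fun y : Fin (k+1) → ℤ => y ∘ Fin.castSucc) '' {y | S'.Solves y} ⊆
      {x | S.Solves x} := by
    rintro _ ⟨y, hy, rfl⟩
    exact ((hiff y).1 hy).1
  have hinj : Set.InjOn (fun y : Fin (k+1) → ℤ => y ∘ Fin.castSucc) {y | S'.Solves y} := by
    intro y1 h1 y2 h2 heq
    have e1 := ((hiff y1).1 h1).2
    have e2 := ((hiff y2).1 h2).2
    funext j
    refine Fin.lastCases ?_ ?_ j
    · rw [e1, e2]
      have : ∀ j : Fin k, y1 j.castSucc = y2 j.castSucc := fun j => congrFun heq j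
      rw [this]
    · intro j; exact congrFun heq j
  have hfin' : {y : Fin (k+1) → ℤ | S'.Solves y}.Finite :=
    Set.Finite.of_finite_image (hfin.subset hsub) hinj
  set y0 : Fin (k+1) → ℤ := Fin.snoc x (x i * x i) with hy0
  have hy0s : S'.Solves y0 := by
    rw [hiff]
    constructor
    · have : y0 ∘ Fin.castSucc = x := by
        funext j; simp [hy0, Fin.snoc_castSucc]
      rw [this]; exact hx
    · simp [hy0, Fin.snoc_castSucc, Fin.snoc_last]
  have := fBound_spec S' hfin' hy0s (Fin.last k)
  have hval : y0 (Fin.last k) = x i * x i := by simp [hy0, Fin.snoc_last]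
  rw [hval, abs_mul] at this
  rw [hi] at this
  have : ((fBound k : ℤ))^2 ≤ (fBound (k+1) : ℤ) := by rw [sq]; exact this
  exact_mod_cast this

lemma two_le_fBound (k : ℕ) (hk : 2 ≤ k) : 2 ≤ fBound k := by
  induction k with
  | zero => omega
  | succ n ih =>
    rcases Nat.lt_or_ge n 2 with h | h
    · interval_cases n
      · omega
      · exact two_le_fBound_two
    · have h2 := ih h
      have := fBound_sq_le n (by omega)
      nlinarith

lemma fBound_lt_succ (k : ℕ) (hk : 2 ≤ k) : fBound k < fBound (k+1) := by
  have h2 := two_le_fBound k hk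
  have := fBound_sq_le k (by omega)
  nlinarith

lemma fBound_lt_of_lt {m u : ℕ} (hm : 2 ≤ m) (h : m < u) : fBound m < fBound u := by
  induction u with
  | zero => omega
  | succ n ih =>
    rcases Nat.lt_or_ge m n with h' | h'
    · exact lt_trans (ih h') (fBound_lt_succ n (by omega))
    · have : m = n := by omega
      subst this
      exact fBound_lt_succ m hm


abbrev SigA (r : ℕ) : Type := (Fin 2 ⊕ Fin r) ⊕ (Fin (r+1) × Fin 4)

def aIdx (r : ℕ) : SigA r := Sum.inl (Sum.inl 0)

def natIdx (r : ℕ) (j : Fin (r+1)) : SigA r :=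
  Sum.inl (Fin.cases (Sum.inl 1) Sum.inr j)

lemma natIdx_zero (r : ℕ) : natIdx r 0 = Sum.inl (Sum.inl 1) := by simp [natIdx]

lemma natIdx_succ (r : ℕ) (j : Fin r) : natIdx r j.succ = Sum.inl (Sum.inr j) := by
  simp [natIdx]

def sqT (r : ℕ) (j : Fin (r+1)) : Term (SigA r) :=
  .add (.add (.mul (.var (Sum.inr (j,0))) (.var (Sum.inr (j,0))))
             (.mul (.var (Sum.inr (j,1))) (.var (Sum.inr (j,1)))))
       (.add (.mul (.var (Sum.inr (j,2))) (.var (Sum.inr (j,2))))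
             (.mul (.var (Sum.inr (j,3))) (.var (Sum.inr (j,3)))))

lemma sqT_eval (r : ℕ) (ρ : SigA r → ℤ) (j : Fin (r+1)) :
    Term.eval ρ (sqT r j) = ρ (Sum.inr (j,0))^2 + ρ (Sum.inr (j,1))^2 +
      ρ (Sum.inr (j,2))^2 + ρ (Sum.inr (j,3))^2 := by
  simp [sqT, Term.eval]; ring


open MvPolynomial

/-- for every `r` and every polynomial `W`, one can find a positive
integer `v` such that if `W` gives a Diophantine representation of `f`, then for
every integer `u ≥ v` the equation `W(u, f(u), y₁, …, y_r) = 0` has infinitely many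
solutions in non-negative integers `y₁, …, y_r`. -/
theorem stmt5 (r : ℕ) (W : MvPolynomial (Fin 2 ⊕ Fin r) ℤ) :
    ∃ v : ℕ, 0 < v ∧
      ((∀ a b : ℕ,
          (1 ≤ a ∧ b = fBound a) ↔
            ∃ y : Fin r → ℕ,
              eval (Sum.elim ![(a : ℤ), (b : ℤ)] fun j => (y j : ℤ)) W = 0) →
        ∀ u : ℕ, v ≤ u →
          {y : Fin r → ℕ |
            eval (Sum.elim ![(u : ℤ), (fBound u : ℤ)] fun j => (y j : ℤ)) W = 0}.Infinite) := by
  classical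
  obtain ⟨T₁, T₂, hT⟩ :=
    exists_terms ((MvPolynomial.rename Sum.inl W) : MvPolynomial (SigA r) ℤ)
  set C : ℕ := Fintype.card (SigA r) + (T₁.cl.card + T₂.cl.card) +
      (List.ofFn (fun j : Fin (r+1) =>
        (Term.var (natIdx r j) : Term (SigA r)).cl.card + (sqT r j).cl.card)).sum + 7 with hC
  refine ⟨2 ^ (C + 12), pow_pos (by norm_num) _, ?_⟩
  intro H u hu
  have hu1 : 1 ≤ u := le_trans Nat.one_le_two_pow hu
  set ps : List (Term (SigA r) × Term (SigA r)) :=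
    (T₁, T₂) :: (Term.var (aIdx r), Term.num u) ::
      (List.ofFn fun j : Fin (r+1) => (Term.var (natIdx r j), sqT r j)) with hps
  -- size bound
  have hcard : nOf ps ≤ C + 5 * Nat.log 2 u := by
    rw [nOf_eq]
    have h1 := vsOf_card_le ps
    have hmap : (ps.map (fun p : Term (SigA r) × Term (SigA r) =>
        p.1.cl.card + p.2.cl.card)).sum =
        (T₁.cl.card + T₂.cl.card) +
        ((Term.var (aIdx r) : Term (SigA r)).cl.card + (Term.num u : Term (SigA r)).cl.card) +
        (List.ofFn (fun j : Fin (r+1) =>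
          (Term.var (natIdx r j) : Term (SigA r)).cl.card + (sqT r j).cl.card)).sum := by
      rw [hps]
      simp only [List.map_cons, List.sum_cons, List.map_ofFn]
      ring_nf
      rfl
    have hvar1 : (Term.var (aIdx r) : Term (SigA r)).cl.card = 1 := by
      simp [Term.cl]
    have hnum := Term.num_cl_card (σ := SigA r) u
    omega
  have hnu : nOf ps < u := by
    have := pow_gt C u hu
    omega
  have hn2 : 2 ≤ nOf ps := by
    rw [nOf_eq]
    have : 0 < (vsOf ps).card := Finset.card_pos.mpr ⟨_, var_mem_vsOf ps (aIdx r)⟩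
    omega
  by_contra hinf
  rw [Set.not_infinite] at hinf
  -- characterize the condition
  have hcond_iff : ∀ ρ : SigA r → ℤ, condOf ps ρ ↔
      (MvPolynomial.eval (ρ ∘ Sum.inl) W = 0 ∧ ρ (aIdx r) = (u : ℤ) ∧
        ∀ j : Fin (r+1), ρ (natIdx r j) =
          ρ (Sum.inr (j,0))^2 + ρ (Sum.inr (j,1))^2 + ρ (Sum.inr (j,2))^2 +
            ρ (Sum.inr (j,3))^2) := by
    intro ρ
    unfold condOf
    rw [hps]
    simp only [List.mem_cons, List.mem_ofFn]
    constructor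
    · intro h
      refine ⟨?_, ?_, ?_⟩
      · have h1 := h (T₁, T₂) (Or.inl rfl)
        have h2 := hT ρ
        rw [MvPolynomial.eval_rename] at h2
        simp only at h1
        omega
      · have h2 := h _ (Or.inr (Or.inl rfl))
        simp only [Term.eval] at h2
        rw [Term.num_eval ρ u hu1] at h2
        exact h2
      · intro j
        have h3 := h _ (Or.inr (Or.inr ⟨j, rfl⟩))
        simp only [Term.eval] at h3
        rw [h3]; exact sqT_eval r ρ j
    · rintro ⟨h1, h2, h3⟩ p hp
      rcases hp with rfl | rfl | ⟨j, rfl⟩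
      · have h2' := hT ρ
        rw [MvPolynomial.eval_rename] at h2'
        simp only
        omega
      · simp only [Term.eval]
        rw [Term.num_eval ρ u hu1]
        exact h2
      · simp only [Term.eval]
        rw [h3 j]; exact (sqT_eval r ρ j).symm
  -- facts about condition solutions
  have hfacts : ∀ ρ : SigA r → ℤ, condOf ps ρ →
      (∀ j, 0 ≤ ρ (natIdx r j)) ∧ ρ (natIdx r 0) = (fBound u : ℤ) ∧
        (fun j : Fin r => (ρ (natIdx r j.succ)).toNat) ∈
          {y : Fin r → ℕ |
            eval (Sum.elim ![(u : ℤ), (fBound u : ℤ)] fun j => (y j : ℤ)) W = 0} := by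
    intro ρ hρ
    rw [hcond_iff] at hρ
    obtain ⟨h1, h2, h3⟩ := hρ
    have hpos : ∀ j, 0 ≤ ρ (natIdx r j) := by
      intro j
      rw [h3 j]
      positivity
    have hev : MvPolynomial.eval
        (Sum.elim ![(u : ℤ), (((ρ (natIdx r 0)).toNat : ℕ) : ℤ)]
          fun j : Fin r => (((ρ (natIdx r j.succ)).toNat : ℕ) : ℤ)) W = 0 := by
      have hfun : (Sum.elim ![(u : ℤ), (((ρ (natIdx r 0)).toNat : ℕ) : ℤ)]
          fun j : Fin r => (((ρ (natIdx r j.succ)).toNat : ℕ) : ℤ)) = ρ ∘ Sum.inl := by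
        funext s
        rcases s with i | j
        · fin_cases i
          · simp only [Sum.elim_inl, Function.comp_apply]
            rw [← h2]
            try rfl
          · simp only [Sum.elim_inl, Function.comp_apply]
            rw [Int.toNat_of_nonneg (hpos 0)]
            rw [natIdx_zero]
            try rfl
        · simp only [Sum.elim_inr, Function.comp_apply]
          rw [Int.toNat_of_nonneg (hpos j.succ)]
          rw [natIdx_succ]
          try rfl
      rw [hfun, h1]
    have hH := (H u ((ρ (natIdx r 0)).toNat)).mpr ⟨_, hev⟩
    have hb : ρ (natIdx r 0) = (fBound u : ℤ) := by
      rw [← hH.2, Int.toNat_of_nonneg (hpos 0)]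
    refine ⟨hpos, hb, ?_⟩
    rw [Set.mem_setOf_eq]
    rw [← hb]
    rw [← Int.toNat_of_nonneg (hpos 0)] at hev ⊢
    exact hev
  -- finiteness of the condition set
  have hfinCond : {ρ : SigA r → ℤ | condOf ps ρ}.Finite := by
    set M : ℤ := ((max (fBound u)
      (hinf.toFinset.sup (fun y => Finset.univ.sup (fun j => y j))) : ℕ) : ℤ) with hM
    have hM0 : 0 ≤ M := by positivity
    have hGinj : Set.InjOn (fun (ρ : SigA r → ℤ) (q : Fin (r+1) × Fin 4) => ρ (Sum.inr q))
        {ρ : SigA r → ℤ | condOf ps ρ} := by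
      intro ρ1 hρ1 ρ2 hρ2 heq
      rw [Set.mem_setOf_eq, hcond_iff] at hρ1 hρ2
      have heq' : ∀ q : Fin (r+1) × Fin 4, ρ1 (Sum.inr q) = ρ2 (Sum.inr q) :=
        fun q => congrFun heq q
      have hnat : ∀ j, ρ1 (natIdx r j) = ρ2 (natIdx r j) := by
        intro j
        rw [hρ1.2.2 j, hρ2.2.2 j, heq' (j,0), heq' (j,1), heq' (j,2), heq' (j,3)]
      funext s
      rcases s with (i | j) | q
      · fin_cases i
        · exact hρ1.2.1.trans hρ2.2.1.symm
        · have := hnat 0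
          rw [natIdx_zero] at this
          exact this
      · have := hnat (Fin.succ j)
        rw [natIdx_succ] at this
        exact this
      · exact heq' q
    have himg : (fun (ρ : SigA r → ℤ) (q : Fin (r+1) × Fin 4) => ρ (Sum.inr q)) ''
        {ρ : SigA r → ℤ | condOf ps ρ} ⊆
        Set.univ.pi (fun _ : Fin (r+1) × Fin 4 => Set.Icc (-(M+1)) (M+1)) := by
      rintro _ ⟨ρ, hρ, rfl⟩
      obtain ⟨hpos, hb, hY⟩ := hfacts ρ hρ
      rw [Set.mem_setOf_eq, hcond_iff] at hρ
      intro q _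
      obtain ⟨j, i⟩ := q
      have hsq : ρ (Sum.inr (j,i))^2 ≤ ρ (natIdx r j) := by
        rw [hρ.2.2 j]
        have s0 := sq_nonneg (ρ (Sum.inr (j,(0 : Fin 4))))
        have s1 := sq_nonneg (ρ (Sum.inr (j,(1 : Fin 4))))
        have s2 := sq_nonneg (ρ (Sum.inr (j,(2 : Fin 4))))
        have s3 := sq_nonneg (ρ (Sum.inr (j,(3 : Fin 4))))
        have hi : i = 0 ∨ i = 1 ∨ i = 2 ∨ i = 3 := by fin_cases i <;> simp
        rcases hi with rfl | rfl | rfl | rfl <;> linarith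
      have hval : ρ (natIdx r j) ≤ M := by
        induction j using Fin.cases with
        | zero =>
          rw [hb, hM]
          exact_mod_cast Nat.le_max_left _ _
        | succ j' =>
          set yv := fun j : Fin r => (ρ (natIdx r j.succ)).toNat with hyv
          have h1 : ρ (natIdx r j'.succ) = (yv j' : ℤ) := by
            rw [hyv]
            simp [Int.toNat_of_nonneg (hpos j'.succ)]
          rw [h1]
          have h2 : yv j' ≤ Finset.univ.sup (fun j => yv j) :=
            Finset.le_sup (Finset.mem_univ j')
          have h3 : Finset.univ.sup (fun j => yv j) ≤
              hinf.toFinset.sup (fun y => Finset.univ.sup (fun j => y j)) := by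
            refine Finset.le_sup (f := fun y : Fin r → ℕ => Finset.univ.sup (fun j => y j)) ?_
            rw [Set.Finite.mem_toFinset]
            exact hY
          rw [hM]
          have : yv j' ≤ max (fBound u)
              (hinf.toFinset.sup (fun y => Finset.univ.sup (fun j => y j))) :=
            le_trans (le_trans h2 h3) (Nat.le_max_right _ _)
          exact_mod_cast this
      have hsqM : ρ (Sum.inr (j,i))^2 ≤ M := le_trans hsq hval
      constructor
      · nlinarith [sq_nonneg (ρ (Sum.inr (j,i)) + (M+1))]
      · nlinarith [sq_nonneg (ρ (Sum.inr (j,i)) - (M+1))]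
    have hpifin : (Set.univ.pi
        (fun _ : Fin (r+1) × Fin 4 => Set.Icc (-(M+1)) (M+1))).Finite :=
      Set.Finite.pi (fun _ => Set.finite_Icc _ _)
    exact Set.Finite.of_finite_image (hpifin.subset himg) hGinj
  have hfinS := sols_finite ps hfinCond
  -- the witness solution
  obtain ⟨y1, hy1⟩ := (H u (fBound u)).mp ⟨hu1, rfl⟩
  set valj : Fin (r+1) → ℕ := Fin.cases (fBound u) y1 with hvalj
  have h4 : ∀ j : Fin (r+1), ∃ p : Fin 4 → ℕ,
      p 0^2 + p 1^2 + p 2^2 + p 3^2 = valj j := by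
    intro j
    obtain ⟨a, b, c, d, h⟩ := Nat.sum_four_squares (valj j)
    exact ⟨![a,b,c,d], by simpa using h⟩
  choose P hP using h4
  set ρ0 : SigA r → ℤ :=
    Sum.elim (Sum.elim ![(u : ℤ), (fBound u : ℤ)] (fun j => (y1 j : ℤ)))
      (fun q => (P q.1 q.2 : ℤ)) with hρ0
  have hvalρ : ∀ j : Fin (r+1), ρ0 (natIdx r j) = (valj j : ℤ) := by
    intro j
    induction j using Fin.cases with
    | zero => rw [natIdx_zero, hvalj]; simp [hρ0]
    | succ j' => rw [natIdx_succ, hvalj]; simp [hρ0]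
  have hcond0 : condOf ps ρ0 := by
    rw [hcond_iff]
    refine ⟨?_, ?_, ?_⟩
    · rw [show ρ0 ∘ Sum.inl = Sum.elim ![(u : ℤ), (fBound u : ℤ)]
        (fun j => (y1 j : ℤ)) from Sum.elim_comp_inl _ _]
      exact hy1
    · rw [aIdx, hρ0]; simp
    · intro j
      rw [hvalρ j]
      have := hP j
      have hc : ((P j 0^2 + P j 1^2 + P j 2^2 + P j 3^2 : ℕ) : ℤ) = (valj j : ℤ) := by
        exact_mod_cast congrArg (fun n : ℕ => (n : ℤ)) this
      push_cast at hc
      rw [← hc, hρ0]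
      simp
  have hx0 : (sysOf ps).Solves (ΨOf ps ρ0) := by
    rw [solves_sysOf_iff]
    exact ⟨ρ0, hcond0, rfl⟩
  have hvb : Term.var (natIdx r 0) ∈ vsOf ps := var_mem_vsOf ps _
  have hspec := fBound_spec (sysOf ps) hfinS hx0 ((eV ps) (Sum.inl ⟨_, hvb⟩))
  rw [ΨOf_val ps ρ0 hvb] at hspec
  have hval0 : Term.eval ρ0 (Term.var (natIdx r 0)) = (fBound u : ℤ) := by
    show ρ0 (natIdx r 0) = _
    rw [hvalρ 0, hvalj]
    simp
  rw [hval0] at hspec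
  have h5 : (fBound u : ℤ) ≤ (fBound (nOf ps) : ℤ) := by
    rwa [abs_of_nonneg (by positivity)] at hspec
  have h6 : fBound u ≤ fBound (nOf ps) := by exact_mod_cast h5
  have h7 := fBound_lt_of_lt hn2 hnu
  omega
end

section
/- There is no finite-fold Diophantine representation of the function g. That is, there do not exist r ∈ ℕ and a polynomial W ∈ ℤ[x₁, x₂, y₁,…,y_r] such that both: (i) for all a, b ∈ ℕ, (a ≥ 1 and b = g(a)) holds if and only if there exist y₁,…,y_r ∈ ℕ with W(a, b, y₁,…,y_r) = 0, and (ii) for every (a, b) ∈ ℕ² the set {(y₁,…,y_r) ∈ ℕʳ : W(a, b, y₁,…,y_r) = 0} is finite. -/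
open MvPolynomial

/-! ### Basic equation lists -/

inductive Eqn (α : Type) where
  | one (i : α)
  | add (i j k : α)
  | mul (i j k : α)

def Eqn.Holds {α : Type} (x : α → ℤ) : Eqn α → Prop
  | .one i => x i = 1
  | .add i j k => x i + x j = x k
  | .mul i j k => x i * x j = x k

def Eqn.map {α β : Type} (f : α → β) : Eqn α → Eqn β
  | .one i => .one (f i)
  | .add i j k => .add (f i) (f j) (f k)
  | .mul i j k => .mul (f i) (f j) (f k)

lemma Eqn.holds_map {α β : Type} (f : α → β) (x : β → ℤ) (q : Eqn α) :
    (q.map f).Holds x ↔ q.Holds (x ∘ f) := by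
  cases q <;> simp [Eqn.map, Eqn.Holds]

def SolvesL {α : Type} (L : List (Eqn α)) (x : α → ℤ) : Prop := ∀ q ∈ L, q.Holds x

lemma solvesL_append {α : Type} {L₁ L₂ : List (Eqn α)} {x : α → ℤ} :
    SolvesL (L₁ ++ L₂) x ↔ SolvesL L₁ x ∧ SolvesL L₂ x := by
  simp [SolvesL, or_imp, forall_and]

lemma solvesL_map {α β : Type} {L : List (Eqn α)} (f : α → β) (x : β → ℤ) :
    SolvesL (L.map (Eqn.map f)) x ↔ SolvesL L (x ∘ f) := by
  simp only [SolvesL, List.mem_map]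
  constructor
  · intro h q hq; rw [← Eqn.holds_map f]; exact h _ ⟨q, hq, rfl⟩
  · rintro h q ⟨p, hp, rfl⟩; rw [Eqn.holds_map]; exact h p hp

/-! ### Expressions -/

inductive Expr (σ : Type) where
  | one
  | var (s : σ)
  | add (e₁ e₂ : Expr σ)
  | mul (e₁ e₂ : Expr σ)

def Expr.eval {σ : Type} (v : σ → ℤ) : Expr σ → ℤ
  | .one => 1
  | .var s => v s
  | .add e₁ e₂ => e₁.eval v + e₂.eval v
  | .mul e₁ e₂ => e₁.eval v * e₂.eval v

def Expr.esize {σ : Type} : Expr σ → ℕ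
  | .one => 1
  | .var _ => 1
  | .add e₁ e₂ => e₁.esize + e₂.esize + 1
  | .mul e₁ e₂ => e₁.esize + e₂.esize + 1

lemma Expr.one_le_esize {σ : Type} (e : Expr σ) : 1 ≤ e.esize := by
  cases e <;> simp [Expr.esize] <;> omega

def Expr.substE {σ τ : Type} (f : σ → Expr τ) : Expr σ → Expr τ
  | .one => .one
  | .var s => f s
  | .add e₁ e₂ => .add (e₁.substE f) (e₂.substE f)
  | .mul e₁ e₂ => .mul (e₁.substE f) (e₂.substE f)

lemma Expr.eval_substE {σ τ : Type} (f : σ → Expr τ) (v : τ → ℤ) (e : Expr σ) :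
    (e.substE f).eval v = e.eval (fun s => (f s).eval v) := by
  induction e with
  | one => rfl
  | var s => rfl
  | add e₁ e₂ ih₁ ih₂ => simp [Expr.substE, Expr.eval, ih₁, ih₂]
  | mul e₁ e₂ ih₁ ih₂ => simp [Expr.substE, Expr.eval, ih₁, ih₂]

lemma Expr.esize_substE {σ τ : Type} (f : σ → Expr τ) {B : ℕ} (hB : 1 ≤ B)
    (hf : ∀ s, (f s).esize ≤ B) (e : Expr σ) : (e.substE f).esize ≤ e.esize * B := by
  induction e with
  | one => simpa [Expr.substE, Expr.esize] using hB
  | var s => simpa [Expr.substE, Expr.esize] using hf s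
  | add e₁ e₂ ih₁ ih₂ => simp only [Expr.substE, Expr.esize]; nlinarith
  | mul e₁ e₂ ih₁ ih₂ => simp only [Expr.substE, Expr.esize]; nlinarith

/-! ### Binary positive constants: `(posE m).eval v = m + 1` -/

def posE {σ : Type} : ℕ → Expr σ
  | 0 => .one
  | (m+1) =>
    if m % 2 = 0 then .mul (.add .one .one) (posE (m/2))
    else .add .one (.mul (.add .one .one) (posE (m/2)))
termination_by m => m
decreasing_by all_goals omega

lemma posE_eval {σ : Type} (v : σ → ℤ) : ∀ m : ℕ, (posE m : Expr σ).eval v = (m : ℤ) + 1 := by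
  intro m
  induction m using Nat.strong_induction_on with
  | _ m ih =>
    match m with
    | 0 => simp [posE, Expr.eval]
    | (k+1) =>
      rw [posE]
      have hk := ih (k/2) (by omega)
      split_ifs with h <;> simp only [Expr.eval, hk] <;> omega

lemma posE_esize {σ : Type} : ∀ m : ℕ, (posE m : Expr σ).esize ≤ 6 * Nat.log 2 (m+1) + 1 := by
  intro m
  induction m using Nat.strong_induction_on with
  | _ m ih =>
    match m with
    | 0 => simp [posE, Expr.esize]
    | (k+1) =>
      rw [posE]
      have hk := ih (k/2) (by omega)
      have hlog : Nat.log 2 (k/2 + 1) + 1 ≤ Nat.log 2 (k + 2) := by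
        have h1 : Nat.log 2 ((k/2 + 1) * 2) = Nat.log 2 (k/2 + 1) + 1 :=
          Nat.log_mul_base (by norm_num) (by omega)
        have h2 : (k/2 + 1) * 2 ≤ k + 2 := by omega
        calc Nat.log 2 (k/2 + 1) + 1 = Nat.log 2 ((k/2 + 1) * 2) := h1.symm
          _ ≤ Nat.log 2 (k + 2) := Nat.log_mono_right h2
      have he : k + 1 + 1 = k + 2 := rfl
      rw [he]
      split_ifs with h <;> simp only [Expr.esize] <;> omega

open MvPolynomial in
/-- Every integer multivariate polynomial is a difference of two `Expr`s. -/
lemma exprSplit {σ : Type} (W : MvPolynomial σ ℤ) :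
    ∃ e₁ e₂ : Expr σ, ∀ v : σ → ℤ, eval v W = e₁.eval v - e₂.eval v := by
  induction W using MvPolynomial.induction_on with
  | C a =>
    refine ⟨posE a.toNat, posE (-a).toNat, fun v => ?_⟩
    rw [posE_eval, posE_eval]
    simp only [eval_C]
    omega
  | add p q hp hq =>
    obtain ⟨p₁, p₂, hp⟩ := hp
    obtain ⟨q₁, q₂, hq⟩ := hq
    exact ⟨.add p₁ q₁, .add p₂ q₂, fun v => by simp [Expr.eval, hp, hq]; ring⟩
  | mul_X p i hp =>
    obtain ⟨p₁, p₂, hp⟩ := hp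
    exact ⟨.mul p₁ (.var i), .mul p₂ (.var i), fun v => by
      simp [Expr.eval, hp]; ring⟩

/-! ### Compilation of expressions into equation lists -/

structure Comp (σ : Type) where
  m : ℕ
  ι : Type
  eqv : ι ≃ Fin m
  eqs : List (Eqn (σ ⊕ ι))
  out : σ ⊕ ι

def sumFinEquiv {A B : Type} {a b : ℕ} (ea : A ≃ Fin a) (eb : B ≃ Fin b) :
    A ⊕ B ≃ Fin (a + b) := (ea.sumCongr eb).trans finSumFinEquiv

def reA {σ : Type} {ι₁ ι₂ : Type} : σ ⊕ ι₁ → σ ⊕ (ι₁ ⊕ (ι₂ ⊕ Fin 1)) :=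
  Sum.map id Sum.inl

def reB {σ : Type} {ι₁ ι₂ : Type} : σ ⊕ ι₂ → σ ⊕ (ι₁ ⊕ (ι₂ ⊕ Fin 1)) :=
  Sum.map id (Sum.inr ∘ Sum.inl)

def compile {σ : Type} : Expr σ → Comp σ
  | .one => ⟨1, Fin 1, Equiv.refl _, [.one (.inr 0)], .inr 0⟩
  | .var s => ⟨0, Fin 0, Equiv.refl _, [], .inl s⟩
  | .add e₁ e₂ =>
    let c₁ := compile e₁
    let c₂ := compile e₂
    ⟨c₁.m + (c₂.m + 1), c₁.ι ⊕ (c₂.ι ⊕ Fin 1),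
      sumFinEquiv c₁.eqv (sumFinEquiv c₂.eqv (Equiv.refl (Fin 1))),
      c₁.eqs.map (Eqn.map reA) ++ c₂.eqs.map (Eqn.map reB) ++
        [.add (reA c₁.out) (reB c₂.out) (.inr (.inr (.inr 0)))],
      .inr (.inr (.inr 0))⟩
  | .mul e₁ e₂ =>
    let c₁ := compile e₁
    let c₂ := compile e₂
    ⟨c₁.m + (c₂.m + 1), c₁.ι ⊕ (c₂.ι ⊕ Fin 1),
      sumFinEquiv c₁.eqv (sumFinEquiv c₂.eqv (Equiv.refl (Fin 1))),
      c₁.eqs.map (Eqn.map reA) ++ c₂.eqs.map (Eqn.map reB) ++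
        [.mul (reA c₁.out) (reB c₂.out) (.inr (.inr (.inr 0)))],
      .inr (.inr (.inr 0))⟩

lemma compile_m_le {σ : Type} (e : Expr σ) : (compile e).m ≤ e.esize := by
  induction e with
  | one => simp [compile, Expr.esize]
  | var s => simp [compile, Expr.esize]
  | add e₁ e₂ ih₁ ih₂ => simp only [compile, Expr.esize]; omega
  | mul e₁ e₂ ih₁ ih₂ => simp only [compile, Expr.esize]; omega

lemma comp_reA_inl {σ ι₁ ι₂ : Type} (x : σ ⊕ (ι₁ ⊕ (ι₂ ⊕ Fin 1)) → ℤ) :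
    (x ∘ reA) ∘ (Sum.inl : σ → σ ⊕ ι₁) = x ∘ Sum.inl := by
  funext s; rfl

lemma comp_reB_inl {σ ι₁ ι₂ : Type} (x : σ ⊕ (ι₁ ⊕ (ι₂ ⊕ Fin 1)) → ℤ) :
    (x ∘ reB) ∘ (Sum.inl : σ → σ ⊕ ι₂) = x ∘ Sum.inl := by
  funext s; rfl

/-- Soundness: any solution of the compiled system computes the value of `e` at the output. -/
lemma compile_sound {σ : Type} (e : Expr σ) :
    ∀ x : σ ⊕ (compile e).ι → ℤ, SolvesL (compile e).eqs x →
      x (compile e).out = e.eval (x ∘ Sum.inl) := by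
  induction e with
  | one => intro x hx; exact hx _ (List.mem_singleton.mpr rfl)
  | var s => intro x hx; rfl
  | add e₁ e₂ ih₁ ih₂ =>
    intro x hx
    simp only [compile] at hx ⊢
    erw [solvesL_append, solvesL_append] at hx
    obtain ⟨⟨h₁, h₂⟩, h₃⟩ := hx
    erw [solvesL_map] at h₁ h₂
    have e₁v := ih₁ _ h₁
    have e₂v := ih₂ _ h₂
    erw [comp_reA_inl] at e₁v
    erw [comp_reB_inl] at e₂v
    have := h₃ _ (List.mem_singleton.mpr rfl)
    simp only [Eqn.Holds] at this
    rw [Expr.eval, ← e₁v, ← e₂v, ← this]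
    rfl
  | mul e₁ e₂ ih₁ ih₂ =>
    intro x hx
    simp only [compile] at hx ⊢
    erw [solvesL_append, solvesL_append] at hx
    obtain ⟨⟨h₁, h₂⟩, h₃⟩ := hx
    erw [solvesL_map] at h₁ h₂
    have e₁v := ih₁ _ h₁
    have e₂v := ih₂ _ h₂
    erw [comp_reA_inl] at e₁v
    erw [comp_reB_inl] at e₂v
    have := h₃ _ (List.mem_singleton.mpr rfl)
    simp only [Eqn.Holds] at this
    rw [Expr.eval, ← e₁v, ← e₂v, ← this]
    rfl

/-- Existence: every assignment of the free variables extends to a solution. -/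
lemma compile_exists {σ : Type} (e : Expr σ) :
    ∀ v : σ → ℤ, ∃ x : σ ⊕ (compile e).ι → ℤ,
      x ∘ Sum.inl = v ∧ SolvesL (compile e).eqs x := by
  induction e with
  | one =>
    intro v
    refine ⟨Sum.elim v 1, rfl, ?_⟩
    intro q hq
    simp only [compile, List.mem_singleton] at hq
    obtain rfl := List.mem_singleton.mp hq; simp [Eqn.Holds]; rfl
  | var s =>
    intro v
    exact ⟨Sum.elim v Fin.elim0, rfl, by intro q hq; simp [compile] at hq; cases hq⟩
  | add e₁ e₂ ih₁ ih₂ =>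
    intro v
    obtain ⟨x₁, hx₁v, hx₁⟩ := ih₁ v
    obtain ⟨x₂, hx₂v, hx₂⟩ := ih₂ v
    refine ⟨Sum.elim v (Sum.elim (fun a => x₁ (Sum.inr a))
      (Sum.elim (fun b => x₂ (Sum.inr b)) (fun _ => x₁ (compile e₁).out + x₂ (compile e₂).out))),
      rfl, ?_⟩
    set x := Sum.elim v (Sum.elim (fun a => x₁ (Sum.inr a))
      (Sum.elim (fun b => x₂ (Sum.inr b)) (fun _ => x₁ (compile e₁).out + x₂ (compile e₂).out)))
      with hxdef
    have hA : x ∘ reA = x₁ := by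
      funext s; cases s with
      | inl s => simp [hxdef, reA, ← hx₁v]
      | inr a => rfl
    have hB : x ∘ reB = x₂ := by
      funext s; cases s with
      | inl s => simp [hxdef, reB, ← hx₂v]
      | inr a => rfl
    show SolvesL (compile (e₁.add e₂)).eqs x
    simp only [compile]
    rw [solvesL_append, solvesL_append, solvesL_map, solvesL_map, hA, hB]
    refine ⟨⟨hx₁, hx₂⟩, ?_⟩
    intro q hq
    simp only [List.mem_singleton] at hq
    subst hq
    show x (reA (compile e₁).out) + x (reB (compile e₂).out) = x _
    rw [show x (reA (compile e₁).out) = (x ∘ reA) (compile e₁).out from rfl,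
      show x (reB (compile e₂).out) = (x ∘ reB) (compile e₂).out from rfl, hA, hB]
    rfl
  | mul e₁ e₂ ih₁ ih₂ =>
    intro v
    obtain ⟨x₁, hx₁v, hx₁⟩ := ih₁ v
    obtain ⟨x₂, hx₂v, hx₂⟩ := ih₂ v
    refine ⟨Sum.elim v (Sum.elim (fun a => x₁ (Sum.inr a))
      (Sum.elim (fun b => x₂ (Sum.inr b)) (fun _ => x₁ (compile e₁).out * x₂ (compile e₂).out))),
      rfl, ?_⟩
    set x := Sum.elim v (Sum.elim (fun a => x₁ (Sum.inr a))
      (Sum.elim (fun b => x₂ (Sum.inr b)) (fun _ => x₁ (compile e₁).out * x₂ (compile e₂).out)))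
      with hxdef
    have hA : x ∘ reA = x₁ := by
      funext s; cases s with
      | inl s => simp [hxdef, reA, ← hx₁v]
      | inr a => rfl
    have hB : x ∘ reB = x₂ := by
      funext s; cases s with
      | inl s => simp [hxdef, reB, ← hx₂v]
      | inr a => rfl
    show SolvesL (compile (e₁.mul e₂)).eqs x
    simp only [compile]
    rw [solvesL_append, solvesL_append, solvesL_map, solvesL_map, hA, hB]
    refine ⟨⟨hx₁, hx₂⟩, ?_⟩
    intro q hq
    simp only [List.mem_singleton] at hq
    subst hq
    show x (reA (compile e₁).out) * x (reB (compile e₂).out) = x _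
    rw [show x (reA (compile e₁).out) = (x ∘ reA) (compile e₁).out from rfl,
      show x (reB (compile e₂).out) = (x ∘ reB) (compile e₂).out from rfl, hA, hB]
    rfl

/-- Uniqueness: solutions are determined by the free variables. -/
lemma compile_unique {σ : Type} (e : Expr σ) :
    ∀ x x' : σ ⊕ (compile e).ι → ℤ, SolvesL (compile e).eqs x → SolvesL (compile e).eqs x' →
      x ∘ Sum.inl = x' ∘ Sum.inl → x = x' := by
  induction e with
  | one =>
    intro x x' hx hx' hv
    funext s
    cases s with
    | inl s => exact congrFun hv s
    | inr i =>
      have h1 := hx _ (List.mem_singleton.mpr rfl)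
      have h2 := hx' _ (List.mem_singleton.mpr rfl)
      simp only [Eqn.Holds] at h1 h2
      cases i with
      | mk val hlt =>
        interval_cases val
        exact h1.trans h2.symm
  | var s =>
    intro x x' hx hx' hv
    funext t
    cases t with
    | inl s => exact congrFun hv s
    | inr i => exact i.elim0
  | add e₁ e₂ ih₁ ih₂ =>
    intro x x' hx hx' hv
    simp only [compile] at hx hx'
    erw [solvesL_append, solvesL_append, solvesL_map, solvesL_map] at hx hx'
    obtain ⟨⟨h₁, h₂⟩, h₃⟩ := hx
    obtain ⟨⟨h₁', h₂'⟩, h₃'⟩ := hx'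
    have hvA : (x ∘ reA) ∘ Sum.inl = (x' ∘ reA) ∘ Sum.inl := by
      erw [comp_reA_inl, comp_reA_inl]; exact hv
    have hvB : (x ∘ reB) ∘ Sum.inl = (x' ∘ reB) ∘ Sum.inl := by
      erw [comp_reB_inl, comp_reB_inl]; exact hv
    have hAeq := ih₁ _ _ h₁ h₁' hvA
    have hBeq := ih₂ _ _ h₂ h₂' hvB
    funext s
    cases s with
    | inl s => exact congrFun hv s
    | inr i =>
      cases i with
      | inl a => exact congrFun hAeq (Sum.inr a)
      | inr b =>
        cases b with
        | inl b => exact congrFun hBeq (Sum.inr b)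
        | inr u =>
          have t1 := h₃ _ (List.mem_singleton.mpr rfl)
          have t2 := h₃' _ (List.mem_singleton.mpr rfl)
          simp only [Eqn.Holds] at t1 t2
          erw [Subsingleton.elim u 0, ← t1, ← t2,
            show x (reA (compile e₁).out) = (x ∘ reA) (compile e₁).out from rfl,
            show x (reB (compile e₂).out) = (x ∘ reB) (compile e₂).out from rfl,
            show x' (reA (compile e₁).out) = (x' ∘ reA) (compile e₁).out from rfl,
            show x' (reB (compile e₂).out) = (x' ∘ reB) (compile e₂).out from rfl,
            hAeq, hBeq]
          rfl
  | mul e₁ e₂ ih₁ ih₂ =>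
    intro x x' hx hx' hv
    simp only [compile] at hx hx'
    erw [solvesL_append, solvesL_append, solvesL_map, solvesL_map] at hx hx'
    obtain ⟨⟨h₁, h₂⟩, h₃⟩ := hx
    obtain ⟨⟨h₁', h₂'⟩, h₃'⟩ := hx'
    have hvA : (x ∘ reA) ∘ Sum.inl = (x' ∘ reA) ∘ Sum.inl := by
      erw [comp_reA_inl, comp_reA_inl]; exact hv
    have hvB : (x ∘ reB) ∘ Sum.inl = (x' ∘ reB) ∘ Sum.inl := by
      erw [comp_reB_inl, comp_reB_inl]; exact hv
    have hAeq := ih₁ _ _ h₁ h₁' hvA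
    have hBeq := ih₂ _ _ h₂ h₂' hvB
    funext s
    cases s with
    | inl s => exact congrFun hv s
    | inr i =>
      cases i with
      | inl a => exact congrFun hAeq (Sum.inr a)
      | inr b =>
        cases b with
        | inl b => exact congrFun hBeq (Sum.inr b)
        | inr u =>
          have t1 := h₃ _ (List.mem_singleton.mpr rfl)
          have t2 := h₃' _ (List.mem_singleton.mpr rfl)
          simp only [Eqn.Holds] at t1 t2
          erw [Subsingleton.elim u 0, ← t1, ← t2,
            show x (reA (compile e₁).out) = (x ∘ reA) (compile e₁).out from rfl,
            show x (reB (compile e₂).out) = (x ∘ reB) (compile e₂).out from rfl,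
            show x' (reA (compile e₁).out) = (x' ∘ reA) (compile e₁).out from rfl,
            show x' (reB (compile e₂).out) = (x' ∘ reB) (compile e₂).out from rfl,
            hAeq, hBeq]
          rfl

/-! ### From equation lists to `SystemEn` -/

def onePart {n : ℕ} : Eqn (Fin n) → Option (Fin n)
  | .one i => some i
  | _ => none

def addPart {n : ℕ} : Eqn (Fin n) → Option (Fin n × Fin n × Fin n)
  | .add i j k => some (i, j, k)
  | _ => none

def mulPart {n : ℕ} : Eqn (Fin n) → Option (Fin n × Fin n × Fin n)
  | .mul i j k => some (i, j, k)
  | _ => none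

def toSys {n : ℕ} (L : List (Eqn (Fin n))) : SystemEn n :=
  ⟨(L.filterMap onePart).toFinset, (L.filterMap addPart).toFinset,
    (L.filterMap mulPart).toFinset⟩

lemma toSys_solves {n : ℕ} (L : List (Eqn (Fin n))) (x : Fin n → ℤ) :
    (toSys L).Solves x ↔ SolvesL L x := by
  constructor
  · rintro ⟨h1, h2, h3⟩ q hq
    cases q with
    | one i =>
      refine h1 i ?_
      simp only [toSys, List.mem_toFinset, List.mem_filterMap]
      exact ⟨_, hq, rfl⟩
    | add i j k =>
      refine h2 (i, j, k) ?_
      simp only [toSys, List.mem_toFinset, List.mem_filterMap]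
      exact ⟨_, hq, rfl⟩
    | mul i j k =>
      refine h3 (i, j, k) ?_
      simp only [toSys, List.mem_toFinset, List.mem_filterMap]
      exact ⟨_, hq, rfl⟩
  · intro h
    refine ⟨?_, ?_, ?_⟩
    · intro i hi
      simp only [toSys, List.mem_toFinset, List.mem_filterMap] at hi
      obtain ⟨q, hq, hmatch⟩ := hi
      cases q <;> simp [onePart] at hmatch
      subst hmatch; exact h _ hq
    · intro t ht
      simp only [toSys, List.mem_toFinset, List.mem_filterMap] at ht
      obtain ⟨q, hq, hmatch⟩ := ht
      cases q <;> simp [addPart] at hmatch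
      obtain ⟨rfl, rfl, rfl⟩ := hmatch
      exact h _ hq
    · intro t ht
      simp only [toSys, List.mem_toFinset, List.mem_filterMap] at ht
      obtain ⟨q, hq, hmatch⟩ := ht
      cases q <;> simp [mulPart] at hmatch
      obtain ⟨rfl, rfl, rfl⟩ := hmatch
      exact h _ hq

/-! ### `gBound` is an upper bound for solution counts -/

instance instFiniteSystemEn (n : ℕ) : Finite (SystemEn n) := by
  have : Function.Surjective
      (fun t : Finset (Fin n) × Finset (Fin n × Fin n × Fin n) × Finset (Fin n × Fin n × Fin n) =>
        (⟨t.1, t.2.1, t.2.2⟩ : SystemEn n)) := by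
    rintro ⟨a, b, c⟩; exact ⟨(a, b, c), rfl⟩
  exact Finite.of_surjective _ this

lemma ncard_le_gBound {n : ℕ} (S : SystemEn n)
    (hfin : {x : Fin n → ℤ | S.Solves x}.Finite) :
    {x : Fin n → ℤ | S.Solves x}.ncard ≤ gBound n := by
  have hsub : {c : ℕ | ∃ S : SystemEn n, {x : Fin n → ℤ | S.Solves x}.Finite ∧
      {x : Fin n → ℤ | S.Solves x}.ncard = c} ⊆
      Set.range (fun S : SystemEn n => {x : Fin n → ℤ | S.Solves x}.ncard) := by
    rintro c ⟨S, _, rfl⟩; exact ⟨S, rfl⟩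
  have hbdd : BddAbove {c : ℕ | ∃ S : SystemEn n, {x : Fin n → ℤ | S.Solves x}.Finite ∧
      {x : Fin n → ℤ | S.Solves x}.ncard = c} :=
    ((Set.finite_range _).subset hsub).bddAbove
  exact le_csSup hbdd ⟨S, hfin, rfl⟩

/-! ### Misc number-theoretic helpers -/

lemma four_sq (m : ℕ) : ∃ f : Fin 4 → ℕ, (f 0)^2 + (f 1)^2 + (f 2)^2 + (f 3)^2 = m := by
  obtain ⟨a, b, c, d, h⟩ := Nat.sum_four_squares m
  exact ⟨![a, b, c, d], by simpa using h⟩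

lemma abs_le_of_sq_le {t G : ℤ} (hG : 0 ≤ G) (h : t * t ≤ G) : -G ≤ t ∧ t ≤ G := by
  constructor <;> nlinarith [sq_nonneg (t+1), sq_nonneg (t-1)]

lemma bound_of_finite_funs {r : ℕ} (F : Set (Fin r → ℕ)) (hF : F.Finite) :
    ∃ N : ℕ, ∀ y ∈ F, ∀ j, y j ≤ N := by
  have hfin : (⋃ y ∈ F, Set.range y).Finite :=
    hF.biUnion (fun y _ => Set.finite_range y)
  obtain ⟨N, hN⟩ := hfin.bddAbove
  refine ⟨N, fun y hy j => hN ?_⟩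
  exact Set.mem_biUnion hy ⟨j, rfl⟩

/-! ### The main construction -/

/-- Free variables: 8 for the two four-square decompositions of `b`, and 4 per `y j`. -/
def SF (r : ℕ) : Type := Fin 8 ⊕ (Fin r × Fin 4)

instance (r : ℕ) : Finite (SF r) := by unfold SF; infer_instance

def sqE {r : ℕ} (s : SF r) : Expr (SF r) := .mul (.var s) (.var s)

def sum4E {r : ℕ} (f : Fin 4 → SF r) : Expr (SF r) :=
  .add (.add (sqE (f 0)) (sqE (f 1))) (.add (sqE (f 2)) (sqE (f 3)))

def zVar {r : ℕ} (i : Fin 4) : SF r := Sum.inl ⟨i.1, by have := i.isLt; omega⟩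
def wVar {r : ℕ} (i : Fin 4) : SF r := Sum.inl ⟨i.1 + 4, by have := i.isLt; omega⟩

def zExpr (r : ℕ) : Expr (SF r) := sum4E zVar
def wExpr (r : ℕ) : Expr (SF r) := sum4E wVar
def bExpr (r : ℕ) : Expr (SF r) := .add (zExpr r) (wExpr r)
def yExpr (r : ℕ) (j : Fin r) : Expr (SF r) := sum4E (fun k => Sum.inr (j, k))

def subF (r n : ℕ) : (Fin 2 ⊕ Fin r) → Expr (SF r) :=
  Sum.elim ![posE (n-1), bExpr r] (yExpr r)

lemma zExpr_eval {r : ℕ} (v : SF r → ℤ) :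
    (zExpr r).eval v = v (Sum.inl 0) * v (Sum.inl 0) + v (Sum.inl 1) * v (Sum.inl 1) +
      (v (Sum.inl 2) * v (Sum.inl 2) + v (Sum.inl 3) * v (Sum.inl 3)) := rfl

lemma wExpr_eval {r : ℕ} (v : SF r → ℤ) :
    (wExpr r).eval v = v (Sum.inl 4) * v (Sum.inl 4) + v (Sum.inl 5) * v (Sum.inl 5) +
      (v (Sum.inl 6) * v (Sum.inl 6) + v (Sum.inl 7) * v (Sum.inl 7)) := rfl

lemma yExpr_eval {r : ℕ} (j : Fin r) (v : SF r → ℤ) :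
    (yExpr r j).eval v = v (Sum.inr (j,0)) * v (Sum.inr (j,0)) + v (Sum.inr (j,1)) * v (Sum.inr (j,1)) +
      (v (Sum.inr (j,2)) * v (Sum.inr (j,2)) + v (Sum.inr (j,3)) * v (Sum.inr (j,3))) := rfl

lemma bExpr_eval {r : ℕ} (v : SF r → ℤ) :
    (bExpr r).eval v = (zExpr r).eval v + (wExpr r).eval v := rfl

lemma zExpr_nonneg {r : ℕ} (v : SF r → ℤ) : 0 ≤ (zExpr r).eval v := by
  rw [zExpr_eval]
  nlinarith [mul_self_nonneg (v (Sum.inl (0 : Fin 8))), mul_self_nonneg (v (Sum.inl (1 : Fin 8))),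
    mul_self_nonneg (v (Sum.inl (2 : Fin 8))), mul_self_nonneg (v (Sum.inl (3 : Fin 8)))]

lemma wExpr_nonneg {r : ℕ} (v : SF r → ℤ) : 0 ≤ (wExpr r).eval v := by
  rw [wExpr_eval]
  nlinarith [mul_self_nonneg (v (Sum.inl (4 : Fin 8))), mul_self_nonneg (v (Sum.inl (5 : Fin 8))),
    mul_self_nonneg (v (Sum.inl (6 : Fin 8))), mul_self_nonneg (v (Sum.inl (7 : Fin 8)))]

lemma bExpr_nonneg {r : ℕ} (v : SF r → ℤ) : 0 ≤ (bExpr r).eval v := by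
  have h1 := zExpr_nonneg v; have h2 := wExpr_nonneg v
  rw [bExpr_eval]; omega

lemma yExpr_nonneg {r : ℕ} (j : Fin r) (v : SF r → ℤ) : 0 ≤ (yExpr r j).eval v := by
  rw [yExpr_eval]
  nlinarith [mul_self_nonneg (v (Sum.inr ((j,0) : Fin r × Fin 4))),
    mul_self_nonneg (v (Sum.inr ((j,1) : Fin r × Fin 4))),
    mul_self_nonneg (v (Sum.inr ((j,2) : Fin r × Fin 4))),
    mul_self_nonneg (v (Sum.inr ((j,3) : Fin r × Fin 4)))]

lemma sq_le_bExpr {r : ℕ} (v : SF r → ℤ) (i : Fin 8) :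
    v (Sum.inl i) * v (Sum.inl i) ≤ (bExpr r).eval v := by
  rw [bExpr_eval, zExpr_eval, wExpr_eval]
  have h0 := mul_self_nonneg (v (Sum.inl (0 : Fin 8)))
  have h1 := mul_self_nonneg (v (Sum.inl (1 : Fin 8)))
  have h2 := mul_self_nonneg (v (Sum.inl (2 : Fin 8)))
  have h3 := mul_self_nonneg (v (Sum.inl (3 : Fin 8)))
  have h4 := mul_self_nonneg (v (Sum.inl (4 : Fin 8)))
  have h5 := mul_self_nonneg (v (Sum.inl (5 : Fin 8)))
  have h6 := mul_self_nonneg (v (Sum.inl (6 : Fin 8)))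
  have h7 := mul_self_nonneg (v (Sum.inl (7 : Fin 8)))
  obtain ⟨iv, hlt⟩ := i
  interval_cases iv
  · show v (Sum.inl 0) * v (Sum.inl 0) ≤ _; linarith
  · show v (Sum.inl 1) * v (Sum.inl 1) ≤ _; linarith
  · show v (Sum.inl 2) * v (Sum.inl 2) ≤ _; linarith
  · show v (Sum.inl 3) * v (Sum.inl 3) ≤ _; linarith
  · show v (Sum.inl 4) * v (Sum.inl 4) ≤ _; linarith
  · show v (Sum.inl 5) * v (Sum.inl 5) ≤ _; linarith
  · show v (Sum.inl 6) * v (Sum.inl 6) ≤ _; linarith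
  · show v (Sum.inl 7) * v (Sum.inl 7) ≤ _; linarith

lemma subF_inl0 {r n : ℕ} : subF r n (Sum.inl 0) = posE (n-1) := by simp [subF]
lemma subF_inl1 {r n : ℕ} : subF r n (Sum.inl 1) = bExpr r := by simp [subF]
lemma subF_inr {r n : ℕ} (j : Fin r) : subF r n (Sum.inr j) = yExpr r j := rfl

lemma subF_esize {r n : ℕ} (hn : 1 ≤ n) (s : Fin 2 ⊕ Fin r) :
    (subF r n s).esize ≤ 6 * Nat.log 2 n + 32 := by
  have hb : (bExpr r).esize = 31 := rfl
  have hy : ∀ j, (yExpr r j).esize = 15 := fun j => rfl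
  cases s with
  | inl i =>
    obtain ⟨iv, hlt⟩ := i
    interval_cases iv
    · show (subF r n (Sum.inl 0)).esize ≤ _
      rw [subF_inl0]
      have := posE_esize (σ := SF r) (n-1)
      have hrw : n - 1 + 1 = n := by omega
      rw [hrw] at this
      omega
    · show (subF r n (Sum.inl 1)).esize ≤ _
      rw [subF_inl1]; omega
  | inr j => rw [subF_inr j, hy j]; omega

/-! ### The total system -/

def Esub (r n : ℕ) (E : Expr (Fin 2 ⊕ Fin r)) : Expr (SF r) := E.substE (subF r n)

def Sigt (r n : ℕ) (E1 E2 : Expr (Fin 2 ⊕ Fin r)) : Type :=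
  SF r ⊕ (((compile (Esub r n E1)).ι ⊕ (compile (Esub r n E2)).ι) ⊕ Fin 1)

def rA (r n : ℕ) (E1 E2 : Expr (Fin 2 ⊕ Fin r)) :
    SF r ⊕ (compile (Esub r n E1)).ι → Sigt r n E1 E2 :=
  Sum.map id (fun a => Sum.inl (Sum.inl a))

def rB (r n : ℕ) (E1 E2 : Expr (Fin 2 ⊕ Fin r)) :
    SF r ⊕ (compile (Esub r n E2)).ι → Sigt r n E1 E2 :=
  Sum.map id (fun b => Sum.inl (Sum.inr b))

def zeta (r n : ℕ) (E1 E2 : Expr (Fin 2 ⊕ Fin r)) : Sigt r n E1 E2 :=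
  Sum.inr (Sum.inr 0)

def Ltot (r n : ℕ) (E1 E2 : Expr (Fin 2 ⊕ Fin r)) : List (Eqn (Sigt r n E1 E2)) :=
  (compile (Esub r n E1)).eqs.map (Eqn.map (rA r n E1 E2)) ++
  (compile (Esub r n E2)).eqs.map (Eqn.map (rB r n E1 E2)) ++
  [.add (zeta r n E1 E2) (zeta r n E1 E2) (zeta r n E1 E2),
   .add (rA r n E1 E2 (compile (Esub r n E1)).out) (zeta r n E1 E2)
     (rB r n E1 E2 (compile (Esub r n E2)).out)]

def Cset (r n : ℕ) (E1 E2 : Expr (Fin 2 ⊕ Fin r)) : Set (SF r → ℤ) :=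
  {v | (Esub r n E1).eval v = (Esub r n E2).eval v}

noncomputable def extC {r : ℕ} (E : Expr (SF r)) (v : SF r → ℤ) :
    SF r ⊕ (compile E).ι → ℤ := (compile_exists E v).choose

lemma extC_inl {r : ℕ} (E : Expr (SF r)) (v : SF r → ℤ) :
    extC E v ∘ Sum.inl = v := (compile_exists E v).choose_spec.1

lemma extC_solves {r : ℕ} (E : Expr (SF r)) (v : SF r → ℤ) :
    SolvesL (compile E).eqs (extC E v) := (compile_exists E v).choose_spec.2

lemma extC_out {r : ℕ} (E : Expr (SF r)) (v : SF r → ℤ) :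
    extC E v (compile E).out = E.eval v := by
  have := compile_sound E (extC E v) (extC_solves E v)
  rwa [extC_inl] at this

noncomputable def ext1 (r n : ℕ) (E1 E2 : Expr (Fin 2 ⊕ Fin r)) (v : SF r → ℤ) :
    Sigt r n E1 E2 → ℤ :=
  Sum.elim v (Sum.elim
    (Sum.elim (fun a => extC (Esub r n E1) v (Sum.inr a))
              (fun b => extC (Esub r n E2) v (Sum.inr b)))
    (fun _ => 0))

lemma ext1_inl {r n : ℕ} {E1 E2 : Expr (Fin 2 ⊕ Fin r)} (v : SF r → ℤ) :
    ext1 r n E1 E2 v ∘ Sum.inl = v := rfl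

lemma ext1_injective (r n : ℕ) (E1 E2 : Expr (Fin 2 ⊕ Fin r)) :
    Function.Injective (ext1 r n E1 E2) := by
  intro v v' h
  have := congrArg (fun x => x ∘ Sum.inl) h
  exact this

lemma ext1_compA {r n : ℕ} {E1 E2 : Expr (Fin 2 ⊕ Fin r)} (v : SF r → ℤ) :
    ext1 r n E1 E2 v ∘ rA r n E1 E2 = extC (Esub r n E1) v := by
  funext s
  cases s with
  | inl s => exact (congrFun (extC_inl (Esub r n E1) v) s).symm
  | inr a => rfl

lemma ext1_compB {r n : ℕ} {E1 E2 : Expr (Fin 2 ⊕ Fin r)} (v : SF r → ℤ) :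
    ext1 r n E1 E2 v ∘ rB r n E1 E2 = extC (Esub r n E2) v := by
  funext s
  cases s with
  | inl s => exact (congrFun (extC_inl (Esub r n E2) v) s).symm
  | inr a => rfl

lemma comp_rA_inl {r n : ℕ} {E1 E2 : Expr (Fin 2 ⊕ Fin r)} (x : Sigt r n E1 E2 → ℤ) :
    (x ∘ rA r n E1 E2) ∘ Sum.inl = x ∘ Sum.inl := rfl

lemma comp_rB_inl {r n : ℕ} {E1 E2 : Expr (Fin 2 ⊕ Fin r)} (x : Sigt r n E1 E2 → ℤ) :
    (x ∘ rB r n E1 E2) ∘ Sum.inl = x ∘ Sum.inl := rfl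

lemma Stot_eq (r n : ℕ) (E1 E2 : Expr (Fin 2 ⊕ Fin r)) :
    {x : Sigt r n E1 E2 → ℤ | SolvesL (Ltot r n E1 E2) x} =
      ext1 r n E1 E2 '' Cset r n E1 E2 := by
  ext x
  simp only [Set.mem_setOf_eq, Set.mem_image]
  constructor
  · intro hx
    rw [Ltot, solvesL_append, solvesL_append, solvesL_map, solvesL_map] at hx
    obtain ⟨⟨h1, h2⟩, h3⟩ := hx
    have hzeta : x (zeta r n E1 E2) = 0 := by
      have := h3 _ List.mem_cons_self
      simp only [Eqn.Holds] at this
      omega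
    have hout : x (rA r n E1 E2 (compile (Esub r n E1)).out) + x (zeta r n E1 E2) =
        x (rB r n E1 E2 (compile (Esub r n E2)).out) := by
      have := h3 _ (List.mem_cons_of_mem _ (List.mem_singleton.mpr rfl))
      simpa only [Eqn.Holds] using this
    have heqA : x ∘ rA r n E1 E2 = extC (Esub r n E1) (x ∘ Sum.inl) :=
      compile_unique _ _ _ h1 (extC_solves _ _)
        (by rw [comp_rA_inl, extC_inl])
    have heqB : x ∘ rB r n E1 E2 = extC (Esub r n E2) (x ∘ Sum.inl) :=
      compile_unique _ _ _ h2 (extC_solves _ _)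
        (by rw [comp_rB_inl, extC_inl])
    have hv : (x ∘ Sum.inl) ∈ Cset r n E1 E2 := by
      have e1 : x (rA r n E1 E2 (compile (Esub r n E1)).out) =
          (Esub r n E1).eval (x ∘ Sum.inl) := by
        have := congrFun heqA (compile (Esub r n E1)).out
        rw [Function.comp_apply] at this
        rw [this, extC_out]
      have e2 : x (rB r n E1 E2 (compile (Esub r n E2)).out) =
          (Esub r n E2).eval (x ∘ Sum.inl) := by
        have := congrFun heqB (compile (Esub r n E2)).out
        rw [Function.comp_apply] at this
        rw [this, extC_out]
      show (Esub r n E1).eval (x ∘ Sum.inl) = (Esub r n E2).eval (x ∘ Sum.inl)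
      rw [← e1, ← e2]
      omega
    refine ⟨x ∘ Sum.inl, hv, ?_⟩
    funext s
    cases s with
    | inl s => rfl
    | inr i =>
      cases i with
      | inl a =>
        cases a with
        | inl a => exact (congrFun heqA (Sum.inr a)).symm
        | inr b => exact (congrFun heqB (Sum.inr b)).symm
      | inr u =>
        have hu : u = 0 := Subsingleton.elim u 0
        subst hu
        exact hzeta.symm
  · rintro ⟨v, hv, rfl⟩
    rw [Ltot, solvesL_append, solvesL_append, solvesL_map, solvesL_map,
      ext1_compA, ext1_compB]
    refine ⟨⟨extC_solves _ _, extC_solves _ _⟩, ?_⟩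
    intro q hq
    simp only [List.mem_cons, List.mem_singleton] at hq
    rcases hq with rfl | rfl | h
    · show ext1 r n E1 E2 v (zeta r n E1 E2) + _ = _
      have hz : ext1 r n E1 E2 v (zeta r n E1 E2) = 0 := rfl
      rw [hz]
      norm_num
    · show ext1 r n E1 E2 v (rA r n E1 E2 (compile (Esub r n E1)).out) +
        ext1 r n E1 E2 v (zeta r n E1 E2) =
        ext1 r n E1 E2 v (rB r n E1 E2 (compile (Esub r n E2)).out)
      have ha := congrFun (ext1_compA (E2 := E2) (n := n) v) (compile (Esub r n E1)).out
      have hb := congrFun (ext1_compB (E1 := E1) (n := n) v) (compile (Esub r n E2)).out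
      rw [Function.comp_apply] at ha hb
      rw [ha, hb, extC_out, extC_out]
      have hz : ext1 r n E1 E2 v (zeta r n E1 E2) = 0 := rfl
      rw [hz, add_zero]
      exact hv
    · exact absurd h (by simp)

/-! ### Further helpers for the main proof -/

lemma sq_le_yExpr {r : ℕ} (v : SF r → ℤ) (j : Fin r) (k : Fin 4) :
    v (Sum.inr (j, k)) * v (Sum.inr (j, k)) ≤ (yExpr r j).eval v := by
  rw [yExpr_eval]
  have h0 := mul_self_nonneg (v (Sum.inr ((j, 0) : Fin r × Fin 4)))
  have h1 := mul_self_nonneg (v (Sum.inr ((j, 1) : Fin r × Fin 4)))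
  have h2 := mul_self_nonneg (v (Sum.inr ((j, 2) : Fin r × Fin 4)))
  have h3 := mul_self_nonneg (v (Sum.inr ((j, 3) : Fin r × Fin 4)))
  obtain ⟨kv, hlt⟩ := k
  interval_cases kv
  · show v (Sum.inr (j, 0)) * v (Sum.inr (j, 0)) ≤ _; linarith
  · show v (Sum.inr (j, 1)) * v (Sum.inr (j, 1)) ≤ _; linarith
  · show v (Sum.inr (j, 2)) * v (Sum.inr (j, 2)) ≤ _; linarith
  · show v (Sum.inr (j, 3)) * v (Sum.inr (j, 3)) ≤ _; linarith

lemma gAssign_eq {r n : ℕ} (hn : 1 ≤ n) (v : SF r → ℤ) :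
    (fun s => (subF r n s).eval v) =
      Sum.elim ![(n : ℤ), (bExpr r).eval v] (fun j => (yExpr r j).eval v) := by
  funext s
  cases s with
  | inl i =>
    obtain ⟨iv, hlt⟩ := i
    interval_cases iv
    · show (subF r n (Sum.inl 0)).eval v
        = Sum.elim ![(n : ℤ), (bExpr r).eval v] (fun j => (yExpr r j).eval v) (Sum.inl 0)
      rw [subF_inl0, posE_eval]
      simp only [Sum.elim_inl, Matrix.cons_val_zero]
      omega
    · show (subF r n (Sum.inl 1)).eval v
        = Sum.elim ![(n : ℤ), (bExpr r).eval v] (fun j => (yExpr r j).eval v) (Sum.inl 1)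
      rw [subF_inl1]
      simp only [Sum.elim_inl, Matrix.cons_val_one, Matrix.head_cons, Matrix.cons_val_zero]
  | inr j => rfl

noncomputable def fsq (m : ℕ) : Fin 4 → ℕ := (four_sq m).choose

lemma fsq_spec (m : ℕ) :
    ((fsq m 0 : ℤ)) * (fsq m 0) + (fsq m 1) * (fsq m 1) +
      ((fsq m 2) * (fsq m 2) + (fsq m 3) * (fsq m 3)) = m := by
  have h := (four_sq m).choose_spec
  have h' : ((fsq m 0)^2 + (fsq m 1)^2 + (fsq m 2)^2 + (fsq m 3)^2 : ℕ) = m := h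
  conv_rhs => rw [← h']
  push_cast
  ring

def vec8 (a b : Fin 4 → ℕ) : Fin 8 → ℤ :=
  fun i => if h : i.1 < 4 then (a ⟨i.1, h⟩ : ℤ)
    else (b ⟨i.1 - 4, by have := i.isLt; omega⟩ : ℤ)


lemma sizeBound {r K M n m1 m2 e1 e2 : ℕ}
    (hK : K = e1 + e2) (hM : M = 9 + r * 4 + 38 * K) (hn : n = 2 ^ (2 * M + 13))
    (hm1 : m1 ≤ e1 * (6 * Nat.log 2 n + 32))
    (hm2 : m2 ≤ e2 * (6 * Nat.log 2 n + 32)) :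
    (8 + r * 4) + ((m1 + m2) + 1) ≤ n := by
  have hlog : Nat.log 2 n = 2 * M + 13 := by rw [hn]; exact Nat.log_pow (by norm_num) _
  have h2M : M + 1 ≤ 2 ^ M := Nat.lt_two_pow_self
  have hq : (M + 1) * (M + 1) ≤ 2 ^ M * 2 ^ M := Nat.mul_le_mul h2M h2M
  have hpow : n = 8192 * (2 ^ M * 2 ^ M) := by
    rw [hn, two_mul, pow_add, pow_add]
    norm_num
    ring
  rw [hlog] at hm1 hm2
  have hE1K : e1 ≤ K := by omega
  have hE2K : e2 ≤ K := by omega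
  have hKM : K ≤ M := by omega
  have hb1 : m1 ≤ M * (12 * M + 110) := le_trans hm1 (by nlinarith)
  have hb2 : m2 ≤ M * (12 * M + 110) := le_trans hm2 (by nlinarith)
  have hrM : 8 + r * 4 ≤ M := by omega
  calc (8 + r * 4) + ((m1 + m2) + 1)
      ≤ M + (M * (12 * M + 110) + M * (12 * M + 110) + 1) := by omega
    _ ≤ 8192 * ((M + 1) * (M + 1)) := by nlinarith
    _ ≤ 8192 * (2 ^ M * 2 ^ M) := Nat.mul_le_mul_left _ hq
    _ = n := hpow.symm

set_option maxHeartbeats 2000000 in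
set_option maxRecDepth 10000 in
/-- there is no finite-fold Diophantine representation of `g`. -/
theorem stmt6 :
    ¬ ∃ (r : ℕ) (W : MvPolynomial (Fin 2 ⊕ Fin r) ℤ),
      (∀ a b : ℕ,
        (1 ≤ a ∧ b = gBound a) ↔
          ∃ y : Fin r → ℕ,
            eval (Sum.elim ![(a : ℤ), (b : ℤ)] fun j => (y j : ℤ)) W = 0) ∧
      (∀ a b : ℕ,
        {y : Fin r → ℕ |
          eval (Sum.elim ![(a : ℤ), (b : ℤ)] fun j => (y j : ℤ)) W = 0}.Finite) := by
  rintro ⟨r, W, hrep, hfin⟩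
  obtain ⟨E1, E2, hE⟩ := exprSplit W
  set K := E1.esize + E2.esize with hKdef
  set M := 9 + r * 4 + 38 * K with hMdef
  set n := 2 ^ (2 * M + 13) with hndef
  have hn1 : 1 ≤ n := Nat.one_le_two_pow
  set G := gBound n with hGdef
  -- membership characterization of the free-variable constraint set
  have hmemC : ∀ v : SF r → ℤ, v ∈ Cset r n E1 E2 ↔
      eval (Sum.elim ![(n : ℤ), (bExpr r).eval v] (fun j => (yExpr r j).eval v)) W = 0 := by
    intro v
    have h1 : (Esub r n E1).eval v =
        E1.eval (Sum.elim ![(n : ℤ), (bExpr r).eval v] (fun j => (yExpr r j).eval v)) := by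
      rw [Esub, Expr.eval_substE, gAssign_eq hn1 v]
    have h2 : (Esub r n E2).eval v =
        E2.eval (Sum.elim ![(n : ℤ), (bExpr r).eval v] (fun j => (yExpr r j).eval v)) := by
      rw [Esub, Expr.eval_substE, gAssign_eq hn1 v]
    have h3 := hE (Sum.elim ![(n : ℤ), (bExpr r).eval v] (fun j => (yExpr r j).eval v))
    constructor
    · intro hv
      have hv' : (Esub r n E1).eval v = (Esub r n E2).eval v := hv
      omega
    · intro h0
      show (Esub r n E1).eval v = (Esub r n E2).eval v
      omega
  -- every member of the constraint set has `b`-value `G` and admissible `y`-values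
  have hkey : ∀ v ∈ Cset r n E1 E2, (bExpr r).eval v = (G : ℤ) ∧
      (fun j => ((yExpr r j).eval v).toNat) ∈
        {y : Fin r → ℕ | eval (Sum.elim ![(n : ℤ), (G : ℤ)] fun j => (y j : ℤ)) W = 0} := by
    intro v hv
    have hbc : (((((bExpr r).eval v).toNat) : ℕ) : ℤ) = (bExpr r).eval v :=
      Int.toNat_of_nonneg (bExpr_nonneg v)
    have hyc : ∀ j, ((((yExpr r j).eval v).toNat : ℕ) : ℤ) = (yExpr r j).eval v :=
      fun j => Int.toNat_of_nonneg (yExpr_nonneg j v)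
    have hcast : (Sum.elim ![(n : ℤ), ((((bExpr r).eval v).toNat : ℕ) : ℤ)]
          fun j => ((((yExpr r j).eval v).toNat : ℕ) : ℤ)) =
        Sum.elim ![(n : ℤ), (bExpr r).eval v] (fun j => (yExpr r j).eval v) := by
      funext s
      cases s with
      | inl i =>
        obtain ⟨iv, hlt⟩ := i
        interval_cases iv
        · rfl
        · show Sum.elim ![(n : ℤ), ((((bExpr r).eval v).toNat : ℕ) : ℤ)] _ (Sum.inl 1)
            = Sum.elim ![(n : ℤ), (bExpr r).eval v] _ (Sum.inl 1)
          simp only [Sum.elim_inl, Matrix.cons_val_one, Matrix.head_cons, Matrix.cons_val_zero]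
          exact hbc
      | inr j => exact hyc j
    have h0 : eval (Sum.elim ![(n : ℤ), ((((bExpr r).eval v).toNat : ℕ) : ℤ)]
        fun j => ((((yExpr r j).eval v).toNat : ℕ) : ℤ)) W = 0 := by
      rw [hcast]; exact (hmemC v).mp hv
    have hbG : ((bExpr r).eval v).toNat = G := by
      rw [hGdef]
      exact ((hrep n (((bExpr r).eval v).toNat)).mpr ⟨_, h0⟩).2
    refine ⟨by rw [← hbc, hbG], ?_⟩
    show eval (Sum.elim ![(n : ℤ), (G : ℤ)]
        fun j => ((((yExpr r j).eval v).toNat : ℕ) : ℤ)) W = 0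
    rw [← hbG]; exact h0
  -- finiteness of the constraint set
  have hFY : {y : Fin r → ℕ |
      eval (Sum.elim ![(n : ℤ), (G : ℤ)] fun j => (y j : ℤ)) W = 0}.Finite := hfin n G
  obtain ⟨N, hN⟩ := bound_of_finite_funs _ hFY
  have hCfin : (Cset r n E1 E2).Finite := by
    have hCsub : Cset r n E1 E2 ⊆
        Set.pi Set.univ (fun _ : SF r => Set.Icc (-((G : ℤ) + N)) ((G : ℤ) + N)) := by
      intro v hv
      rw [Set.mem_univ_pi]
      obtain ⟨hb, hy⟩ := hkey v hv
      have hC0 : (0 : ℤ) ≤ (G : ℤ) + N := by positivity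
      intro s
      cases s with
      | inl i =>
        have h1 : v (Sum.inl i) * v (Sum.inl i) ≤ (G : ℤ) + N := by
          have h2 := sq_le_bExpr v i
          rw [hb] at h2
          have h3 : (0 : ℤ) ≤ (N : ℤ) := Int.natCast_nonneg N
          linarith
        exact Set.mem_Icc.mpr (abs_le_of_sq_le hC0 h1)
      | inr p =>
        obtain ⟨j, k⟩ := p
        have hyj := hN _ hy j
        have hynn := yExpr_nonneg j v
        have h1 : v (Sum.inr (j, k)) * v (Sum.inr (j, k)) ≤ (G : ℤ) + N := by
          have h2 := sq_le_yExpr v j k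
          have h4 : (yExpr r j).eval v ≤ (N : ℤ) := by omega
          have h5 : (0 : ℤ) ≤ (G : ℤ) := Int.natCast_nonneg G
          linarith
        exact Set.mem_Icc.mpr (abs_le_of_sq_le hC0 h1)
    exact (Set.Finite.pi (fun _ => Set.finite_Icc _ _)).subset hCsub
  -- counting: at least G+1 members
  obtain ⟨y₀, hy₀⟩ := (hrep n G).mp ⟨hn1, hGdef⟩
  set u : Fin (G + 1) → (SF r → ℤ) := fun k =>
    Sum.elim (vec8 (fsq k.1) (fsq (G - k.1))) (fun pq => (fsq (y₀ pq.1) pq.2 : ℤ)) with hudef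
  have hz : ∀ k : Fin (G + 1), (zExpr r).eval (u k) = (k.1 : ℤ) := by
    intro k
    have e0 : u k (Sum.inl (0 : Fin 8)) = (fsq k.1 0 : ℤ) := rfl
    have e1 : u k (Sum.inl (1 : Fin 8)) = (fsq k.1 1 : ℤ) := rfl
    have e2 : u k (Sum.inl (2 : Fin 8)) = (fsq k.1 2 : ℤ) := rfl
    have e3 : u k (Sum.inl (3 : Fin 8)) = (fsq k.1 3 : ℤ) := rfl
    rw [zExpr_eval, e0, e1, e2, e3, fsq_spec]
  have hw : ∀ k : Fin (G + 1), (wExpr r).eval (u k) = ((G - k.1 : ℕ) : ℤ) := by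
    intro k
    have e4 : u k (Sum.inl (4 : Fin 8)) = (fsq (G - k.1) 0 : ℤ) := rfl
    have e5 : u k (Sum.inl (5 : Fin 8)) = (fsq (G - k.1) 1 : ℤ) := rfl
    have e6 : u k (Sum.inl (6 : Fin 8)) = (fsq (G - k.1) 2 : ℤ) := rfl
    have e7 : u k (Sum.inl (7 : Fin 8)) = (fsq (G - k.1) 3 : ℤ) := rfl
    rw [wExpr_eval, e4, e5, e6, e7, fsq_spec]
  have hbu : ∀ k : Fin (G + 1), (bExpr r).eval (u k) = (G : ℤ) := by
    intro k
    rw [bExpr_eval, hz, hw]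
    have hk := k.isLt
    omega
  have hyu : ∀ (k : Fin (G + 1)) (j : Fin r), (yExpr r j).eval (u k) = ((y₀ j : ℕ) : ℤ) := by
    intro k j
    have e0 : u k (Sum.inr ((j, (0 : Fin 4)) : Fin r × Fin 4)) = (fsq (y₀ j) 0 : ℤ) := rfl
    have e1 : u k (Sum.inr ((j, (1 : Fin 4)) : Fin r × Fin 4)) = (fsq (y₀ j) 1 : ℤ) := rfl
    have e2 : u k (Sum.inr ((j, (2 : Fin 4)) : Fin r × Fin 4)) = (fsq (y₀ j) 2 : ℤ) := rfl
    have e3 : u k (Sum.inr ((j, (3 : Fin 4)) : Fin r × Fin 4)) = (fsq (y₀ j) 3 : ℤ) := rfl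
    rw [yExpr_eval, e0, e1, e2, e3, fsq_spec]
  have humem : ∀ k, u k ∈ Cset r n E1 E2 := by
    intro k
    rw [hmemC]
    have hfun : Sum.elim ![(n : ℤ), (bExpr r).eval (u k)] (fun j => (yExpr r j).eval (u k)) =
        Sum.elim ![(n : ℤ), (G : ℤ)] (fun j => (y₀ j : ℤ)) := by
      funext s
      cases s with
      | inl i =>
        obtain ⟨iv, hlt⟩ := i
        interval_cases iv
        · rfl
        · show Sum.elim ![(n : ℤ), (bExpr r).eval (u k)] _ (Sum.inl 1)
            = Sum.elim ![(n : ℤ), (G : ℤ)] _ (Sum.inl 1)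
          simp only [Sum.elim_inl, Matrix.cons_val_one, Matrix.head_cons, Matrix.cons_val_zero]
          exact hbu k
      | inr j => exact hyu k j
    rw [hfun]
    exact hy₀
  have huinj : Function.Injective u := by
    intro k k' h
    have hk := hz k
    rw [h, hz k'] at hk
    exact Fin.ext (by exact_mod_cast hk.symm)
  have hcount : G + 1 ≤ (Cset r n E1 E2).ncard := by
    have hsub : Set.range u ⊆ Cset r n E1 E2 := by rintro _ ⟨k, rfl⟩; exact humem k
    have h1 : (Set.range u).ncard = G + 1 := by
      rw [← Set.image_univ, Set.ncard_image_of_injective _ huinj, Set.ncard_univ]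
      simp
    calc G + 1 = (Set.range u).ncard := h1.symm
      _ ≤ _ := Set.ncard_le_ncard hsub hCfin
  -- size bound
  have hm1 : (compile (Esub r n E1)).m ≤ E1.esize * (6 * Nat.log 2 n + 32) :=
    le_trans (compile_m_le _) (Expr.esize_substE _ (by omega) (fun s => subF_esize hn1 s) E1)
  have hm2 : (compile (Esub r n E2)).m ≤ E2.esize * (6 * Nat.log 2 n + 32) :=
    le_trans (compile_m_le _) (Expr.esize_substE _ (by omega) (fun s => subF_esize hn1 s) E2)
  have hlog : Nat.log 2 n = 2 * M + 13 := by rw [hndef]; exact Nat.log_pow (by norm_num) _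
  set D := (8 + r * 4) + (((compile (Esub r n E1)).m + (compile (Esub r n E2)).m) + 1)
    with hDdef
  have hDn : D ≤ n := by
    rw [hDdef]
    exact sizeBound hKdef hMdef hndef hm1 hm2
  -- the final system over `Fin n`
  have hDp : D + (n - D) = n := by omega
  set Efin : (Sigt r n E1 E2 ⊕ Fin (n - D)) ≃ Fin n :=
    (sumFinEquiv
      ((sumFinEquiv (sumFinEquiv (Equiv.refl (Fin 8)) finProdFinEquiv)
        (sumFinEquiv (sumFinEquiv (compile (Esub r n E1)).eqv (compile (Esub r n E2)).eqv)
          (Equiv.refl (Fin 1)))) : Sigt r n E1 E2 ≃ Fin D)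
      (Equiv.refl (Fin (n - D)))).trans (finCongr hDp) with hEfin
  set Lτ : List (Eqn (Sigt r n E1 E2 ⊕ Fin (n - D))) :=
    (Ltot r n E1 E2).map (Eqn.map Sum.inl) ++
      (List.finRange (n - D)).map (fun i => Eqn.one (Sum.inr i)) with hLτ
  set Lfin : List (Eqn (Fin n)) := Lτ.map (Eqn.map Efin) with hLfin
  set Ψ : (SF r → ℤ) → (Fin n → ℤ) :=
    fun v => (Sum.elim (ext1 r n E1 E2 v) 1) ∘ Efin.symm with hΨ
  have hΨinj : Function.Injective Ψ := by
    intro v v' h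
    funext s
    have h2 := congrFun h (Efin (Sum.inl (Sum.inl s)))
    simp only [hΨ, Function.comp_apply, Equiv.symm_apply_apply] at h2; exact h2
  have hSQ : ∀ x : Fin n → ℤ, SolvesL Lfin x ↔ ∃ v ∈ Cset r n E1 E2, x = Ψ v := by
    intro x
    constructor
    · intro hx
      rw [hLfin, solvesL_map] at hx
      rw [hLτ, solvesL_append] at hx
      obtain ⟨hA, hP⟩ := hx
      rw [solvesL_map] at hA
      have hmem : ((x ∘ ⇑Efin) ∘ Sum.inl) ∈ ext1 r n E1 E2 '' Cset r n E1 E2 := by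
        rw [← Stot_eq]; exact hA
      obtain ⟨v, hv, hveq⟩ := hmem
      refine ⟨v, hv, ?_⟩
      funext t
      have ht : x t = (x ∘ ⇑Efin) (Efin.symm t) := by simp
      rw [ht]
      show _ = Sum.elim (ext1 r n E1 E2 v) 1 (Efin.symm t)
      cases hts : Efin.symm t with
      | inl s => exact (congrFun hveq s).symm
      | inr i =>
        have hmm : (Eqn.one (Sum.inr i) : Eqn (Sigt r n E1 E2 ⊕ Fin (n - D))) ∈
            (List.finRange (n - D)).map (fun i => Eqn.one (Sum.inr i)) :=
          List.mem_map.mpr ⟨i, List.mem_finRange i, rfl⟩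
        exact hP _ hmm
    · rintro ⟨v, hv, rfl⟩
      rw [hLfin, solvesL_map]
      have hcomp : Ψ v ∘ ⇑Efin = Sum.elim (ext1 r n E1 E2 v) 1 := by
        funext t
        simp [hΨ, Equiv.symm_apply_apply]
      rw [hcomp, hLτ, solvesL_append]
      constructor
      · rw [solvesL_map]
        have hid : Sum.elim (ext1 r n E1 E2 v) 1 ∘
            (Sum.inl : Sigt r n E1 E2 → Sigt r n E1 E2 ⊕ Fin (n - D)) =
            ext1 r n E1 E2 v := rfl
        rw [hid]
        have hmem : ext1 r n E1 E2 v ∈ {y : Sigt r n E1 E2 → ℤ | SolvesL (Ltot r n E1 E2) y} := by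
          rw [Stot_eq]
          exact ⟨v, hv, rfl⟩
        exact hmem
      · intro q hq
        obtain ⟨i, _, rfl⟩ := List.mem_map.mp hq
        exact rfl
  have hSeq : {x : Fin n → ℤ | (toSys Lfin).Solves x} = Ψ '' Cset r n E1 E2 := by
    ext x
    rw [Set.mem_setOf_eq, toSys_solves, hSQ x]
    simp only [Set.mem_image]
    constructor
    · rintro ⟨v, hv, rfl⟩; exact ⟨v, hv, rfl⟩
    · rintro ⟨v, hv, rfl⟩; exact ⟨v, hv, rfl⟩
  have hfinS : {x : Fin n → ℤ | (toSys Lfin).Solves x}.Finite := by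
    rw [hSeq]; exact hCfin.image Ψ
  have hcard : {x : Fin n → ℤ | (toSys Lfin).Solves x}.ncard = (Cset r n E1 E2).ncard := by
    rw [hSeq]; exact Set.ncard_image_of_injective _ hΨinj
  have hle := ncard_le_gBound (toSys Lfin) hfinS
  rw [hcard] at hle
  rw [← hGdef] at hle
  omega
end

section
/- Let p be a positive integer and let D ∈ ℤ[x₁,…,x_p] be a polynomial with deg(D, x_i) ≥ 1 for each i ∈ {1,…,p}. Then there exist an integer n > p and a system T ⊆ E_n such that the projection (x₁,…,xₙ) ↦ (x₁,…,x_p) is a bijection from the set of tuples (x₁,…,xₙ) ∈ ℤⁿ solving T onto the set of tuples (x₁,…,x_p) ∈ ℤᵖ with D(x₁,…,x_p) = 0. In particular, the equation D(x₁,…,x_p) = 0 and the system T have the same number of solutions in integers. -/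
def map3 {a b : ℕ} (e : Fin a → Fin b) (t : Fin a × Fin a × Fin a) : Fin b × Fin b × Fin b :=
  (e t.1, e t.2.1, e t.2.2)

lemma solves_map {n N : ℕ} (e : Fin n → Fin N) (S : SystemEn n) (y : Fin N → ℤ) :
    SystemEn.Solves ⟨S.eqOne.image e, S.addEq.image (map3 e), S.mulEq.image (map3 e)⟩ y ↔
      S.Solves (y ∘ e) := by
  simp only [SystemEn.Solves, Finset.mem_image, map3, Function.comp]
  constructor
  · rintro ⟨h1, h2, h3⟩
    exact ⟨fun i hi => h1 _ ⟨i, hi, rfl⟩, fun t ht => h2 _ ⟨t, ht, rfl⟩,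
      fun t ht => h3 _ ⟨t, ht, rfl⟩⟩
  · rintro ⟨h1, h2, h3⟩
    refine ⟨?_, ?_, ?_⟩
    · rintro i ⟨j, hj, rfl⟩; exact h1 j hj
    · rintro t ⟨s, hs, rfl⟩; exact h2 s hs
    · rintro t ⟨s, hs, rfl⟩; exact h3 s hs

lemma solves_union {n : ℕ} (o₁ o₂ : Finset (Fin n)) (a₁ a₂ m₁ m₂ : Finset (Fin n × Fin n × Fin n))
    (y : Fin n → ℤ) :
    SystemEn.Solves ⟨o₁ ∪ o₂, a₁ ∪ a₂, m₁ ∪ m₂⟩ y ↔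
      SystemEn.Solves ⟨o₁, a₁, m₁⟩ y ∧ SystemEn.Solves ⟨o₂, a₂, m₂⟩ y := by
  simp only [SystemEn.Solves, Finset.mem_union, or_imp, forall_and]
  tauto

lemma solves_pointwise {n : ℕ} (S : SystemEn n) {y z : Fin n → ℤ} (h : ∀ j, y j = z j) :
    S.Solves y ↔ S.Solves z := by
  have : y = z := funext h
  rw [this]

structure Dio (p : ℕ) (f : (Fin p → ℤ) → ℤ) where
  m : ℕ
  S : SystemEn (p + m)
  out : Fin (p + m)
  ext : (Fin p → ℤ) → Fin (p + m) → ℤ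
  ext_solves : ∀ x, S.Solves (ext x)
  ext_cast : ∀ x (i : Fin p), ext x (Fin.castAdd m i) = x i
  ext_out : ∀ x, ext x out = f x
  uniq : ∀ y : Fin (p + m) → ℤ, S.Solves y → y = ext (fun i => y (Fin.castAdd m i))

def Dio.congrFn {p : ℕ} {f g : (Fin p → ℤ) → ℤ} (r : Dio p f) (h : ∀ x, f x = g x) :
    Dio p g :=
  { r with ext_out := fun x => (r.ext_out x).trans (h x) }

def dioVar (p : ℕ) (i : Fin p) : Dio p (fun x => x i) where
  m := 0
  S := ⟨∅, ∅, ∅⟩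
  out := ⟨i.1, by omega⟩
  ext := fun x j => x ⟨j.1, by omega⟩
  ext_solves := fun x => ⟨by simp, by simp, by simp⟩
  ext_cast := fun x i => congrArg x (Fin.ext rfl)
  ext_out := fun x => congrArg x (Fin.ext rfl)
  uniq := fun y _ => funext fun j => congrArg y (Fin.ext rfl)

def dioOne (p : ℕ) : Dio p (fun _ => 1) where
  m := 1
  S := ⟨{⟨p, by omega⟩}, ∅, ∅⟩
  out := ⟨p, by omega⟩
  ext := fun x j => if h : j.1 < p then x ⟨j.1, h⟩ else 1
  ext_solves := fun x => ⟨by intro i hi; simp only [Finset.mem_singleton] at hi; subst hi; simp,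
    by simp, by simp⟩
  ext_cast := fun x i => by
    simp only [Fin.coe_castAdd, dif_pos i.2]
  ext_out := fun x => by simp
  uniq := fun y hy => funext fun j => by
    by_cases h : j.1 < p
    · simp only [dif_pos h]
      exact congrArg y (Fin.ext rfl)
    · simp only [dif_neg h]
      have hjp : j.1 = p := by have := j.isLt; omega
      have hj : j = ⟨p, by omega⟩ := Fin.ext hjp
      exact hj ▸ hy.1 _ (Finset.mem_singleton_self _)

section Combine

variable {p : ℕ} {f g : (Fin p → ℤ) → ℤ} (rf : Dio p f) (rg : Dio p g)

/-- first embedding -/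
def emb1 (rf : Dio p f) (rg : Dio p g) : Fin (p + rf.m) → Fin (p + (rf.m + rg.m + 1)) :=
  Fin.castLE (by omega)

/-- second embedding -/
def emb2 (rf : Dio p f) (rg : Dio p g) (i : Fin (p + rg.m)) : Fin (p + (rf.m + rg.m + 1)) :=
  if h : i.1 < p then ⟨i.1, by omega⟩ else ⟨i.1 + rf.m, by have := i.isLt; omega⟩

/-- last index -/
def wIdx (rf : Dio p f) (rg : Dio p g) : Fin (p + (rf.m + rg.m + 1)) :=
  ⟨p + rf.m + rg.m, by omega⟩

def combSys (rf : Dio p f) (rg : Dio p g)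
    (eA eM : Finset (Fin (p + (rf.m + rg.m + 1)) × Fin (p + (rf.m + rg.m + 1)) ×
      Fin (p + (rf.m + rg.m + 1)))) : SystemEn (p + (rf.m + rg.m + 1)) :=
  ⟨(rf.S.eqOne.image (emb1 rf rg) ∪ rg.S.eqOne.image (emb2 rf rg)) ∪ ∅,
   (rf.S.addEq.image (map3 (emb1 rf rg)) ∪ rg.S.addEq.image (map3 (emb2 rf rg))) ∪ eA,
   (rf.S.mulEq.image (map3 (emb1 rf rg)) ∪ rg.S.mulEq.image (map3 (emb2 rf rg))) ∪ eM⟩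

def combExt (rf : Dio p f) (rg : Dio p g) (op : ℤ → ℤ → ℤ) (x : Fin p → ℤ)
    (j : Fin (p + (rf.m + rg.m + 1))) : ℤ :=
  if h : j.1 < p + rf.m then rf.ext x ⟨j.1, h⟩
  else if h2 : j.1 < p + rf.m + rg.m then rg.ext x ⟨j.1 - rf.m, by omega⟩
  else op (f x) (g x)

lemma combExt_lt (op : ℤ → ℤ → ℤ) (x : Fin p → ℤ) (j : Fin (p + (rf.m + rg.m + 1)))
    (h : j.1 < p + rf.m) : combExt rf rg op x j = rf.ext x ⟨j.1, h⟩ := by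
  simp only [combExt]; rw [dif_pos h]

lemma combExt_mid (op : ℤ → ℤ → ℤ) (x : Fin p → ℤ) (j : Fin (p + (rf.m + rg.m + 1)))
    (h1 : ¬ j.1 < p + rf.m) (h2 : j.1 < p + rf.m + rg.m) :
    combExt rf rg op x j = rg.ext x ⟨j.1 - rf.m, by omega⟩ := by
  simp only [combExt]; rw [dif_neg h1, dif_pos h2]

lemma combExt_hi (op : ℤ → ℤ → ℤ) (x : Fin p → ℤ) (j : Fin (p + (rf.m + rg.m + 1)))
    (h2 : ¬ j.1 < p + rf.m + rg.m) : combExt rf rg op x j = op (f x) (g x) := by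
  simp only [combExt]; rw [dif_neg (show ¬ j.1 < p + rf.m by omega), dif_neg h2]

lemma combExt_e1 (op : ℤ → ℤ → ℤ) (x : Fin p → ℤ) (j : Fin (p + rf.m)) :
    combExt rf rg op x (emb1 rf rg j) = rf.ext x j := by
  rw [combExt_lt rf rg op x _ (show (emb1 rf rg j).1 < p + rf.m from j.isLt)]
  exact congrArg (rf.ext x) (Fin.ext rfl)

lemma combExt_e2 (op : ℤ → ℤ → ℤ) (x : Fin p → ℤ) (j : Fin (p + rg.m)) :
    combExt rf rg op x (emb2 rf rg j) = rg.ext x j := by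
  rw [emb2]
  by_cases h : j.1 < p
  · rw [dif_pos h, combExt_lt rf rg op x _ (show j.1 < p + rf.m by omega)]
    have h1 : (⟨j.1, show j.1 < p + rf.m by omega⟩ : Fin (p + rf.m)) =
        Fin.castAdd rf.m ⟨j.1, h⟩ := Fin.ext rfl
    rw [h1, rf.ext_cast, ← rg.ext_cast x ⟨j.1, h⟩]
    exact congrArg (rg.ext x) (Fin.ext rfl)
  · rw [dif_neg h, combExt_mid rf rg op x _ (show ¬ j.1 + rf.m < p + rf.m by omega)
      (show j.1 + rf.m < p + rf.m + rg.m by have := j.isLt; omega)]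
    exact congrArg (rg.ext x) (Fin.ext (by simp))

lemma combExt_w (op : ℤ → ℤ → ℤ) (x : Fin p → ℤ) :
    combExt rf rg op x (wIdx rf rg) = op (f x) (g x) :=
  combExt_hi rf rg op x _ (show ¬ p + rf.m + rg.m < p + rf.m + rg.m by omega)

def dioComb (op : ℤ → ℤ → ℤ)
    (eA eM : Finset (Fin (p + (rf.m + rg.m + 1)) × Fin (p + (rf.m + rg.m + 1)) ×
      Fin (p + (rf.m + rg.m + 1))))
    (hfwd : ∀ z : Fin (p + (rf.m + rg.m + 1)) → ℤ,
      z (wIdx rf rg) = op (z (emb1 rf rg rf.out)) (z (emb2 rf rg rg.out)) →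
      SystemEn.Solves ⟨∅, eA, eM⟩ z)
    (hbwd : ∀ z : Fin (p + (rf.m + rg.m + 1)) → ℤ, SystemEn.Solves ⟨∅, eA, eM⟩ z →
      z (wIdx rf rg) = op (z (emb1 rf rg rf.out)) (z (emb2 rf rg rg.out))) :
    Dio p (fun x => op (f x) (g x)) where
  m := rf.m + rg.m + 1
  S := combSys rf rg eA eM
  out := wIdx rf rg
  ext := combExt rf rg op
  ext_solves := fun x => by
    rw [combSys, solves_union, solves_union]
    refine ⟨⟨?_, ?_⟩, ?_⟩
    · rw [solves_map]
      exact (solves_pointwise rf.S (fun j => combExt_e1 rf rg op x j)).mpr (rf.ext_solves x)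
    · rw [solves_map]
      exact (solves_pointwise rg.S (fun j => combExt_e2 rf rg op x j)).mpr (rg.ext_solves x)
    · exact hfwd _ (by rw [combExt_w, combExt_e1, combExt_e2, rf.ext_out, rg.ext_out])
  ext_cast := fun x i => by
    have h : (Fin.castAdd (rf.m + rg.m + 1) i).1 < p + rf.m := by
      have := i.isLt; simp only [Fin.coe_castAdd]; omega
    rw [combExt_lt rf rg op x _ h]
    have h1 : (⟨(Fin.castAdd (rf.m + rg.m + 1) i).1, h⟩ : Fin (p + rf.m)) =
        Fin.castAdd rf.m i := Fin.ext rfl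
    rw [h1, rf.ext_cast]
  ext_out := combExt_w rf rg op
  uniq := fun y hy => by
    rw [combSys, solves_union, solves_union, solves_map, solves_map] at hy
    obtain ⟨⟨h1, h2⟩, h3⟩ := hy
    set x : Fin p → ℤ := fun i => y (Fin.castAdd (rf.m + rg.m + 1) i) with hx
    have he1 : y ∘ emb1 rf rg = rf.ext x := by
      have h := rf.uniq (y ∘ emb1 rf rg) h1
      have hxx : (fun i => (y ∘ emb1 rf rg) (Fin.castAdd rf.m i)) = x := by
        funext i; exact congrArg y (Fin.ext rfl)
      rw [h, hxx]
    have he2 : y ∘ emb2 rf rg = rg.ext x := by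
      have h := rg.uniq (y ∘ emb2 rf rg) h2
      have hxx : (fun i => (y ∘ emb2 rf rg) (Fin.castAdd rg.m i)) = x := by
        funext i
        show y (emb2 rf rg (Fin.castAdd rg.m i)) = y (Fin.castAdd (rf.m + rg.m + 1) i)
        refine congrArg y ?_
        rw [emb2, dif_pos (show (Fin.castAdd rg.m i).1 < p by simp only [Fin.coe_castAdd]; exact i.isLt)]
        exact Fin.ext rfl
      rw [h, hxx]
    have hw : y (wIdx rf rg) = op (f x) (g x) := by
      rw [hbwd y h3]
      have e1 := congrFun he1 rf.out
      have e2 := congrFun he2 rg.out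
      simp only [Function.comp] at e1 e2
      rw [e1, e2, rf.ext_out, rg.ext_out]
    funext j
    by_cases hj1 : j.1 < p + rf.m
    · have hje : j = emb1 rf rg ⟨j.1, hj1⟩ := Fin.ext rfl
      rw [hje, combExt_e1]
      have := congrFun he1 ⟨j.1, hj1⟩
      simpa using this
    · by_cases hj2 : j.1 < p + rf.m + rg.m
      · have hb : j.1 - rf.m < p + rg.m := by omega
        have hje : j = emb2 rf rg ⟨j.1 - rf.m, hb⟩ := by
          rw [emb2, dif_neg (show ¬ j.1 - rf.m < p by omega)]
          exact Fin.ext (by simp only []; omega)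
        rw [hje, combExt_e2]
        have := congrFun he2 ⟨j.1 - rf.m, hb⟩
        simpa using this
      · have hje : j = wIdx rf rg := by
          have := j.isLt
          exact Fin.ext (by simp only [wIdx]; omega)
        rw [hje, combExt_w]
        exact hw

end Combine

section Ops

variable {p : ℕ} {f g : (Fin p → ℤ) → ℤ}

def dioAdd (rf : Dio p f) (rg : Dio p g) : Dio p (fun x => f x + g x) :=
  dioComb rf rg (· + ·) {(emb1 rf rg rf.out, emb2 rf rg rg.out, wIdx rf rg)} ∅
    (fun z hz => by
      refine ⟨by simp, ?_, by simp⟩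
      intro t ht
      simp only [Finset.mem_singleton] at ht
      subst ht
      exact hz.symm)
    (fun z hz => (hz.2.1 _ (Finset.mem_singleton_self _)).symm)

def dioMul (rf : Dio p f) (rg : Dio p g) : Dio p (fun x => f x * g x) :=
  dioComb rf rg (· * ·) ∅ {(emb1 rf rg rf.out, emb2 rf rg rg.out, wIdx rf rg)}
    (fun z hz => by
      refine ⟨by simp, by simp, ?_⟩
      intro t ht
      simp only [Finset.mem_singleton] at ht
      subst ht
      exact hz.symm)
    (fun z hz => (hz.2.2 _ (Finset.mem_singleton_self _)).symm)

def dioSub (rf : Dio p f) (rg : Dio p g) : Dio p (fun x => f x - g x) :=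
  dioComb rf rg (· - ·) {(wIdx rf rg, emb2 rf rg rg.out, emb1 rf rg rf.out)} ∅
    (fun z hz => by
      refine ⟨by simp, ?_, by simp⟩
      intro t ht
      simp only [Finset.mem_singleton] at ht
      subst ht
      simp only at hz ⊢
      omega)
    (fun z hz => by
      have := hz.2.1 _ (Finset.mem_singleton_self
        (wIdx rf rg, emb2 rf rg rg.out, emb1 rf rg rf.out))
      simp only at this ⊢
      omega)

def dioConst (p : ℕ) : ∀ c : ℤ, Nonempty (Dio p (fun _ => c)) := by
  intro c
  induction c using Int.induction_on with
  | zero => exact ⟨(dioSub (dioOne p) (dioOne p)).congrFn (by simp)⟩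
  | succ i ih => obtain ⟨r⟩ := ih; exact ⟨(dioAdd r (dioOne p)).congrFn (by simp)⟩
  | pred i ih => obtain ⟨r⟩ := ih; exact ⟨(dioSub r (dioOne p)).congrFn (fun x => by ring)⟩

open MvPolynomial in
theorem dioEval (p : ℕ) (D : MvPolynomial (Fin p) ℤ) :
    Nonempty (Dio p (fun x => eval x D)) := by
  induction D using MvPolynomial.induction_on with
  | C a => obtain ⟨r⟩ := dioConst p a; exact ⟨r.congrFn (by simp)⟩
  | add P Q hP hQ =>
    obtain ⟨rP⟩ := hP; obtain ⟨rQ⟩ := hQ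
    exact ⟨(dioAdd rP rQ).congrFn (by simp)⟩
  | mul_X P i hP =>
    obtain ⟨rP⟩ := hP
    exact ⟨(dioMul rP (dioVar p i)).congrFn (by simp)⟩

end Ops

open MvPolynomial

/-- for a polynomial `D ∈ ℤ[x₁,…,x_p]` of degree `≥ 1` in each variable,
there are `n > p` and a system `T ⊆ E_n` such that projecting to the first `p`
coordinates is a bijection from the integer solutions of `T` onto the integer
solutions of `D = 0`. -/
theorem stmt8 (p : ℕ) (hp : 0 < p) (D : MvPolynomial (Fin p) ℤ)
    (hdeg : ∀ i : Fin p, 1 ≤ degreeOf i D) :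
    ∃ (n : ℕ) (h : p < n) (T : SystemEn n),
      Set.BijOn (fun x : Fin n → ℤ => x ∘ Fin.castLE h.le)
        {x : Fin n → ℤ | T.Solves x}
        {x : Fin p → ℤ | eval x D = 0} := by
  obtain ⟨r⟩ := dioEval p D
  refine ⟨p + r.m + 1, by omega, ?_⟩
  set n := p + r.m + 1 with hn
  have hle : p + r.m ≤ n := by omega
  set e : Fin (p + r.m) → Fin n := Fin.castLE hle with he
  set z : Fin n := ⟨p + r.m, by omega⟩ with hz
  refine ⟨⟨r.S.eqOne.image e ∪ ∅,
    r.S.addEq.image (map3 e) ∪ {(z, z, z), (e r.out, z, z)},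
    r.S.mulEq.image (map3 e) ∪ ∅⟩, ?_⟩
  have hproj : ∀ y : Fin n → ℤ,
      (fun i => (y ∘ e) (Fin.castAdd r.m i)) = y ∘ Fin.castLE (by omega : p ≤ n) := by
    intro y; funext i; exact congrArg y (Fin.ext rfl)
  have hextra : ∀ y : Fin n → ℤ,
      SystemEn.Solves ⟨∅, ({(z, z, z), (e r.out, z, z)} : Finset _), ∅⟩ y ↔
        (y z = 0 ∧ y (e r.out) = 0) := by
    intro y
    constructor
    · rintro ⟨-, h, -⟩
      have h1 := h _ (Finset.mem_insert_self _ _)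
      have h2 := h _ (Finset.mem_insert_of_mem (Finset.mem_singleton_self _))
      simp only at h1 h2
      constructor <;> omega
    · rintro ⟨h1, h2⟩
      refine ⟨by simp, ?_, by simp⟩
      intro t ht
      simp only [Finset.mem_insert, Finset.mem_singleton] at ht
      rcases ht with rfl | rfl <;> simp [h1, h2]
  have hiff : ∀ y : Fin n → ℤ,
      SystemEn.Solves ⟨r.S.eqOne.image e ∪ ∅,
        r.S.addEq.image (map3 e) ∪ {(z, z, z), (e r.out, z, z)},
        r.S.mulEq.image (map3 e) ∪ ∅⟩ y ↔
        (r.S.Solves (y ∘ e) ∧ y z = 0 ∧ y (e r.out) = 0) := by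
    intro y
    rw [solves_union, solves_map, hextra]
  have hout : ∀ y : Fin n → ℤ, r.S.Solves (y ∘ e) →
      y (e r.out) = eval (y ∘ Fin.castLE (by omega : p ≤ n)) D := by
    intro y hS
    have hu := r.uniq _ hS
    have h1 : y (e r.out) = (y ∘ e) r.out := rfl
    rw [h1, hu, r.ext_out, hproj]
  constructor
  · -- MapsTo
    intro y hy
    simp only [Set.mem_setOf_eq] at hy ⊢
    rw [hiff] at hy
    obtain ⟨hS, -, h0⟩ := hy
    rw [← hout y hS]
    exact h0
  constructor
  · -- InjOn
    intro y hy y' hy' heq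
    simp only [Set.mem_setOf_eq] at hy hy'
    rw [hiff] at hy hy'
    obtain ⟨hS, hz0, -⟩ := hy
    obtain ⟨hS', hz0', -⟩ := hy'
    have hu := r.uniq _ hS
    have hu' := r.uniq _ hS'
    have hxx : (fun i => (y ∘ e) (Fin.castAdd r.m i)) =
        (fun i => (y' ∘ e) (Fin.castAdd r.m i)) := by
      rw [hproj, hproj]
      exact heq
    funext j
    by_cases hj : j.1 < p + r.m
    · have hje : j = e ⟨j.1, hj⟩ := Fin.ext rfl
      rw [hje]
      have t1 := congrFun hu ⟨j.1, hj⟩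
      have t2 := congrFun hu' ⟨j.1, hj⟩
      rw [hxx] at t1
      exact t1.trans t2.symm
    · have hje : j = z := by
        have := j.isLt
        exact Fin.ext (by simp only [hz]; omega)
      rw [hje, hz0, hz0']
  · -- SurjOn
    intro x hx
    simp only [Set.mem_setOf_eq] at hx
    set y : Fin n → ℤ := fun j => if h : j.1 < p + r.m then r.ext x ⟨j.1, h⟩ else 0 with hy
    have hye : ∀ j : Fin (p + r.m), y (e j) = r.ext x j := by
      intro j
      rw [hy]
      simp only
      rw [dif_pos (show (e j).1 < p + r.m from j.isLt)]
      exact congrArg (r.ext x) (Fin.ext rfl)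
    have hyz : y z = 0 := by
      rw [hy]; simp only; rw [dif_neg (show ¬ (p + r.m < p + r.m) by omega)]
    refine ⟨y, ?_, ?_⟩
    · simp only [Set.mem_setOf_eq]
      rw [hiff]
      refine ⟨(solves_pointwise r.S hye).mpr (r.ext_solves x), hyz, ?_⟩
      rw [hye, r.ext_out, hx]
    · funext i
      show y (Fin.castLE _ i) = x i
      have h1 : Fin.castLE (show p ≤ n by omega) i = e (Fin.castAdd r.m i) := Fin.ext rfl
      rw [h1, hye, r.ext_cast]
end

section
/- Let p be a positive integer and let D ∈ ℤ[x₁,…,x_p] be a polynomial with deg(D, x_i) ≥ 1 for each i ∈ {1,…,p}. Then there exist an integer n > p and a system T ⊆ E_n such that the projection (x₁,…,xₙ) ↦ (x₁,…,x_p) is a bijection from the set of tuples (x₁,…,xₙ) ∈ ℕⁿ solving T onto the set of tuples (x₁,…,x_p) ∈ ℕᵖ with D(x₁,…,x_p) = 0. In particular, the equation D(x₁,…,x_p) = 0 and the system T have the same number of solutions in non-negative integers. -/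
open MvPolynomial

/-- Arithmetic expressions in `p` variables over a commutative semiring. -/
inductive Exp (p : ℕ) : Type
  | zero : Exp p
  | one : Exp p
  | var (i : Fin p) : Exp p
  | add (a b : Exp p) : Exp p
  | mul (a b : Exp p) : Exp p

namespace Exp

variable {p : ℕ}

def evalE {R : Type*} [CommSemiring R] (x : Fin p → R) : Exp p → R
  | zero => 0
  | one => 1
  | var i => x i
  | add a b => evalE x a + evalE x b
  | mul a b => evalE x a * evalE x b

def size : Exp p → ℕ
  | zero => 1
  | one => 1
  | var _ => 1
  | add a b => size a + size b + 1
  | mul a b => size a + size b + 1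

lemma size_pos (e : Exp p) : 1 ≤ e.size := by
  cases e <;> simp [size] <;> omega

/-- value at slot `j` in the post-order layout of `e`. -/
def slotVal (x : Fin p → ℕ) : Exp p → ℕ → ℕ
  | zero, _ => 0
  | one, _ => 1
  | var i, _ => x i
  | add a b, j =>
      if j < a.size then slotVal x a j
      else if j - a.size < b.size then slotVal x b (j - a.size)
      else evalE x a + evalE x b
  | mul a b, j =>
      if j < a.size then slotVal x a j
      else if j - a.size < b.size then slotVal x b (j - a.size)
      else evalE x a * evalE x b

lemma slotVal_root (x : Fin p → ℕ) (e : Exp p) : slotVal x e (e.size - 1) = evalE x e := by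
  cases e <;> simp [slotVal, size, evalE] <;> omega

/-- The equations (ones, additions, multiplications) over natural-number variable
indices, for the computation of `e` laid out at offset `t`.  Variable `i < p` is
the `i`-th input, `p` is the constant-one variable, `p+1` is the output variable,
and `p+2+j` is slot `j`. -/
def eqs : Exp p → ℕ → List ℕ × List (ℕ × ℕ × ℕ) × List (ℕ × ℕ × ℕ)
  | zero, t => ([], [(p+2+t, p+2+t, p+2+t)], [])
  | one, t => ([p+2+t], [], [])
  | var i, t => ([], [], [(i.val, p, p+2+t)])
  | add a b, t =>
      ((eqs a t).1 ++ (eqs b (t + a.size)).1,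
       (p+2+(t+a.size-1), p+2+(t+a.size+b.size-1), p+2+(t+a.size+b.size)) ::
         ((eqs a t).2.1 ++ (eqs b (t + a.size)).2.1),
       (eqs a t).2.2 ++ (eqs b (t + a.size)).2.2)
  | mul a b, t =>
      ((eqs a t).1 ++ (eqs b (t + a.size)).1,
       (eqs a t).2.1 ++ (eqs b (t + a.size)).2.1,
       (p+2+(t+a.size-1), p+2+(t+a.size+b.size-1), p+2+(t+a.size+b.size)) ::
         ((eqs a t).2.2 ++ (eqs b (t + a.size)).2.2))

lemma eqs_bound : ∀ (e : Exp p) (t : ℕ),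
    (∀ m ∈ (eqs e t).1, m < p+2+t+e.size) ∧
    (∀ q ∈ (eqs e t).2.1, q.1 < p+2+t+e.size ∧ q.2.1 < p+2+t+e.size ∧ q.2.2 < p+2+t+e.size) ∧
    (∀ q ∈ (eqs e t).2.2, q.1 < p+2+t+e.size ∧ q.2.1 < p+2+t+e.size ∧ q.2.2 < p+2+t+e.size) := by
  intro e
  induction e with
  | zero => intro t; simp [eqs, size]
  | one => intro t; simp [eqs, size]
  | var i => intro t; have hi := i.isLt; simp [eqs, size]; omega
  | add a b iha ihb =>
      intro t
      obtain ⟨h1a, h2a, h3a⟩ := iha t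
      obtain ⟨h1b, h2b, h3b⟩ := ihb (t + a.size)
      refine ⟨?_, ?_, ?_⟩ <;>
        simp only [eqs, List.mem_append, List.mem_cons] <;> intro q hq
      · rcases hq with hq | hq
        · have := h1a q hq; simp [size]; omega
        · have := h1b q hq; simp [size]; omega
      · rcases hq with rfl | hq | hq
        · simp [size]; omega
        · have := h2a q hq; simp [size]; omega
        · have := h2b q hq; simp [size]; omega
      · rcases hq with hq | hq
        · have := h3a q hq; simp [size]; omega
        · have := h3b q hq; simp [size]; omega
  | mul a b iha ihb =>
      intro t
      obtain ⟨h1a, h2a, h3a⟩ := iha t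
      obtain ⟨h1b, h2b, h3b⟩ := ihb (t + a.size)
      refine ⟨?_, ?_, ?_⟩ <;>
        simp only [eqs, List.mem_append, List.mem_cons] <;> intro q hq
      · rcases hq with hq | hq
        · have := h1a q hq; simp [size]; omega
        · have := h1b q hq; simp [size]; omega
      · rcases hq with hq | hq
        · have := h2a q hq; simp [size]; omega
        · have := h2b q hq; simp [size]; omega
      · rcases hq with rfl | hq | hq
        · simp [size]; omega
        · have := h3a q hq; simp [size]; omega
        · have := h3b q hq; simp [size]; omega


lemma sound (x : Fin p → ℕ) (Y : ℕ → ℕ) (hx : ∀ i : Fin p, Y i.val = x i)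
    (ho : Y p = 1) :
    ∀ (e : Exp p) (t : ℕ),
    (∀ m ∈ (eqs e t).1, Y m = 1) →
    (∀ q ∈ (eqs e t).2.1, Y q.1 + Y q.2.1 = Y q.2.2) →
    (∀ q ∈ (eqs e t).2.2, Y q.1 * Y q.2.1 = Y q.2.2) →
    ∀ j, j < e.size → Y (p+2+t+j) = slotVal x e j := by
  intro e
  induction e with
  | zero =>
      intro t h1 h2 h3 j hj
      have hj0 : j = 0 := by simpa [size] using hj
      subst hj0
      have h' : Y (p+2+t) + Y (p+2+t) = Y (p+2+t) :=
        h2 (p+2+t, p+2+t, p+2+t) (by simp [eqs])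
      simp only [slotVal, Nat.add_zero]
      omega
  | one =>
      intro t h1 h2 h3 j hj
      have hj0 : j = 0 := by simpa [size] using hj
      subst hj0
      have := h1 (p+2+t) (by simp [eqs])
      simpa [slotVal, Nat.add_zero] using this
  | var i =>
      intro t h1 h2 h3 j hj
      have hj0 : j = 0 := by simpa [size] using hj
      subst hj0
      have h' : Y i.val * Y p = Y (p+2+t) :=
        h3 (i.val, p, p+2+t) (by simp [eqs])
      simp only [slotVal, Nat.add_zero]
      simp only [hx i, ho, mul_one] at h'
      exact h'.symm
  | add a b iha ihb =>
      intro t h1 h2 h3 j hj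
      simp only [eqs, List.mem_append, List.mem_cons] at h1 h2 h3
      have ha := iha t (fun m hm => h1 m (Or.inl hm))
        (fun q hq => h2 q (Or.inr (Or.inl hq))) (fun q hq => h3 q (Or.inl hq))
      have hb := ihb (t + a.size) (fun m hm => h1 m (Or.inr hm))
        (fun q hq => h2 q (Or.inr (Or.inr hq))) (fun q hq => h3 q (Or.inr hq))
      have hsa := a.size_pos
      have hsb := b.size_pos
      have hsz : (a.add b).size = a.size + b.size + 1 := rfl
      by_cases hja : j < a.size
      · rw [ha j hja]
        simp only [slotVal, if_pos hja]
      · by_cases hjb : j - a.size < b.size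
        · have heq : p+2+t+j = p+2+(t+a.size)+(j-a.size) := by omega
          rw [heq, hb (j - a.size) hjb]
          simp only [slotVal, if_neg hja, if_pos hjb]
        · have hq : Y (p+2+(t+a.size-1)) + Y (p+2+(t+a.size+b.size-1))
              = Y (p+2+(t+a.size+b.size)) := h2 _ (Or.inl rfl)
          have e1 : p+2+(t+a.size-1) = p+2+t+(a.size-1) := by omega
          have e2 : p+2+(t+a.size+b.size-1) = p+2+(t+a.size)+(b.size-1) := by omega
          have e3 : p+2+(t+a.size+b.size) = p+2+t+j := by
            rw [hsz] at hj; omega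
          rw [e1, e2, e3, ha (a.size-1) (by omega), hb (b.size-1) (by omega),
            slotVal_root, slotVal_root] at hq
          rw [← hq]
          simp only [slotVal, if_neg hja, if_neg hjb]
  | mul a b iha ihb =>
      intro t h1 h2 h3 j hj
      simp only [eqs, List.mem_append, List.mem_cons] at h1 h2 h3
      have ha := iha t (fun m hm => h1 m (Or.inl hm))
        (fun q hq => h2 q (Or.inl hq)) (fun q hq => h3 q (Or.inr (Or.inl hq)))
      have hb := ihb (t + a.size) (fun m hm => h1 m (Or.inr hm))
        (fun q hq => h2 q (Or.inr hq)) (fun q hq => h3 q (Or.inr (Or.inr hq)))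
      have hsa := a.size_pos
      have hsb := b.size_pos
      have hsz : (a.mul b).size = a.size + b.size + 1 := rfl
      by_cases hja : j < a.size
      · rw [ha j hja]
        simp only [slotVal, if_pos hja]
      · by_cases hjb : j - a.size < b.size
        · have heq : p+2+t+j = p+2+(t+a.size)+(j-a.size) := by omega
          rw [heq, hb (j - a.size) hjb]
          simp only [slotVal, if_neg hja, if_pos hjb]
        · have hq : Y (p+2+(t+a.size-1)) * Y (p+2+(t+a.size+b.size-1))
              = Y (p+2+(t+a.size+b.size)) := h3 _ (Or.inl rfl)
          have e1 : p+2+(t+a.size-1) = p+2+t+(a.size-1) := by omega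
          have e2 : p+2+(t+a.size+b.size-1) = p+2+(t+a.size)+(b.size-1) := by omega
          have e3 : p+2+(t+a.size+b.size) = p+2+t+j := by
            rw [hsz] at hj; omega
          rw [e1, e2, e3, ha (a.size-1) (by omega), hb (b.size-1) (by omega),
            slotVal_root, slotVal_root] at hq
          rw [← hq]
          simp only [slotVal, if_neg hja, if_neg hjb]

lemma complete (x : Fin p → ℕ) (Y : ℕ → ℕ) (hx : ∀ i : Fin p, Y i.val = x i)
    (ho : Y p = 1) :
    ∀ (e : Exp p) (t : ℕ),
    (∀ j, j < e.size → Y (p+2+t+j) = slotVal x e j) →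
    (∀ m ∈ (eqs e t).1, Y m = 1) ∧
    (∀ q ∈ (eqs e t).2.1, Y q.1 + Y q.2.1 = Y q.2.2) ∧
    (∀ q ∈ (eqs e t).2.2, Y q.1 * Y q.2.1 = Y q.2.2) := by
  intro e
  induction e with
  | zero =>
      intro t hY
      have h0 : Y (p+2+t) = 0 := by
        have := hY 0 (by simp [size])
        simpa [slotVal, Nat.add_zero] using this
      refine ⟨by simp [eqs], ?_, by simp [eqs]⟩
      intro q hq
      simp only [eqs, List.mem_singleton] at hq
      subst hq
      simp [h0]
  | one =>
      intro t hY
      have h0 : Y (p+2+t) = 1 := by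
        have := hY 0 (by simp [size])
        simpa [slotVal, Nat.add_zero] using this
      refine ⟨?_, by simp [eqs], by simp [eqs]⟩
      intro m hm
      simp only [eqs, List.mem_singleton] at hm
      subst hm
      exact h0
  | var i =>
      intro t hY
      have h0 : Y (p+2+t) = x i := by
        have := hY 0 (by simp [size])
        simpa [slotVal, Nat.add_zero] using this
      refine ⟨by simp [eqs], by simp [eqs], ?_⟩
      intro q hq
      simp only [eqs, List.mem_singleton] at hq
      subst hq
      simp only
      rw [hx i, ho, mul_one, h0]
  | add a b iha ihb =>
      intro t hY
      have hsa := a.size_pos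
      have hsb := b.size_pos
      have hsz : (a.add b).size = a.size + b.size + 1 := rfl
      have hYa : ∀ j, j < a.size → Y (p+2+t+j) = slotVal x a j := by
        intro j hj
        rw [hY j (by omega)]
        simp only [slotVal, if_pos hj]
      have hYb : ∀ j, j < b.size → Y (p+2+(t+a.size)+j) = slotVal x b j := by
        intro j hj
        have heq : p+2+(t+a.size)+j = p+2+t+(a.size+j) := by omega
        rw [heq, hY (a.size+j) (by omega)]
        simp only [slotVal, if_neg (by omega : ¬ a.size + j < a.size)]
        rw [if_pos (by omega : a.size + j - a.size < b.size)]
        congr 1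
        omega
      obtain ⟨ia1, ia2, ia3⟩ := iha t hYa
      obtain ⟨ib1, ib2, ib3⟩ := ihb (t + a.size) hYb
      refine ⟨?_, ?_, ?_⟩ <;> simp only [eqs, List.mem_append, List.mem_cons]
      · rintro m (hm | hm)
        · exact ia1 m hm
        · exact ib1 m hm
      · rintro q (rfl | hq | hq)
        · simp only
          have e1 : p+2+(t+a.size-1) = p+2+t+(a.size-1) := by omega
          have e2 : p+2+(t+a.size+b.size-1) = p+2+(t+a.size)+(b.size-1) := by omega
          have e3 : p+2+(t+a.size+b.size) = p+2+t+(a.size+b.size) := by omega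
          rw [e1, e2, e3, hYa (a.size-1) (by omega), hYb (b.size-1) (by omega),
            slotVal_root, slotVal_root, hY (a.size+b.size) (by omega)]
          simp only [slotVal, if_neg (by omega : ¬ a.size + b.size < a.size),
            if_neg (by omega : ¬ a.size + b.size - a.size < b.size)]
        · exact ia2 q hq
        · exact ib2 q hq
      · rintro q (hq | hq)
        · exact ia3 q hq
        · exact ib3 q hq
  | mul a b iha ihb =>
      intro t hY
      have hsa := a.size_pos
      have hsb := b.size_pos
      have hsz : (a.mul b).size = a.size + b.size + 1 := rfl
      have hYa : ∀ j, j < a.size → Y (p+2+t+j) = slotVal x a j := by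
        intro j hj
        rw [hY j (by omega)]
        simp only [slotVal, if_pos hj]
      have hYb : ∀ j, j < b.size → Y (p+2+(t+a.size)+j) = slotVal x b j := by
        intro j hj
        have heq : p+2+(t+a.size)+j = p+2+t+(a.size+j) := by omega
        rw [heq, hY (a.size+j) (by omega)]
        simp only [slotVal, if_neg (by omega : ¬ a.size + j < a.size)]
        rw [if_pos (by omega : a.size + j - a.size < b.size)]
        congr 1
        omega
      obtain ⟨ia1, ia2, ia3⟩ := iha t hYa
      obtain ⟨ib1, ib2, ib3⟩ := ihb (t + a.size) hYb
      refine ⟨?_, ?_, ?_⟩ <;> simp only [eqs, List.mem_append, List.mem_cons]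
      · rintro m (hm | hm)
        · exact ia1 m hm
        · exact ib1 m hm
      · rintro q (hq | hq)
        · exact ia2 q hq
        · exact ib2 q hq
      · rintro q (rfl | hq | hq)
        · simp only
          have e1 : p+2+(t+a.size-1) = p+2+t+(a.size-1) := by omega
          have e2 : p+2+(t+a.size+b.size-1) = p+2+(t+a.size)+(b.size-1) := by omega
          have e3 : p+2+(t+a.size+b.size) = p+2+t+(a.size+b.size) := by omega
          rw [e1, e2, e3, hYa (a.size-1) (by omega), hYb (b.size-1) (by omega),
            slotVal_root, slotVal_root, hY (a.size+b.size) (by omega)]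
          simp only [slotVal, if_neg (by omega : ¬ a.size + b.size < a.size),
            if_neg (by omega : ¬ a.size + b.size - a.size < b.size)]
        · exact ia3 q hq
        · exact ib3 q hq

def ofNat : ℕ → Exp p
  | 0 => zero
  | m + 1 => add (ofNat m) one

lemma evalE_ofNat {R : Type*} [CommSemiring R] (x : Fin p → R) :
    ∀ m : ℕ, evalE x (ofNat m) = (m : R)
  | 0 => by simp [ofNat, evalE]
  | m + 1 => by simp [ofNat, evalE, evalE_ofNat x m]

open MvPolynomial in
lemma exists_repr (D : MvPolynomial (Fin p) ℤ) :
    ∃ e₁ e₂ : Exp p, ∀ f : Fin p → ℤ, evalE f e₁ - evalE f e₂ = eval f D := by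
  induction D using MvPolynomial.induction_on with
  | C a =>
      refine ⟨ofNat a.toNat, ofNat (-a).toNat, fun f => ?_⟩
      rw [evalE_ofNat, evalE_ofNat, eval_C]
      omega
  | add P Q hP hQ =>
      obtain ⟨e₁, e₂, h1⟩ := hP
      obtain ⟨f₁, f₂, h2⟩ := hQ
      refine ⟨e₁.add f₁, e₂.add f₂, fun f => ?_⟩
      rw [eval_add, ← h1 f, ← h2 f]
      simp only [evalE]
      ring
  | mul_X P i hP =>
      obtain ⟨e₁, e₂, h1⟩ := hP
      refine ⟨e₁.mul (var i), e₂.mul (var i), fun f => ?_⟩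
      rw [eval_mul, eval_X, ← h1 f]
      simp only [evalE]
      ring

lemma natCast_evalE (x : Fin p → ℕ) (e : Exp p) :
    ((evalE x e : ℕ) : ℤ) = evalE (fun i => (x i : ℤ)) e := by
  induction e with
  | zero => simp [evalE]
  | one => simp [evalE]
  | var i => simp [evalE]
  | add a b ha hb => simp [evalE, ha, hb]
  | mul a b ha hb => simp [evalE, ha, hb]

/-- canonical solution extending `x`. -/
def canon (x : Fin p → ℕ) (e₁ e₂ : Exp p) (m : ℕ) : ℕ :=
  if h : m < p then x ⟨m, h⟩
  else if m = p then 1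
  else if m = p + 1 then evalE x e₁
  else if m - (p+2) < e₁.size then slotVal x e₁ (m - (p+2))
  else slotVal x e₂ (m - (p+2) - e₁.size)

/-- total number of variables. -/
def nTot (e₁ e₂ : Exp p) : ℕ := p + 2 + (e₁.size + e₂.size)

lemma p_lt_nTot (e₁ e₂ : Exp p) : p < nTot e₁ e₂ := by unfold nTot; omega

def emb (e₁ e₂ : Exp p) (m : ℕ) : Fin (nTot e₁ e₂) :=
  ⟨m % nTot e₁ e₂, Nat.mod_lt _ (by unfold nTot; omega)⟩

lemma emb_val (e₁ e₂ : Exp p) (m : ℕ) (hm : m < nTot e₁ e₂) :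
    (emb e₁ e₂ m : ℕ) = m := Nat.mod_eq_of_lt hm

def emb3 (e₁ e₂ : Exp p) (q : ℕ × ℕ × ℕ) :
    Fin (nTot e₁ e₂) × Fin (nTot e₁ e₂) × Fin (nTot e₁ e₂) :=
  (emb e₁ e₂ q.1, emb e₁ e₂ q.2.1, emb e₁ e₂ q.2.2)

def Olist (e₁ e₂ : Exp p) : List ℕ := (eqs e₁ 0).1 ++ (eqs e₂ e₁.size).1 ++ [p]

def Alist (e₁ e₂ : Exp p) : List (ℕ × ℕ × ℕ) := (eqs e₁ 0).2.1 ++ (eqs e₂ e₁.size).2.1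

def Mlist (e₁ e₂ : Exp p) : List (ℕ × ℕ × ℕ) :=
  (eqs e₁ 0).2.2 ++ (eqs e₂ e₁.size).2.2 ++
    [(p+2+(e₁.size-1), p, p+1), (p+2+(e₁.size+e₂.size-1), p, p+1)]

def system (e₁ e₂ : Exp p) : SystemEn (nTot e₁ e₂) :=
  ⟨((Olist e₁ e₂).map (emb e₁ e₂)).toFinset,
   ((Alist e₁ e₂).map (emb3 e₁ e₂)).toFinset,
   ((Mlist e₁ e₂).map (emb3 e₁ e₂)).toFinset⟩

lemma solves_iff (e₁ e₂ : Exp p) (y : Fin (nTot e₁ e₂) → ℕ) :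
    (system e₁ e₂).Solves y ↔
      (∀ m ∈ Olist e₁ e₂, y (emb e₁ e₂ m) = 1) ∧
      (∀ q ∈ Alist e₁ e₂, y (emb e₁ e₂ q.1) + y (emb e₁ e₂ q.2.1) = y (emb e₁ e₂ q.2.2)) ∧
      (∀ q ∈ Mlist e₁ e₂, y (emb e₁ e₂ q.1) * y (emb e₁ e₂ q.2.1) = y (emb e₁ e₂ q.2.2)) := by
  constructor
  · rintro ⟨h1, h2, h3⟩
    refine ⟨fun m hm => h1 _ (List.mem_toFinset.2 (List.mem_map_of_mem hm)),
      fun q hq => h2 _ (List.mem_toFinset.2 (List.mem_map_of_mem hq)),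
      fun q hq => h3 _ (List.mem_toFinset.2 (List.mem_map_of_mem hq))⟩
  · rintro ⟨h1, h2, h3⟩
    refine ⟨?_, ?_, ?_⟩
    · intro i hi
      obtain ⟨m, hm, rfl⟩ := List.mem_map.1 (List.mem_toFinset.1 hi)
      exact h1 m hm
    · intro q hq
      obtain ⟨m, hm, rfl⟩ := List.mem_map.1 (List.mem_toFinset.1 hq)
      exact h2 m hm
    · intro q hq
      obtain ⟨m, hm, rfl⟩ := List.mem_map.1 (List.mem_toFinset.1 hq)
      exact h3 m hm

lemma system_sound (e₁ e₂ : Exp p) (y : Fin (nTot e₁ e₂) → ℕ)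
    (hy : (system e₁ e₂).Solves y) (j : Fin (nTot e₁ e₂)) :
    y j = canon (fun i => y (Fin.castLE (p_lt_nTot e₁ e₂).le i)) e₁ e₂ j.val := by
  set x : Fin p → ℕ := fun i => y (Fin.castLE (p_lt_nTot e₁ e₂).le i) with hxdef
  set Y : ℕ → ℕ := fun m => y (emb e₁ e₂ m) with hYdef
  have hs1 := e₁.size_pos
  have hs2 := e₂.size_pos
  have hYj : ∀ j : Fin (nTot e₁ e₂), Y j.val = y j := by
    intro j
    show y (emb e₁ e₂ j.val) = y j
    exact congrArg y (Fin.ext (Nat.mod_eq_of_lt j.isLt))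
  have hx : ∀ i : Fin p, Y i.val = x i := fun i =>
    hYj (Fin.castLE (p_lt_nTot e₁ e₂).le i)
  obtain ⟨hO, hA, hM⟩ := (solves_iff e₁ e₂ y).1 hy
  have ho : Y p = 1 := hO p (by simp [Olist])
  have hO1 : ∀ m ∈ (eqs e₁ 0).1, Y m = 1 := fun m hm =>
    hO m (by simp only [Olist, List.mem_append]; tauto)
  have hO2 : ∀ m ∈ (eqs e₂ e₁.size).1, Y m = 1 := fun m hm =>
    hO m (by simp only [Olist, List.mem_append]; tauto)
  have hA1 : ∀ q ∈ (eqs e₁ 0).2.1, Y q.1 + Y q.2.1 = Y q.2.2 := fun q hq =>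
    hA q (by simp only [Alist, List.mem_append]; tauto)
  have hA2 : ∀ q ∈ (eqs e₂ e₁.size).2.1, Y q.1 + Y q.2.1 = Y q.2.2 := fun q hq =>
    hA q (by simp only [Alist, List.mem_append]; tauto)
  have hM1 : ∀ q ∈ (eqs e₁ 0).2.2, Y q.1 * Y q.2.1 = Y q.2.2 := fun q hq =>
    hM q (by simp only [Mlist, List.mem_append]; tauto)
  have hM2 : ∀ q ∈ (eqs e₂ e₁.size).2.2, Y q.1 * Y q.2.1 = Y q.2.2 := fun q hq =>
    hM q (by simp only [Mlist, List.mem_append]; tauto)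
  have s1 := Exp.sound x Y hx ho e₁ 0 hO1 hA1 hM1
  have s2 := Exp.sound x Y hx ho e₂ e₁.size hO2 hA2 hM2
  have mm1 : Y (p+2+(e₁.size-1)) * Y p = Y (p+1) :=
    hM (p+2+(e₁.size-1), p, p+1) (by simp [Mlist])
  have hr1 : Y (p+2+(e₁.size-1)) = evalE x e₁ := by
    have := s1 (e₁.size-1) (by omega)
    have e : p+2+0+(e₁.size-1) = p+2+(e₁.size-1) := by omega
    rw [e, slotVal_root] at this
    exact this
  have hval : Y (p+1) = evalE x e₁ := by rw [← mm1, hr1, ho, mul_one]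
  have hjn : j.val < p + 2 + (e₁.size + e₂.size) := j.isLt
  rw [← hYj j]
  by_cases h1 : j.val < p
  · rw [canon, dif_pos h1]
    exact hx ⟨j.val, h1⟩
  · by_cases h2 : j.val = p
    · rw [canon, dif_neg h1, if_pos h2, h2]
      exact ho
    · by_cases h3 : j.val = p + 1
      · rw [canon, dif_neg h1, if_neg h2, if_pos h3, h3]
        exact hval
      · by_cases h4 : j.val - (p+2) < e₁.size
        · rw [canon, dif_neg h1, if_neg h2, if_neg h3, if_pos h4]
          have e : p+2+0+(j.val - (p+2)) = j.val := by omega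
          have := s1 (j.val - (p+2)) h4
          rw [e] at this
          exact this
        · rw [canon, dif_neg h1, if_neg h2, if_neg h3, if_neg h4]
          have e : p+2+e₁.size+(j.val - (p+2) - e₁.size) = j.val := by omega
          have := s2 (j.val - (p+2) - e₁.size) (by omega)
          rw [e] at this
          exact this

lemma system_complete (e₁ e₂ : Exp p) (x : Fin p → ℕ) (hx : evalE x e₁ = evalE x e₂) :
    (system e₁ e₂).Solves (fun j => canon x e₁ e₂ j.val) := by
  set Y : ℕ → ℕ := canon x e₁ e₂ with hYdef
  have hs1 := e₁.size_pos
  have hs2 := e₂.size_pos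
  have cx : ∀ i : Fin p, Y i.val = x i := by
    intro i
    rw [hYdef, canon, dif_pos i.isLt]
  have cp : Y p = 1 := by rw [hYdef, canon, dif_neg (lt_irrefl p), if_pos rfl]
  have cp1 : Y (p+1) = evalE x e₁ := by
    rw [hYdef, canon, dif_neg (by omega), if_neg (by omega), if_pos rfl]
  have cs1 : ∀ j, j < e₁.size → Y (p+2+0+j) = slotVal x e₁ j := by
    intro j hj
    rw [hYdef, canon, dif_neg (by omega), if_neg (by omega), if_neg (by omega),
      if_pos (by omega)]
    congr 1
    omega
  have cs2 : ∀ j, j < e₂.size → Y (p+2+e₁.size+j) = slotVal x e₂ j := by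
    intro j hj
    rw [hYdef, canon, dif_neg (by omega), if_neg (by omega), if_neg (by omega),
      if_neg (by omega)]
    congr 1
    omega
  obtain ⟨c11, c12, c13⟩ := Exp.complete x Y cx cp e₁ 0 cs1
  obtain ⟨c21, c22, c23⟩ := Exp.complete x Y cx cp e₂ e₁.size cs2
  have hb1 := eqs_bound e₁ 0
  have hb2 := eqs_bound e₂ e₁.size
  have hemb : ∀ m, m < nTot e₁ e₂ → Y ((emb e₁ e₂ m : Fin (nTot e₁ e₂)) : ℕ) = Y m := by
    intro m hm
    rw [emb_val e₁ e₂ m hm]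
  rw [solves_iff]
  refine ⟨?_, ?_, ?_⟩
  · intro m hm
    simp only [Olist, List.mem_append, List.mem_singleton] at hm
    show Y ((emb e₁ e₂ m : Fin (nTot e₁ e₂)) : ℕ) = 1
    rcases hm with (hm | hm) | hm
    · have hbd := hb1.1 m hm
      rw [hemb m (by unfold nTot; omega)]
      exact c11 m hm
    · have hbd := hb2.1 m hm
      rw [hemb m (by unfold nTot; omega)]
      exact c21 m hm
    · rw [hm, hemb p (by unfold nTot; omega)]
      exact cp
  · intro q hq
    simp only [Alist, List.mem_append] at hq
    show Y ((emb e₁ e₂ q.1 : Fin (nTot e₁ e₂)) : ℕ) +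
        Y ((emb e₁ e₂ q.2.1 : Fin (nTot e₁ e₂)) : ℕ) =
        Y ((emb e₁ e₂ q.2.2 : Fin (nTot e₁ e₂)) : ℕ)
    rcases hq with hq | hq
    · obtain ⟨b1, b2, b3⟩ := hb1.2.1 q hq
      rw [hemb q.1 (by unfold nTot; omega), hemb q.2.1 (by unfold nTot; omega),
        hemb q.2.2 (by unfold nTot; omega)]
      exact c12 q hq
    · obtain ⟨b1, b2, b3⟩ := hb2.2.1 q hq
      rw [hemb q.1 (by unfold nTot; omega), hemb q.2.1 (by unfold nTot; omega),
        hemb q.2.2 (by unfold nTot; omega)]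
      exact c22 q hq
  · intro q hq
    simp only [Mlist, List.mem_append, List.mem_cons, List.mem_singleton,
      List.not_mem_nil, or_false] at hq
    show Y ((emb e₁ e₂ q.1 : Fin (nTot e₁ e₂)) : ℕ) *
        Y ((emb e₁ e₂ q.2.1 : Fin (nTot e₁ e₂)) : ℕ) =
        Y ((emb e₁ e₂ q.2.2 : Fin (nTot e₁ e₂)) : ℕ)
    rcases hq with (hq | hq) | hq | hq
    · obtain ⟨b1, b2, b3⟩ := hb1.2.2 q hq
      rw [hemb q.1 (by unfold nTot; omega), hemb q.2.1 (by unfold nTot; omega),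
        hemb q.2.2 (by unfold nTot; omega)]
      exact c13 q hq
    · obtain ⟨b1, b2, b3⟩ := hb2.2.2 q hq
      rw [hemb q.1 (by unfold nTot; omega), hemb q.2.1 (by unfold nTot; omega),
        hemb q.2.2 (by unfold nTot; omega)]
      exact c23 q hq
    · rw [hq]
      show Y ((emb e₁ e₂ (p+2+(e₁.size-1)) : Fin (nTot e₁ e₂)) : ℕ) *
          Y ((emb e₁ e₂ p : Fin (nTot e₁ e₂)) : ℕ) =
          Y ((emb e₁ e₂ (p+1) : Fin (nTot e₁ e₂)) : ℕ)
      rw [hemb _ (by unfold nTot; omega), hemb _ (by unfold nTot; omega),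
        hemb _ (by unfold nTot; omega), cp, cp1, mul_one]
      have e : p+2+(e₁.size-1) = p+2+0+(e₁.size-1) := by omega
      rw [e, cs1 _ (by omega), slotVal_root]
    · rw [hq]
      show Y ((emb e₁ e₂ (p+2+(e₁.size+e₂.size-1)) : Fin (nTot e₁ e₂)) : ℕ) *
          Y ((emb e₁ e₂ p : Fin (nTot e₁ e₂)) : ℕ) =
          Y ((emb e₁ e₂ (p+1) : Fin (nTot e₁ e₂)) : ℕ)
      rw [hemb _ (by unfold nTot; omega), hemb _ (by unfold nTot; omega),
        hemb _ (by unfold nTot; omega), cp, cp1, mul_one]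
      have e : p+2+(e₁.size+e₂.size-1) = p+2+e₁.size+(e₂.size-1) := by omega
      rw [e, cs2 _ (by omega), slotVal_root, hx]

end Exp


/-- for a polynomial `D ∈ ℤ[x₁,…,x_p]` of degree `≥ 1` in each variable,
there are `n > p` and a system `T ⊆ E_n` such that projecting to the first `p`
coordinates is a bijection from the solutions of `T` in non-negative integers onto
the solutions of `D = 0` in non-negative integers. -/
theorem stmt9 (p : ℕ) (hp : 0 < p) (D : MvPolynomial (Fin p) ℤ)
    (hdeg : ∀ i : Fin p, 1 ≤ degreeOf i D) :
    ∃ (n : ℕ) (h : p < n) (T : SystemEn n),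
      Set.BijOn (fun x : Fin n → ℕ => x ∘ Fin.castLE h.le)
        {x : Fin n → ℕ | T.Solves x}
        {x : Fin p → ℕ | eval (fun i => (x i : ℤ)) D = 0} := by
  obtain ⟨e₁, e₂, hrepr⟩ := Exp.exists_repr D
  have key : ∀ x : Fin p → ℕ,
      eval (fun i => (x i : ℤ)) D = 0 ↔ Exp.evalE x e₁ = Exp.evalE x e₂ := by
    intro x
    rw [← hrepr, ← Exp.natCast_evalE, ← Exp.natCast_evalE]
    omega
  have hs1 := e₁.size_pos
  have hs2 := e₂.size_pos
  refine ⟨Exp.nTot e₁ e₂, Exp.p_lt_nTot e₁ e₂, Exp.system e₁ e₂, ?_, ?_, ?_⟩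
  · -- MapsTo
    intro y hy
    have hsnd := Exp.system_sound e₁ e₂ y hy
    obtain ⟨hO, hA, hM⟩ := (Exp.solves_iff e₁ e₂ y).1 hy
    set x : Fin p → ℕ := fun i => y (Fin.castLE (Exp.p_lt_nTot e₁ e₂).le i) with hxdef
    show eval (fun i => ((y ∘ Fin.castLE (Exp.p_lt_nTot e₁ e₂).le) i : ℤ)) D = 0
    rw [key]
    have mm2 : y (Exp.emb e₁ e₂ (p+2+(e₁.size+e₂.size-1))) * y (Exp.emb e₁ e₂ p)
        = y (Exp.emb e₁ e₂ (p+1)) :=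
      hM (p+2+(e₁.size+e₂.size-1), p, p+1) (by simp [Exp.Mlist])
    have hck : ∀ m, m < Exp.nTot e₁ e₂ →
        y (Exp.emb e₁ e₂ m) = Exp.canon x e₁ e₂ m := by
      intro m hm
      have := hsnd (Exp.emb e₁ e₂ m)
      rw [Exp.emb_val e₁ e₂ m hm] at this
      exact this
    rw [hck _ (by unfold Exp.nTot; omega), hck _ (by unfold Exp.nTot; omega),
      hck _ (by unfold Exp.nTot; omega)] at mm2
    have c1 : Exp.canon x e₁ e₂ p = 1 := by
      rw [Exp.canon, dif_neg (lt_irrefl p), if_pos rfl]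
    have c2 : Exp.canon x e₁ e₂ (p+1) = Exp.evalE x e₁ := by
      rw [Exp.canon, dif_neg (by omega), if_neg (by omega), if_pos rfl]
    have c3 : Exp.canon x e₁ e₂ (p+2+(e₁.size+e₂.size-1)) = Exp.evalE x e₂ := by
      rw [Exp.canon, dif_neg (by omega), if_neg (by omega), if_neg (by omega),
        if_neg (by omega)]
      have e : p+2+(e₁.size+e₂.size-1) - (p+2) - e₁.size = e₂.size - 1 := by omega
      rw [e, Exp.slotVal_root]
    rw [c1, c2, c3, mul_one] at mm2
    exact mm2.symm
  · -- InjOn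
    intro y₁ h₁ y₂ h₂ heq
    funext j
    have e12 : (fun i => y₁ (Fin.castLE (Exp.p_lt_nTot e₁ e₂).le i))
        = (fun i => y₂ (Fin.castLE (Exp.p_lt_nTot e₁ e₂).le i)) := heq
    rw [Exp.system_sound e₁ e₂ y₁ h₁ j, Exp.system_sound e₁ e₂ y₂ h₂ j, e12]
  · -- SurjOn
    intro x hx
    refine ⟨fun j => Exp.canon x e₁ e₂ j.val,
      Exp.system_complete e₁ e₂ x ((key x).1 hx), ?_⟩
    funext i
    show Exp.canon x e₁ e₂ ((Fin.castLE (Exp.p_lt_nTot e₁ e₂).le i) : ℕ) = x i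
    rw [Exp.canon]
    simp only [Fin.coe_castLE]
    rw [dif_pos i.isLt]
end

section
/- For every integer n ≥ 2, f(n) ≥ 2^(2^(n−1)). -/
instance systemEnFintype (n : ℕ) : Fintype (SystemEn n) :=
  Fintype.ofEquiv
    (Finset (Fin n) × Finset (Fin n × Fin n × Fin n) × Finset (Fin n × Fin n × Fin n))
    { toFun := fun p => ⟨p.1, p.2.1, p.2.2⟩
      invFun := fun S => ⟨S.eqOne, S.addEq, S.mulEq⟩
      left_inv := fun p => rfl
      right_inv := fun S => rfl }

open Classical in
/-- The defining set of `fBound` is nonempty. -/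
lemma fBound_set_nonempty (n : ℕ) :
    {b : ℕ | ∀ S : SystemEn n, {x : Fin n → ℤ | S.Solves x}.Finite →
      ∀ x : Fin n → ℤ, S.Solves x → ∀ i, |x i| ≤ (b : ℤ)}.Nonempty := by
  set T : Set (Fin n → ℤ) :=
    ⋃ S : SystemEn n,
      if {x : Fin n → ℤ | S.Solves x}.Finite then {x : Fin n → ℤ | S.Solves x} else ∅ with hTdef
  have hT : T.Finite := by
    apply Set.finite_iUnion
    intro S
    split_ifs with h
    · exact h
    · exact Set.finite_empty
  have himg : (T.image (fun x => Finset.univ.sup fun i => (x i).natAbs)).Finite :=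
    hT.image _
  obtain ⟨b, hb⟩ := himg.bddAbove
  refine ⟨b, ?_⟩
  intro S hfin x hx i
  have hxT : x ∈ T := by
    refine Set.mem_iUnion.2 ⟨S, ?_⟩
    rw [if_pos hfin]
    exact hx
  have h1 : (Finset.univ.sup fun i => (x i).natAbs) ≤ b :=
    hb (Set.mem_image_of_mem _ hxT)
  have h2 : (x i).natAbs ≤ b :=
    le_trans (Finset.le_sup (f := fun i => (x i).natAbs) (Finset.mem_univ i)) h1
  calc |x i| = ((x i).natAbs : ℤ) := (Int.abs_eq_natAbs _)
    _ ≤ (b : ℤ) := by exact_mod_cast h2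

/-- for every integer `n ≥ 2`, `f(n) ≥ 2^(2^(n-1))`. -/
theorem stmt11 (n : ℕ) (hn : 2 ≤ n) : 2 ^ 2 ^ (n - 1) ≤ fBound n := by
  have h0 : (0 : ℕ) < n := by omega
  have h1 : (1 : ℕ) < n := by omega
  refine le_csInf (fBound_set_nonempty n) ?_
  intro b hb
  -- the witness system
  set S : SystemEn n :=
    { eqOne := ∅
      addEq := {((⟨0, h0⟩ : Fin n), (⟨0, h0⟩ : Fin n), (⟨1, h1⟩ : Fin n))}
      mulEq := Finset.univ.image (fun k : Fin (n - 1) =>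
        ((⟨k.1, by omega⟩ : Fin n), (⟨k.1, by omega⟩ : Fin n),
         (⟨k.1 + 1, by omega⟩ : Fin n))) } with hS
  set x : Fin n → ℤ := fun i => 2 ^ 2 ^ (i : ℕ) with hx
  -- key recurrences for solutions of S
  have hmulmem : ∀ (k : ℕ) (hk : k < n - 1),
      ((⟨k, by omega⟩ : Fin n), (⟨k, by omega⟩ : Fin n), (⟨k + 1, by omega⟩ : Fin n))
        ∈ S.mulEq := by
    intro k hk
    simp only [hS, Finset.mem_image]
    exact ⟨⟨k, hk⟩, Finset.mem_univ _, rfl⟩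
  -- x solves S
  have hxsol : S.Solves x := by
    refine ⟨by simp [hS], ?_, ?_⟩
    · intro t ht
      simp only [hS, Finset.mem_singleton] at ht
      subst ht
      simp [hx]
    · intro t ht
      simp only [hS, Finset.mem_image] at ht
      obtain ⟨k, -, rfl⟩ := ht
      simp only [hx]
      rw [← pow_add]
      congr 1
      rw [pow_succ]
      ring
  -- classify solutions
  have hclass : ∀ y : Fin n → ℤ, S.Solves y → y = (fun _ => 0) ∨ y = x := by
    intro y hy
    obtain ⟨-, hadd, hmul⟩ := hy
    have hy1 : y ⟨0, h0⟩ + y ⟨0, h0⟩ = y ⟨1, h1⟩ := by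
      have := hadd _ (Finset.mem_singleton_self _)
      exact this
    have hy1' : y ⟨0, h0⟩ * y ⟨0, h0⟩ = y ⟨1, h1⟩ := by
      have := hmul _ (hmulmem 0 (by omega))
      exact this
    have hstep : ∀ (k : ℕ) (hk : k < n - 1),
        y ⟨k, by omega⟩ * y ⟨k, by omega⟩ = y ⟨k + 1, by omega⟩ := by
      intro k hk
      exact hmul _ (hmulmem k hk)
    have h02 : y ⟨0, h0⟩ = 0 ∨ y ⟨0, h0⟩ = 2 := by
      have : y ⟨0, h0⟩ * (y ⟨0, h0⟩ - 2) = 0 := by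
        have := hy1'.trans hy1.symm
        ring_nf
        ring_nf at this
        linarith
      rcases mul_eq_zero.1 this with h | h
      · exact Or.inl h
      · exact Or.inr (by linarith)
    rcases h02 with h | h
    · left
      funext i
      have : ∀ (k : ℕ) (hk : k < n), y ⟨k, hk⟩ = 0 := by
        intro k
        induction k with
        | zero => intro hk; exact h
        | succ m ih =>
          intro hk
          have hm : m < n - 1 := by omega
          have := hstep m hm
          rw [ih (by omega)] at this
          simpa using this.symm
      have := this i.1 i.2
      simpa using this
    · right
      funext i
      have : ∀ (k : ℕ) (hk : k < n), y ⟨k, hk⟩ = 2 ^ 2 ^ k := by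
        intro k
        induction k with
        | zero => intro hk; simpa using h
        | succ m ih =>
          intro hk
          have hm : m < n - 1 := by omega
          have := hstep m hm
          rw [ih (by omega)] at this
          rw [← this, ← pow_add]
          congr 1
          rw [pow_succ]
          ring
      have := this i.1 i.2
      simpa [hx] using this
  have hfin : {y : Fin n → ℤ | S.Solves y}.Finite := by
    apply Set.Finite.subset ((Set.finite_singleton x).insert (fun _ => (0:ℤ)))
    intro y hy
    rcases hclass y hy with h | h
    · exact Set.mem_insert_iff.2 (Or.inl h)
    · exact Set.mem_insert_iff.2 (Or.inr h)
  have hlast := hb S hfin x hxsol ⟨n - 1, by omega⟩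
  have : |x ⟨n - 1, by omega⟩| = ((2 : ℤ) ^ 2 ^ (n - 1)) := by
    simp [hx, abs_of_nonneg (by positivity : (0:ℤ) ≤ 2 ^ 2 ^ (n-1))]
  rw [this] at hlast
  exact_mod_cast hlast
end
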